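/- arXiv:1511.05945 — 6 statements merged into one kernel-verified Lean document; each statement's English description precedes it below -/
import Mathlib

section
/- Let (ξ_n)_{n ∈ ℕ} be a bounded sequence in an inner product space H, and let (I_j) be a Følner sequence of finite subsets of ℕ^d. Then limsup over j of the squared norm of the average (1/|I_j|) Σ_{n ∈ I_j} ξ_n is at most 4 times limsup_{H→∞} (1/H^d) Σ_{h ∈ [H]^d} limsup_j |(1/|I_j|) Σ_{n ∈ I_j} ⟨ξ_{n+h}, ξ_n⟩|. -/
open Filter MeasureTheory Finset Topology

set_option linter.unusedSectionVars false

noncomputable section VDCproof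

namespace VDCaux

variable {d : ℕ} {E : Type*} [NormedAddCommGroup E] [InnerProductSpace ℂ E]

/-- the all-ones vector -/
def vone (d : ℕ) : Fin d → ℕ := fun _ => 1

/-- shift operator -/
def shift (k : Fin d → ℕ) (v : (Fin d → ℕ) → E) : (Fin d → ℕ) → E := fun n => v (n + k)

lemma shift_comp (a b : Fin d → ℕ) (v : (Fin d → ℕ) → E) :
    shift a (shift b v) = shift (a + b) v := by
  funext n; simp only [shift]; rw [add_assoc]

/-- the box `[0,H-1]^d` -/
def box (d H : ℕ) : Finset (Fin d → ℕ) := Fintype.piFinset fun _ => Finset.range H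

lemma card_box (d H : ℕ) : (box d H).card = H ^ d := by
  simp [box]

lemma zero_mem_box {d H : ℕ} (hH : 1 ≤ H) : (0 : Fin d → ℕ) ∈ box d H := by
  simp only [box, Fintype.mem_piFinset]
  intro i; simp only [Pi.zero_apply, Finset.mem_range]; omega

/-- box averaging operator -/
def Bop (H : ℕ) (v : (Fin d → ℕ) → E) : (Fin d → ℕ) → E :=
  fun n => ((H : ℝ) ^ d)⁻¹ • ∑ t ∈ box d H, v (n + t)

lemma Bop_add (H : ℕ) (v w : (Fin d → ℕ) → E) :
    Bop H (v + w) = Bop H v + Bop H w := by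
  funext n
  simp only [Bop, Pi.add_apply, Finset.sum_add_distrib, smul_add]

lemma Bop_shift (H : ℕ) (a : Fin d → ℕ) (v : (Fin d → ℕ) → E) :
    Bop H (shift a v) = shift a (Bop H v) := by
  funext n
  simp only [Bop, shift]
  congr 1
  refine Finset.sum_congr rfl fun t _ => ?_
  congr 1
  rw [add_right_comm]

lemma cast_pow_box (H : ℕ) : ((H ^ d : ℕ) : ℝ) = (H:ℝ)^d := by push_cast; rfl

lemma Bop_comm (H K : ℕ) (v : (Fin d → ℕ) → E) :
    Bop H (Bop K v) = Bop K (Bop H v) := by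
  funext n
  show ((H : ℝ) ^ d)⁻¹ • ∑ t ∈ box d H, ((K : ℝ) ^ d)⁻¹ • ∑ r ∈ box d K, v (n + t + r)
      = ((K : ℝ) ^ d)⁻¹ • ∑ r ∈ box d K, ((H : ℝ) ^ d)⁻¹ • ∑ t ∈ box d H, v (n + r + t)
  rw [← Finset.smul_sum, ← Finset.smul_sum, smul_comm, Finset.sum_comm]
  congr 2
  refine Finset.sum_congr rfl fun r _ => ?_
  refine Finset.sum_congr rfl fun t _ => ?_
  rw [add_right_comm]

lemma norm_Bop_le (H : ℕ) (hH : 1 ≤ H) {v : (Fin d → ℕ) → E} {B : ℝ}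
    (hv : ∀ n, ‖v n‖ ≤ B) (n : Fin d → ℕ) : ‖Bop H v n‖ ≤ B := by
  have hB : (0:ℝ) ≤ B := le_trans (norm_nonneg _) (hv n)
  have hHd : (0:ℝ) < (H:ℝ) ^ d := by positivity
  calc ‖Bop H v n‖ ≤ ((H:ℝ)^d)⁻¹ * ‖∑ t ∈ box d H, v (n + t)‖ := by
        rw [Bop, norm_smul, Real.norm_eq_abs, abs_of_nonneg (by positivity)]
    _ ≤ ((H:ℝ)^d)⁻¹ * ((H^d : ℕ) * B) := by
        refine mul_le_mul_of_nonneg_left ?_ (by positivity)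
        refine le_trans (norm_sum_le _ _) ?_
        calc ∑ t ∈ box d H, ‖v (n + t)‖ ≤ ∑ t ∈ box d H, B :=
              Finset.sum_le_sum fun t _ => hv _
          _ = (H^d : ℕ) * B := by rw [Finset.sum_const, card_box, nsmul_eq_mul]
    _ = B := by rw [cast_pow_box]; field_simp

/-- averaging within `c` of a fixed vector -/
lemma Bop_close (H : ℕ) (hH : 1 ≤ H) {v : (Fin d → ℕ) → E} {n : Fin d → ℕ} {e : E} {c : ℝ}
    (hc : ∀ t ∈ box d H, ‖v (n + t) - e‖ ≤ c) : ‖Bop H v n - e‖ ≤ c := by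
  have hHd : (0:ℝ) < (H:ℝ) ^ d := by positivity
  have he : Bop H v n - e = ((H:ℝ)^d)⁻¹ • ∑ t ∈ box d H, (v (n + t) - e) := by
    rw [Finset.sum_sub_distrib, smul_sub, Bop]
    congr 1
    rw [Finset.sum_const, card_box, ← Nat.cast_smul_eq_nsmul ℝ, cast_pow_box, smul_smul,
      inv_mul_cancel₀ (ne_of_gt hHd), one_smul]
  rw [he, norm_smul, Real.norm_eq_abs, abs_of_nonneg (by positivity)]
  have hc0 : (0:ℝ) ≤ c := le_trans (norm_nonneg _) (hc 0 (zero_mem_box hH))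
  calc ((H:ℝ)^d)⁻¹ * ‖∑ t ∈ box d H, (v (n + t) - e)‖
      ≤ ((H:ℝ)^d)⁻¹ * ((H^d : ℕ) * c) := by
        refine mul_le_mul_of_nonneg_left ?_ (by positivity)
        refine le_trans (norm_sum_le _ _) ?_
        calc ∑ t ∈ box d H, ‖v (n + t) - e‖ ≤ ∑ t ∈ box d H, c :=
              Finset.sum_le_sum hc
          _ = (H^d:ℕ) * c := by rw [Finset.sum_const, card_box, nsmul_eq_mul]
    _ = c := by push_cast; field_simp

lemma card_box_filter_le (H : ℕ) (i : Fin d) (s : Finset ℕ) :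
    ((box d H).filter (fun t => t i ∈ s)).card ≤ s.card * H ^ (d - 1) := by
  classical
  have hsub : (box d H).filter (fun t => t i ∈ s) ⊆
      Fintype.piFinset (fun l => if l = i then Finset.range H ∩ s else Finset.range H) := by
    intro t ht
    rw [Finset.mem_filter] at ht
    have htb := ht.1
    rw [box, Fintype.mem_piFinset] at htb
    rw [Fintype.mem_piFinset]
    intro l
    by_cases hl : l = i
    · subst hl
      rw [if_pos rfl, Finset.mem_inter]
      exact ⟨htb l, ht.2⟩
    · rw [if_neg hl]
      exact htb l
  refine le_trans (Finset.card_le_card hsub) ?_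
  rw [Fintype.card_piFinset]
  rw [← Finset.prod_erase_mul Finset.univ _ (Finset.mem_univ i), if_pos rfl]
  have h1 : ∏ l ∈ Finset.univ.erase i,
      (if l = i then Finset.range H ∩ s else Finset.range H).card = H ^ (d - 1) := by
    have heq : ∀ l ∈ Finset.univ.erase i,
        (if l = i then Finset.range H ∩ s else Finset.range H).card = H := by
      intro l hl
      rw [if_neg (Finset.ne_of_mem_erase hl), Finset.card_range]
    rw [Finset.prod_congr rfl heq, Finset.prod_const, Finset.card_erase_of_mem (Finset.mem_univ i),
      Finset.card_univ, Fintype.card_fin]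
  rw [h1, mul_comm]
  exact Nat.mul_le_mul (Finset.card_le_card Finset.inter_subset_right) le_rfl

lemma mem_box_iff {H : ℕ} (u : Fin d → ℕ) : u ∈ box d H ↔ ∀ l, u l < H := by
  rw [box, Fintype.mem_piFinset]; simp only [Finset.mem_range]

lemma Bop_shift_bound (hd : 0 < d) {H : ℕ} (hH : 1 ≤ H) {v : (Fin d → ℕ) → E} {B : ℝ}
    (hv : ∀ n, ‖v n‖ ≤ B) (a n : Fin d → ℕ) :
    ‖Bop H v (n + a) - Bop H v n‖ ≤ 2 * B * (∑ i, (a i : ℝ)) / H := by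
  classical
  have hB : (0:ℝ) ≤ B := le_trans (norm_nonneg _) (hv n)
  have hH0 : (0:ℝ) < (H:ℝ) := by exact_mod_cast hH
  set A := (box d H).image (· + a) with hA
  have hinj : Function.Injective (· + a : (Fin d → ℕ) → (Fin d → ℕ)) := add_left_injective a
  have h1 : Bop H v (n + a) = ((H:ℝ)^d)⁻¹ • ∑ u ∈ A, v (n + u) := by
    rw [Bop, hA, Finset.sum_image (fun x _ y _ h => hinj h)]
    congr 1
    refine Finset.sum_congr rfl fun t _ => ?_
    congr 1
    rw [add_assoc, add_comm a t, ← add_assoc]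
  have hsubB : box d H \ A ⊆ Finset.univ.biUnion
      (fun i : Fin d => (box d H).filter (fun t => t i ∈ Finset.range (a i))) := by
    intro u hu
    rw [Finset.mem_sdiff] at hu
    have hub := hu.1
    by_contra hcon
    simp only [Finset.mem_biUnion, Finset.mem_univ, true_and, Finset.mem_filter,
      Finset.mem_range, not_exists, not_and, not_lt] at hcon
    apply hu.2
    rw [hA, Finset.mem_image]
    refine ⟨fun l => u l - a l, ?_, ?_⟩
    · rw [mem_box_iff] at hub ⊢
      intro l; exact lt_of_le_of_lt (Nat.sub_le _ _) (hub l)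
    · funext l
      have hal : a l ≤ u l := hcon l hub
      show u l - a l + a l = u l
      omega
  have hsubA : A \ box d H ⊆ (Finset.univ.biUnion
      (fun i : Fin d => (box d H).filter
        (fun t => t i ∈ Finset.Ico (H - a i) H))).image (· + a) := by
    intro u hu
    rw [Finset.mem_sdiff, hA, Finset.mem_image] at hu
    obtain ⟨⟨t, htb, rfl⟩, hnb⟩ := hu
    rw [Finset.mem_image]
    refine ⟨t, ?_, rfl⟩
    rw [Finset.mem_biUnion]
    rw [mem_box_iff] at hnb
    push_neg at hnb
    obtain ⟨i, hi⟩ := hnb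
    refine ⟨i, Finset.mem_univ i, ?_⟩
    rw [Finset.mem_filter, Finset.mem_Ico]
    have hti : t i < H := (mem_box_iff t).mp htb i
    have hia : H ≤ t i + a i := by simpa [Pi.add_apply] using hi
    exact ⟨htb, by omega, hti⟩
  have hcardB : (box d H \ A).card ≤ (∑ i, a i) * H ^ (d-1) := by
    refine le_trans (Finset.card_le_card hsubB) ?_
    refine le_trans Finset.card_biUnion_le ?_
    calc ∑ i, ((box d H).filter (fun t => t i ∈ Finset.range (a i))).card
        ≤ ∑ i, a i * H ^ (d-1) := Finset.sum_le_sum fun i _ => by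
          simpa [Finset.card_range] using card_box_filter_le H i (Finset.range (a i))
      _ = (∑ i, a i) * H ^ (d-1) := (Finset.sum_mul _ _ _).symm
  have hcardA : (A \ box d H).card ≤ (∑ i, a i) * H ^ (d-1) := by
    refine le_trans (Finset.card_le_card hsubA) ?_
    refine le_trans Finset.card_image_le ?_
    refine le_trans Finset.card_biUnion_le ?_
    calc ∑ i, ((box d H).filter (fun t => t i ∈ Finset.Ico (H - a i) H)).card
        ≤ ∑ i, a i * H ^ (d-1) := Finset.sum_le_sum fun i _ => by
          refine le_trans (card_box_filter_le H i (Finset.Ico (H - a i) H)) ?_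
          refine Nat.mul_le_mul ?_ le_rfl
          rw [Nat.card_Ico]; omega
      _ = (∑ i, a i) * H ^ (d-1) := (Finset.sum_mul _ _ _).symm
  rw [h1, Bop, ← smul_sub, ← Finset.sum_sdiff_sub_sum_sdiff]
  rw [norm_smul, Real.norm_eq_abs, abs_of_nonneg (by positivity)]
  have hn1 : ‖∑ u ∈ A \ box d H, v (n + u) - ∑ u ∈ box d H \ A, v (n + u)‖
      ≤ (((A \ box d H).card : ℝ) + ((box d H \ A).card : ℝ)) * B := by
    refine le_trans (norm_sub_le _ _) ?_
    rw [add_mul]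
    refine add_le_add ?_ ?_ <;>
    · refine le_trans (norm_sum_le _ _) ?_
      refine le_trans (Finset.sum_le_sum fun u _ => hv (n + u)) ?_
      rw [Finset.sum_const, nsmul_eq_mul]
  calc ((H:ℝ)^d)⁻¹ * ‖∑ u ∈ A \ box d H, v (n + u) - ∑ u ∈ box d H \ A, v (n + u)‖
      ≤ ((H:ℝ)^d)⁻¹ * ((((A \ box d H).card : ℝ) + ((box d H \ A).card : ℝ)) * B) :=
        mul_le_mul_of_nonneg_left hn1 (by positivity)
    _ ≤ ((H:ℝ)^d)⁻¹ * ((((∑ i, a i) * H ^ (d-1) : ℕ) + ((∑ i, a i) * H ^ (d-1) : ℕ) : ℝ) * B) := by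
        refine mul_le_mul_of_nonneg_left (mul_le_mul_of_nonneg_right (add_le_add ?_ ?_) hB)
          (by positivity)
        · exact_mod_cast hcardA
        · exact_mod_cast hcardB
    _ = 2 * B * (∑ i, (a i : ℝ)) / H := by
        have hd1 : d - 1 + 1 = d := Nat.succ_pred_eq_of_pos hd
        have h2 : (H:ℝ)^d = (H:ℝ)^(d-1) * H := by rw [← pow_succ, hd1]
        push_cast
        rw [h2]
        field_simp
        ring

/-! ### Per-index averages -/

lemma inner_real_smul_left (c : ℝ) (x y : E) :
    (inner ℂ (c • x) y : ℂ) = c • (inner ℂ x y : ℂ) := by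
  rw [← algebraMap_smul ℂ c x, Complex.coe_algebraMap, inner_smul_left, Complex.conj_ofReal,
    Complex.real_smul]

lemma inner_real_smul_right (c : ℝ) (x y : E) :
    (inner ℂ x (c • y) : ℂ) = c • (inner ℂ x y : ℂ) := by
  rw [← algebraMap_smul ℂ c y, Complex.coe_algebraMap, inner_smul_right, Complex.real_smul]

variable (I : ℕ → Finset (Fin d → ℕ))

/-- Følner average of a vector-valued function -/
def avgW {W : Type*} [NormedAddCommGroup W] [NormedSpace ℝ W] (j : ℕ)
    (f : (Fin d → ℕ) → W) : W :=
  ((I j).card : ℝ)⁻¹ • ∑ n ∈ I j, f n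

def aphi (j : ℕ) (v w : (Fin d → ℕ) → E) : ℂ :=
  ((I j).card : ℝ)⁻¹ • ∑ n ∈ I j, (inner ℂ (v n) (w n) : ℂ)

def apsi (j : ℕ) (v : (Fin d → ℕ) → E) : ℝ :=
  ((I j).card : ℝ)⁻¹ * ∑ n ∈ I j, ‖v n‖ ^ 2

def fol (k : Fin d → ℕ) (j : ℕ) : ℝ :=
  (((symmDiff ((I j).image (· + k)) (I j)).card : ℝ)) / ((I j).card : ℝ)

lemma fol_nonneg (k : Fin d → ℕ) (j : ℕ) : 0 ≤ fol I k j := by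
  unfold fol; positivity

lemma norm_avgW_le {W : Type*} [NormedAddCommGroup W] [NormedSpace ℝ W] (j : ℕ)
    {f : (Fin d → ℕ) → W} {B : ℝ} (hB : 0 ≤ B) (hf : ∀ n, ‖f n‖ ≤ B) :
    ‖avgW I j f‖ ≤ B := by
  rcases (I j).eq_empty_or_nonempty with h | h
  · rw [avgW, h]; simpa using hB
  have hc : (0:ℝ) < (I j).card := by exact_mod_cast Finset.card_pos.mpr h
  rw [avgW, norm_smul, Real.norm_eq_abs, abs_of_nonneg (by positivity)]
  calc ((I j).card : ℝ)⁻¹ * ‖∑ n ∈ I j, f n‖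
      ≤ ((I j).card : ℝ)⁻¹ * (((I j).card : ℝ) * B) := by
        refine mul_le_mul_of_nonneg_left ?_ (by positivity)
        refine le_trans (norm_sum_le _ _) ?_
        refine le_trans (Finset.sum_le_sum fun n _ => hf n) ?_
        rw [Finset.sum_const, nsmul_eq_mul]
    _ = B := by field_simp
  
lemma norm_aphi_le (j : ℕ) {v w : (Fin d → ℕ) → E} {Bv Bw : ℝ}
    (hv : ∀ n, ‖v n‖ ≤ Bv) (hw : ∀ n, ‖w n‖ ≤ Bw) :
    ‖aphi I j v w‖ ≤ Bv * Bw := by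
  have hBv : (0:ℝ) ≤ Bv := le_trans (norm_nonneg _) (hv 0)
  have hBw : (0:ℝ) ≤ Bw := le_trans (norm_nonneg _) (hw 0)
  refine norm_avgW_le I j (by positivity) fun n => ?_
  exact le_trans (norm_inner_le_norm _ _)
    (mul_le_mul (hv n) (hw n) (norm_nonneg _) hBv)

lemma apsi_nonneg (j : ℕ) (v : (Fin d → ℕ) → E) : 0 ≤ apsi I j v := by
  unfold apsi; positivity

lemma apsi_le (j : ℕ) {v : (Fin d → ℕ) → E} {B : ℝ} (hv : ∀ n, ‖v n‖ ≤ B) :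
    apsi I j v ≤ B ^ 2 := by
  have hB : (0:ℝ) ≤ B := le_trans (norm_nonneg _) (hv 0)
  rcases (I j).eq_empty_or_nonempty with h | h
  · rw [apsi, h]; simpa using by positivity
  have hc : (0:ℝ) < (I j).card := by exact_mod_cast Finset.card_pos.mpr h
  rw [apsi]
  calc ((I j).card : ℝ)⁻¹ * ∑ n ∈ I j, ‖v n‖ ^ 2
      ≤ ((I j).card : ℝ)⁻¹ * (((I j).card : ℝ) * B ^ 2) := by
        refine mul_le_mul_of_nonneg_left ?_ (by positivity)
        refine le_trans (Finset.sum_le_sum fun n _ =>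
          pow_le_pow_left₀ (norm_nonneg _) (hv n) 2) ?_
        rw [Finset.sum_const, nsmul_eq_mul]
    _ = B ^ 2 := by field_simp

/-- Cauchy–Schwarz for the Følner averages -/
lemma norm_aphi_le_sqrt (j : ℕ) (v w : (Fin d → ℕ) → E) :
    ‖aphi I j v w‖ ≤ Real.sqrt (apsi I j v) * Real.sqrt (apsi I j w) := by
  set m := ((I j).card : ℝ) with hm
  have hm0 : 0 ≤ m := Nat.cast_nonneg _
  have h1 : ‖∑ n ∈ I j, (inner ℂ (v n) (w n) : ℂ)‖ ≤ ∑ n ∈ I j, ‖v n‖ * ‖w n‖ :=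
    le_trans (norm_sum_le _ _) (Finset.sum_le_sum fun n _ => norm_inner_le_norm _ _)
  have h2 : (∑ n ∈ I j, ‖v n‖ * ‖w n‖)^2 ≤ (∑ n ∈ I j, ‖v n‖^2) * (∑ n ∈ I j, ‖w n‖^2) :=
    Finset.sum_mul_sq_le_sq_mul_sq _ _ _
  have h3 : ∑ n ∈ I j, ‖v n‖ * ‖w n‖
      ≤ Real.sqrt ((∑ n ∈ I j, ‖v n‖^2) * (∑ n ∈ I j, ‖w n‖^2)) := by
    rw [← Real.sqrt_sq (by positivity : (0:ℝ) ≤ ∑ n ∈ I j, ‖v n‖ * ‖w n‖)]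
    exact Real.sqrt_le_sqrt h2
  have h4 : Real.sqrt (m⁻¹ * ∑ n ∈ I j, ‖v n‖^2) * Real.sqrt (m⁻¹ * ∑ n ∈ I j, ‖w n‖^2)
      = m⁻¹ * Real.sqrt ((∑ n ∈ I j, ‖v n‖^2) * (∑ n ∈ I j, ‖w n‖^2)) := by
    rw [Real.sqrt_mul (by positivity), Real.sqrt_mul (by positivity),
      Real.sqrt_mul (by positivity)]
    have hms : Real.sqrt m⁻¹ * Real.sqrt m⁻¹ = m⁻¹ := Real.mul_self_sqrt (by positivity)
    conv_rhs => rw [← hms]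
    ring
  show ‖m⁻¹ • ∑ n ∈ I j, (inner ℂ (v n) (w n) : ℂ)‖
      ≤ Real.sqrt (m⁻¹ * ∑ n ∈ I j, ‖v n‖^2) * Real.sqrt (m⁻¹ * ∑ n ∈ I j, ‖w n‖^2)
  rw [h4, norm_smul, Real.norm_eq_abs, abs_of_nonneg (by positivity)]
  exact mul_le_mul_of_nonneg_left (le_trans h1 h3) (by positivity)

lemma aphi_sub_left (j : ℕ) (v v' w : (Fin d → ℕ) → E) :
    aphi I j (fun n => v n - v' n) w = aphi I j v w - aphi I j v' w := by
  unfold aphi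
  rw [← smul_sub, ← Finset.sum_sub_distrib]
  congr 1
  exact Finset.sum_congr rfl fun n _ => inner_sub_left _ _ _

lemma apsi_add_expand (j : ℕ) (v w : (Fin d → ℕ) → E) :
    apsi I j (fun n => v n + w n) = apsi I j v + apsi I j w + 2 * (aphi I j v w).re := by
  have h2 : (aphi I j v w).re
      = ((I j).card : ℝ)⁻¹ * ∑ n ∈ I j, ((inner ℂ (v n) (w n) : ℂ)).re := by
    rw [aphi, Complex.smul_re, smul_eq_mul, Complex.re_sum]
  have hpt : ∀ n ∈ I j, ‖v n + w n‖^2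
      = ‖v n‖^2 + 2*((inner ℂ (v n) (w n) : ℂ)).re + ‖w n‖^2 := by
    intro n _
    have h := norm_add_sq (𝕜 := ℂ) (v n) (w n)
    simpa using h
  have hs : ∑ n ∈ I j, 2*((inner ℂ (v n) (w n):ℂ)).re
      = 2 * ∑ n ∈ I j, ((inner ℂ (v n) (w n):ℂ)).re := by
    rw [Finset.mul_sum]
  show ((I j).card : ℝ)⁻¹ * ∑ n ∈ I j, ‖v n + w n‖^2 = _
  rw [Finset.sum_congr rfl hpt, Finset.sum_add_distrib, Finset.sum_add_distrib, hs, h2]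
  show _ = ((I j).card : ℝ)⁻¹ * _ + ((I j).card : ℝ)⁻¹ * _ + _
  ring

lemma apsi_smul (j : ℕ) (c : ℝ) (v : (Fin d → ℕ) → E) :
    apsi I j (fun n => c • v n) = c^2 * apsi I j v := by
  unfold apsi
  have hpt : ∀ n ∈ I j, ‖c • v n‖^2 = c^2 * ‖v n‖^2 := fun n _ => by
    rw [norm_smul, mul_pow, Real.norm_eq_abs, sq_abs]
  rw [Finset.sum_congr rfl hpt, ← Finset.mul_sum]
  ring

lemma aphi_Bop_left (j : ℕ) (K : ℕ) (v w : (Fin d → ℕ) → E) :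
    aphi I j (Bop K v) w = ((K:ℝ)^d)⁻¹ • ∑ k ∈ box d K, aphi I j (shift k v) w := by
  calc aphi I j (Bop K v) w
      = ((I j).card:ℝ)⁻¹ • ∑ n ∈ I j,
          ((K:ℝ)^d)⁻¹ • ∑ k ∈ box d K, (inner ℂ (v (n+k)) (w n) : ℂ) := by
        unfold aphi
        congr 1
        refine Finset.sum_congr rfl fun n _ => ?_
        show (inner ℂ (((K:ℝ)^d)⁻¹ • ∑ t ∈ box d K, v (n + t)) (w n) : ℂ) = _
        rw [inner_real_smul_left, sum_inner]
    _ = ((K:ℝ)^d)⁻¹ • ∑ k ∈ box d K,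
          (((I j).card:ℝ)⁻¹ • ∑ n ∈ I j, (inner ℂ (v (n+k)) (w n):ℂ)) := by
        rw [← Finset.smul_sum, smul_comm, Finset.sum_comm, Finset.smul_sum]
    _ = ((K:ℝ)^d)⁻¹ • ∑ k ∈ box d K, aphi I j (shift k v) w := rfl

lemma aphi_Bop_right (j : ℕ) (K : ℕ) (v w : (Fin d → ℕ) → E) :
    aphi I j v (Bop K w) = ((K:ℝ)^d)⁻¹ • ∑ k ∈ box d K, aphi I j v (shift k w) := by
  calc aphi I j v (Bop K w)
      = ((I j).card:ℝ)⁻¹ • ∑ n ∈ I j,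
          ((K:ℝ)^d)⁻¹ • ∑ k ∈ box d K, (inner ℂ (v n) (w (n+k)) : ℂ) := by
        unfold aphi
        congr 1
        refine Finset.sum_congr rfl fun n _ => ?_
        show (inner ℂ (v n) (((K:ℝ)^d)⁻¹ • ∑ t ∈ box d K, w (n + t)) : ℂ) = _
        rw [inner_real_smul_right, inner_sum]
    _ = ((K:ℝ)^d)⁻¹ • ∑ k ∈ box d K,
          (((I j).card:ℝ)⁻¹ • ∑ n ∈ I j, (inner ℂ (v n) (w (n+k)):ℂ)) := by
        rw [← Finset.smul_sum, smul_comm, Finset.sum_comm, Finset.smul_sum]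
    _ = ((K:ℝ)^d)⁻¹ • ∑ k ∈ box d K, aphi I j v (shift k w) := rfl

lemma avg_norm_sq_le {α : Type*} {W : Type*} [NormedAddCommGroup W] [NormedSpace ℝ W]
    (s : Finset α) (f : α → W) :
    ‖(s.card : ℝ)⁻¹ • ∑ x ∈ s, f x‖ ^ 2 ≤ (s.card : ℝ)⁻¹ * ∑ x ∈ s, ‖f x‖ ^ 2 := by
  rcases s.eq_empty_or_nonempty with h | h
  · subst h; simp
  have hc : (0:ℝ) < s.card := by exact_mod_cast Finset.card_pos.mpr h
  have h1 : ‖∑ x ∈ s, f x‖ ^ 2 ≤ (s.card : ℝ) * ∑ x ∈ s, ‖f x‖ ^ 2 := by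
    have h2 : ‖∑ x ∈ s, f x‖ ≤ ∑ x ∈ s, ‖f x‖ := norm_sum_le _ _
    have h3 : (∑ x ∈ s, ‖f x‖)^2 ≤ (s.card : ℝ) * ∑ x ∈ s, ‖f x‖ ^ 2 := by
      have h4 := Finset.sum_mul_sq_le_sq_mul_sq s (fun _ => (1:ℝ)) (fun x => ‖f x‖)
      simpa [Finset.sum_const, nsmul_eq_mul] using h4
    refine le_trans (pow_le_pow_left₀ (norm_nonneg _) h2 2) h3
  rw [norm_smul, Real.norm_eq_abs, abs_of_nonneg (by positivity), mul_pow]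
  calc ((s.card:ℝ)⁻¹)^2 * ‖∑ x ∈ s, f x‖^2
      ≤ ((s.card:ℝ)⁻¹)^2 * ((s.card:ℝ) * ∑ x ∈ s, ‖f x‖ ^ 2) :=
        mul_le_mul_of_nonneg_left h1 (by positivity)
    _ = (s.card:ℝ)⁻¹ * ∑ x ∈ s, ‖f x‖ ^ 2 := by
        field_simp

lemma apsi_Bop_le_avg (j : ℕ) (K : ℕ) (v : (Fin d → ℕ) → E) :
    apsi I j (Bop K v) ≤ ((K:ℝ)^d)⁻¹ * ∑ k ∈ box d K, apsi I j (shift k v) := by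
  have hpt : ∀ n ∈ I j, ‖Bop K v n‖^2 ≤ ((K:ℝ)^d)⁻¹ * ∑ k ∈ box d K, ‖v (n+k)‖^2 := by
    intro n _
    have h := avg_norm_sq_le (box d K) (fun k => v (n + k))
    rw [card_box, cast_pow_box] at h
    exact h
  calc apsi I j (Bop K v)
      ≤ ((I j).card:ℝ)⁻¹ * ∑ n ∈ I j, (((K:ℝ)^d)⁻¹ * ∑ k ∈ box d K, ‖v (n+k)‖^2) :=
        mul_le_mul_of_nonneg_left (Finset.sum_le_sum hpt) (by positivity)
    _ = ((K:ℝ)^d)⁻¹ * ∑ k ∈ box d K, (((I j).card:ℝ)⁻¹ * ∑ n ∈ I j, ‖v (n+k)‖^2) := by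
        rw [← Finset.mul_sum, ← Finset.mul_sum, Finset.sum_comm]
        ring
    _ = ((K:ℝ)^d)⁻¹ * ∑ k ∈ box d K, apsi I j (shift k v) := rfl

lemma avg_shift_bound {W : Type*} [NormedAddCommGroup W] [NormedSpace ℝ W] (j : ℕ)
    {f : (Fin d → ℕ) → W} {B : ℝ} (hf : ∀ n, ‖f n‖ ≤ B) (k : Fin d → ℕ) :
    ‖(((I j).card : ℝ)⁻¹ • ∑ n ∈ I j, f (n + k)) - ((I j).card : ℝ)⁻¹ • ∑ n ∈ I j, f n‖
      ≤ B * fol I k j := by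
  classical
  have hB : (0:ℝ) ≤ B := le_trans (norm_nonneg _) (hf 0)
  have hinj : Function.Injective (· + k : (Fin d → ℕ) → (Fin d → ℕ)) := add_left_injective k
  set s := I j with hs
  set A := s.image (· + k) with hA
  have h1 : ∑ n ∈ s, f (n + k) = ∑ m ∈ A, f m := by
    rw [hA, Finset.sum_image (fun x _ y _ h => hinj h)]
  rw [h1, ← smul_sub, ← Finset.sum_sdiff_sub_sum_sdiff]
  rw [norm_smul, Real.norm_eq_abs, abs_of_nonneg (by positivity)]
  have hcard : ((A \ s).card : ℝ) + ((s \ A).card : ℝ) = ((symmDiff A s).card : ℝ) := by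
    rw [symmDiff_def, Finset.sup_eq_union, Finset.card_union_of_disjoint
      (Finset.disjoint_left.mpr fun x hx1 hx2 =>
        (Finset.mem_sdiff.mp hx1).2 (Finset.mem_sdiff.mp hx2).1)]
    push_cast; ring
  have hbound : ‖∑ m ∈ A \ s, f m - ∑ m ∈ s \ A, f m‖
      ≤ (((A \ s).card : ℝ) + ((s \ A).card : ℝ)) * B := by
    refine le_trans (norm_sub_le _ _) ?_
    rw [add_mul]
    refine add_le_add ?_ ?_ <;>
    · refine le_trans (norm_sum_le _ _) ?_
      refine le_trans (Finset.sum_le_sum fun u _ => hf u) ?_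
      rw [Finset.sum_const, nsmul_eq_mul]
  calc ((s.card:ℝ))⁻¹ * ‖∑ m ∈ A \ s, f m - ∑ m ∈ s \ A, f m‖
      ≤ ((s.card:ℝ))⁻¹ * ((((A \ s).card : ℝ) + ((s \ A).card : ℝ)) * B) :=
        mul_le_mul_of_nonneg_left hbound (by positivity)
    _ = B * fol I k j := by
        rw [hcard]
        unfold fol
        rw [div_eq_mul_inv]
        rw [← hs, ← hA]
        ring

lemma tendsto_fol (hF : ∀ k : Fin d → ℤ, Tendsto (fun j =>
      ((symmDiff ((I j).image fun n => fun i => (n i : ℤ) + k i)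
          ((I j).image fun n => fun i => (n i : ℤ))).card : ℝ) / (I j).card) atTop (nhds 0))
    (k : Fin d → ℕ) : Tendsto (fol I k) atTop (𝓝 0) := by
  have hinj : Function.Injective (fun n : Fin d → ℕ => fun i => (n i : ℤ)) := by
    intro x y h
    funext i
    have h2 := congrFun h i
    simp only at h2
    exact_mod_cast h2
  refine (hF (fun i => (k i : ℤ))).congr fun j => ?_
  have h1 : ((I j).image fun n => fun i => ((n i : ℤ) + (k i : ℤ)))
      = (((I j).image (· + k)).image fun n => fun i => (n i : ℤ)) := by
    rw [Finset.image_image]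
    refine Finset.image_congr fun n _ => ?_
    funext i
    simp [Function.comp, Pi.add_apply]
  have h2 : (symmDiff ((I j).image fun n => fun i => (n i : ℤ) + k i)
        ((I j).image fun n => fun i => (n i : ℤ))).card
      = (symmDiff ((I j).image (· + k)) (I j)).card := by
    rw [h1, ← Finset.image_symmDiff _ _ hinj, Finset.card_image_of_injective _ hinj]
  unfold fol
  rw [h2]

lemma sum_box_shift_one {β : Type*} [AddCommMonoid β] (H : ℕ) (f : (Fin d → ℕ) → β) :
    ∑ t ∈ box d H, f (t + vone d)
      = ∑ h ∈ Fintype.piFinset (fun _ : Fin d => Finset.Icc 1 H), f h := by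
  refine Finset.sum_nbij' (fun t => t + vone d) (fun h => fun i => h i - 1) ?_ ?_ ?_ ?_ ?_
  · intro t ht
    rw [Fintype.mem_piFinset]
    rw [mem_box_iff] at ht
    intro i
    rw [Finset.mem_Icc]
    have := ht i
    simp only [Pi.add_apply, vone]
    omega
  · intro h hh
    rw [Fintype.mem_piFinset] at hh
    rw [mem_box_iff]
    intro i
    have := hh i
    rw [Finset.mem_Icc] at this
    show h i - 1 < H
    omega
  · intro t ht
    rw [mem_box_iff] at ht
    funext i
    show (t + vone d) i - 1 = t i
    simp only [Pi.add_apply, vone]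
    omega
  · intro h hh
    rw [Fintype.mem_piFinset] at hh
    funext i
    have := hh i
    rw [Finset.mem_Icc] at this
    show (fun l => h l - 1) i + vone d i = h i
    simp only [vone]
    omega
  · intro t _
    rfl

/-! ### Ultrafilter limits -/

lemma apsi_eq_re (j : ℕ) (v : (Fin d → ℕ) → E) : apsi I j v = (aphi I j v v).re := by
  rw [aphi, Complex.smul_re, smul_eq_mul, Complex.re_sum, apsi]
  congr 1
  refine Finset.sum_congr rfl fun n _ => ?_
  exact (inner_self_eq_norm_sq (𝕜 := ℂ) (v n)).symm

variable (U : Ultrafilter ℕ)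

def phi (v w : (Fin d → ℕ) → E) : ℂ := limUnder (U : Filter ℕ) (fun j => aphi I j v w)

def psi (v : (Fin d → ℕ) → E) : ℝ := (phi I U v v).re

lemma tendsto_aphi {v w : (Fin d → ℕ) → E} {Bv Bw : ℝ}
    (hv : ∀ n, ‖v n‖ ≤ Bv) (hw : ∀ n, ‖w n‖ ≤ Bw) :
    Tendsto (fun j => aphi I j v w) (U : Filter ℕ) (𝓝 (phi I U v w)) := by
  apply tendsto_nhds_limUnder
  have hle : (Ultrafilter.map (fun j => aphi I j v w) U : Filter ℂ)
      ≤ 𝓟 (Metric.closedBall (0:ℂ) (Bv * Bw)) := by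
    rw [Ultrafilter.coe_map, le_principal_iff, Filter.mem_map]
    refine Filter.univ_mem' fun j => ?_
    rw [Set.mem_preimage, Metric.mem_closedBall, dist_zero_right]
    exact norm_aphi_le I j hv hw
  obtain ⟨a, -, ha⟩ := (isCompact_closedBall (0:ℂ) (Bv * Bw)).ultrafilter_le_nhds _ hle
  exact ⟨a, by rwa [Ultrafilter.coe_map] at ha⟩

lemma tendsto_apsi {v : (Fin d → ℕ) → E} {B : ℝ} (hv : ∀ n, ‖v n‖ ≤ B) :
    Tendsto (fun j => apsi I j v) (U : Filter ℕ) (𝓝 (psi I U v)) := by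
  have h := (Complex.continuous_re.tendsto _).comp (tendsto_aphi I U hv hv)
  exact h.congr fun j => (apsi_eq_re I j v).symm

lemma psi_nonneg {v : (Fin d → ℕ) → E} {B : ℝ} (hv : ∀ n, ‖v n‖ ≤ B) :
    0 ≤ psi I U v :=
  le_of_tendsto_of_tendsto' tendsto_const_nhds (tendsto_apsi I U hv)
    (fun j => apsi_nonneg I j v)

lemma psi_le {v : (Fin d → ℕ) → E} {B : ℝ} (hv : ∀ n, ‖v n‖ ≤ B) :
    psi I U v ≤ B ^ 2 :=
  le_of_tendsto_of_tendsto' (tendsto_apsi I U hv) tendsto_const_nhds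
    (fun j => apsi_le I j hv)

lemma sqrt_psi_le {v : (Fin d → ℕ) → E} {B : ℝ} (hv : ∀ n, ‖v n‖ ≤ B) :
    Real.sqrt (psi I U v) ≤ B := by
  have hB : (0:ℝ) ≤ B := le_trans (norm_nonneg _) (hv 0)
  refine le_trans (Real.sqrt_le_sqrt (psi_le I U hv)) ?_
  rw [Real.sqrt_sq hB]

lemma norm_phi_le_sqrt {v w : (Fin d → ℕ) → E} {Bv Bw : ℝ}
    (hv : ∀ n, ‖v n‖ ≤ Bv) (hw : ∀ n, ‖w n‖ ≤ Bw) :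
    ‖phi I U v w‖ ≤ Real.sqrt (psi I U v) * Real.sqrt (psi I U w) :=
  le_of_tendsto_of_tendsto' ((continuous_norm.tendsto _).comp (tendsto_aphi I U hv hw))
    (((Real.continuous_sqrt.tendsto _).comp (tendsto_apsi I U hv)).mul
      ((Real.continuous_sqrt.tendsto _).comp (tendsto_apsi I U hw)))
    (fun j => norm_aphi_le_sqrt I j v w)

lemma phi_shift (hF : ∀ k : Fin d → ℤ, Tendsto (fun j =>
      ((symmDiff ((I j).image fun n => fun i => (n i : ℤ) + k i)
          ((I j).image fun n => fun i => (n i : ℤ))).card : ℝ) / (I j).card) atTop (𝓝 0))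
    (hU : (U : Filter ℕ) ≤ atTop) (k : Fin d → ℕ) {v w : (Fin d → ℕ) → E} {Bv Bw : ℝ}
    (hv : ∀ n, ‖v n‖ ≤ Bv) (hw : ∀ n, ‖w n‖ ≤ Bw) :
    phi I U (shift k v) (shift k w) = phi I U v w := by
  have hBv : (0:ℝ) ≤ Bv := le_trans (norm_nonneg _) (hv 0)
  have t1 := tendsto_aphi I U (v := shift k v) (w := shift k w) (Bv := Bv) (Bw := Bw)
    (fun n => hv _) (fun n => hw _)
  have t2 := tendsto_aphi I U hv hw
  have hb : ∀ n, ‖(inner ℂ (v n) (w n) : ℂ)‖ ≤ Bv * Bw := fun n =>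
    le_trans (norm_inner_le_norm _ _)
      (mul_le_mul (hv n) (hw n) (norm_nonneg _) hBv)
  have hg : Tendsto (fun j => Bv * Bw * fol I k j) (U : Filter ℕ) (𝓝 0) := by
    have := (tendsto_fol I hF k).const_mul (Bv * Bw)
    rw [mul_zero] at this
    exact this.mono_left hU
  have t3 : Tendsto (fun j => aphi I j (shift k v) (shift k w) - aphi I j v w)
      (U : Filter ℕ) (𝓝 0) :=
    squeeze_zero_norm (fun j => avg_shift_bound I j hb k) hg
  have h := tendsto_nhds_unique (t1.sub t2) t3
  exact sub_eq_zero.mp h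

lemma psi_shift (hF : ∀ k : Fin d → ℤ, Tendsto (fun j =>
      ((symmDiff ((I j).image fun n => fun i => (n i : ℤ) + k i)
          ((I j).image fun n => fun i => (n i : ℤ))).card : ℝ) / (I j).card) atTop (𝓝 0))
    (hU : (U : Filter ℕ) ≤ atTop) (k : Fin d → ℕ) {v : (Fin d → ℕ) → E} {B : ℝ}
    (hv : ∀ n, ‖v n‖ ≤ B) : psi I U (shift k v) = psi I U v := by
  unfold psi
  rw [phi_shift I U hF hU k hv hv]

lemma psi_add_expand (j0 : Unit) {v w : (Fin d → ℕ) → E} {Bv Bw : ℝ}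
    (hv : ∀ n, ‖v n‖ ≤ Bv) (hw : ∀ n, ‖w n‖ ≤ Bw) :
    psi I U (fun n => v n + w n) = psi I U v + psi I U w + 2 * (phi I U v w).re := by
  have t1 := tendsto_apsi I U (v := fun n => v n + w n) (B := Bv + Bw)
    (fun n => le_trans (norm_add_le _ _) (add_le_add (hv n) (hw n)))
  have t2 : Tendsto (fun j => apsi I j v + apsi I j w + 2 * (aphi I j v w).re)
      (U : Filter ℕ)
      (𝓝 (psi I U v + psi I U w + 2 * (phi I U v w).re)) :=
    ((tendsto_apsi I U hv).add (tendsto_apsi I U hw)).add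
      (((Complex.continuous_re.tendsto _).comp (tendsto_aphi I U hv hw)).const_mul 2)
  exact tendsto_nhds_unique t1 (t2.congr fun j => (apsi_add_expand I j v w).symm)

lemma psi_smul_two {v : (Fin d → ℕ) → E} {B : ℝ} (hv : ∀ n, ‖v n‖ ≤ B) :
    psi I U (fun n => (2:ℝ) • v n) = 4 * psi I U v := by
  have t1 := tendsto_apsi I U (v := fun n => (2:ℝ) • v n) (B := 2 * B)
    (fun n => by
      rw [norm_smul, Real.norm_eq_abs]
      calc |(2:ℝ)| * ‖v n‖ = 2 * ‖v n‖ := by norm_num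
        _ ≤ 2 * B := by have := hv n; linarith)
  have t2 : Tendsto (fun j => (2:ℝ)^2 * apsi I j v) (U : Filter ℕ)
      (𝓝 ((2:ℝ)^2 * psi I U v)) := (tendsto_apsi I U hv).const_mul _
  have h := tendsto_nhds_unique t1 (t2.congr fun j => (apsi_smul I j 2 v).symm)
  rw [h]; norm_num

lemma phi_sub_left (j0 : Unit) {v v' w : (Fin d → ℕ) → E} {Bv Bv' Bw : ℝ}
    (hv : ∀ n, ‖v n‖ ≤ Bv) (hv' : ∀ n, ‖v' n‖ ≤ Bv') (hw : ∀ n, ‖w n‖ ≤ Bw) :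
    phi I U (fun n => v n - v' n) w = phi I U v w - phi I U v' w := by
  have t1 := tendsto_aphi I U (v := fun n => v n - v' n) (w := w) (Bv := Bv + Bv') (Bw := Bw)
    (fun n => le_trans (norm_sub_le _ _) (add_le_add (hv n) (hv' n))) hw
  have t2 := (tendsto_aphi I U hv hw).sub (tendsto_aphi I U hv' hw)
  exact tendsto_nhds_unique t1 (t2.congr fun j => (aphi_sub_left I j v v' w).symm)

lemma phi_Bop_left (K : ℕ) (hK : 1 ≤ K) {v w : (Fin d → ℕ) → E} {Bv Bw : ℝ}
    (hv : ∀ n, ‖v n‖ ≤ Bv) (hw : ∀ n, ‖w n‖ ≤ Bw) :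
    phi I U (Bop K v) w = ((K:ℝ)^d)⁻¹ • ∑ k ∈ box d K, phi I U (shift k v) w := by
  have t1 := tendsto_aphi I U (v := Bop K v) (Bv := Bv) (Bw := Bw)
    (norm_Bop_le K hK hv) hw
  have t2 : Tendsto (fun j => ((K:ℝ)^d)⁻¹ • ∑ k ∈ box d K, aphi I j (shift k v) w)
      (U : Filter ℕ) (𝓝 (((K:ℝ)^d)⁻¹ • ∑ k ∈ box d K, phi I U (shift k v) w)) :=
    (tendsto_finset_sum _ (fun k _ => tendsto_aphi I U (v := shift k v) (Bv := Bv) (Bw := Bw)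
      (fun n => hv _) hw)).const_smul _
  exact tendsto_nhds_unique t1 (t2.congr fun j => (aphi_Bop_left I j K v w).symm)

lemma phi_Bop_right (K : ℕ) (hK : 1 ≤ K) {v w : (Fin d → ℕ) → E} {Bv Bw : ℝ}
    (hv : ∀ n, ‖v n‖ ≤ Bv) (hw : ∀ n, ‖w n‖ ≤ Bw) :
    phi I U v (Bop K w) = ((K:ℝ)^d)⁻¹ • ∑ k ∈ box d K, phi I U v (shift k w) := by
  have t1 := tendsto_aphi I U (w := Bop K w) (Bv := Bv) (Bw := Bw)
    hv (norm_Bop_le K hK hw)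
  have t2 : Tendsto (fun j => ((K:ℝ)^d)⁻¹ • ∑ k ∈ box d K, aphi I j v (shift k w))
      (U : Filter ℕ) (𝓝 (((K:ℝ)^d)⁻¹ • ∑ k ∈ box d K, phi I U v (shift k w))) :=
    (tendsto_finset_sum _ (fun k _ => tendsto_aphi I U (w := shift k w) (Bv := Bv) (Bw := Bw)
      hv (fun n => hw _))).const_smul _
  exact tendsto_nhds_unique t1 (t2.congr fun j => (aphi_Bop_right I j K v w).symm)

lemma psi_Bop_le (hF : ∀ k : Fin d → ℤ, Tendsto (fun j =>
      ((symmDiff ((I j).image fun n => fun i => (n i : ℤ) + k i)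
          ((I j).image fun n => fun i => (n i : ℤ))).card : ℝ) / (I j).card) atTop (𝓝 0))
    (hU : (U : Filter ℕ) ≤ atTop) (K : ℕ) (hK : 1 ≤ K) {v : (Fin d → ℕ) → E} {B : ℝ}
    (hv : ∀ n, ‖v n‖ ≤ B) : psi I U (Bop K v) ≤ psi I U v := by
  have t1 := tendsto_apsi I U (norm_Bop_le K hK hv)
  have t2 : Tendsto (fun j => ((K:ℝ)^d)⁻¹ * ∑ k ∈ box d K, apsi I j (shift k v))
      (U : Filter ℕ) (𝓝 (((K:ℝ)^d)⁻¹ * ∑ k ∈ box d K, psi I U (shift k v))) :=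
    (tendsto_finset_sum _ (fun k _ => tendsto_apsi I U (v := shift k v) (B := B)
      (fun n => hv _))).const_mul _
  have h1 : psi I U (Bop K v) ≤ ((K:ℝ)^d)⁻¹ * ∑ k ∈ box d K, psi I U (shift k v) :=
    le_of_tendsto_of_tendsto' t1 t2 (fun j => apsi_Bop_le_avg I j K v)
  have h2 : ∀ k ∈ box d K, psi I U (shift k v) = psi I U v := fun k _ =>
    psi_shift I U hF hU k hv
  rw [Finset.sum_congr rfl h2, Finset.sum_const, card_box, nsmul_eq_mul, cast_pow_box] at h1
  have hK0 : (0:ℝ) < (K:ℝ)^d := by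
    have : (0:ℝ) < (K:ℝ) := by exact_mod_cast hK
    positivity
  calc psi I U (Bop K v) ≤ ((K:ℝ)^d)⁻¹ * ((K:ℝ)^d * psi I U v) := h1
    _ = psi I U v := by field_simp

lemma psi_le_of_close {v w : (Fin d → ℕ) → E} {Bw c : ℝ}
    (hw : ∀ n, ‖w n‖ ≤ Bw) (hc : ∀ n, ‖v n - w n‖ ≤ c) :
    psi I U v ≤ (Real.sqrt (psi I U w) + c)^2 := by
  have hc0 : (0:ℝ) ≤ c := le_trans (norm_nonneg _) (hc 0)
  have h1 : psi I U v = psi I U w + psi I U (fun n => v n - w n)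
      + 2 * (phi I U w (fun n => v n - w n)).re := by
    have h := psi_add_expand I U () (v := w) (w := fun n => v n - w n)
      (Bv := Bw) (Bw := c) hw hc
    rw [← h]
    congr 1
    funext n
    show v n = w n + (v n - w n)
    abel
  have h3 : ‖phi I U w (fun n => v n - w n)‖
      ≤ Real.sqrt (psi I U w) * Real.sqrt (psi I U (fun n => v n - w n)) :=
    norm_phi_le_sqrt I U hw hc
  have h4 : Real.sqrt (psi I U (fun n => v n - w n)) ≤ c := sqrt_psi_le I U hc
  have h2 : (phi I U w (fun n => v n - w n)).re ≤ Real.sqrt (psi I U w) * c := by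
    refine le_trans (Complex.re_le_norm _) ?_
    refine le_trans h3 ?_
    exact mul_le_mul_of_nonneg_left h4 (Real.sqrt_nonneg _)
  have h5 : psi I U (fun n => v n - w n) ≤ c^2 := psi_le I U hc
  have h6 : 0 ≤ psi I U w := psi_nonneg I U hw
  have h7 : Real.sqrt (psi I U w)^2 = psi I U w := Real.sq_sqrt h6
  nlinarith [Real.sqrt_nonneg (psi I U w)]

/-! ### bridge to limsup, nu, gam -/

lemma Bop_add' (H : ℕ) (v w : (Fin d → ℕ) → E) (n : Fin d → ℕ) :
    Bop H (fun m => v m + w m) n = Bop H v n + Bop H w n := by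
  simp only [Bop, Finset.sum_add_distrib, smul_add]

lemma avg_sub_const (K : ℕ) (hK : 1 ≤ K) (f : (Fin d → ℕ) → ℂ) (c : ℂ) :
    (((K:ℝ)^d)⁻¹ • ∑ k ∈ box d K, f k) - c = ((K:ℝ)^d)⁻¹ • ∑ k ∈ box d K, (f k - c) := by
  have hKd : (0:ℝ) < (K:ℝ)^d := by
    have : (0:ℝ) < K := by exact_mod_cast hK
    positivity
  rw [Finset.sum_sub_distrib, smul_sub]
  congr 1
  rw [Finset.sum_const, card_box, ← Nat.cast_smul_eq_nsmul ℝ, cast_pow_box, smul_smul,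
    inv_mul_cancel₀ (ne_of_gt hKd), one_smul]

lemma norm_avg_le_of (hd : 0 < d) (K : ℕ) (f : (Fin d → ℕ) → ℂ) {c : ℝ} (hc : 0 ≤ c)
    (hf : ∀ k ∈ box d K, ‖f k‖ ≤ c) : ‖((K:ℝ)^d)⁻¹ • ∑ k ∈ box d K, f k‖ ≤ c := by
  rcases Nat.eq_zero_or_pos K with h | h
  · subst h
    have hbox : box d 0 = ∅ := by
      rw [Finset.eq_empty_iff_forall_notMem]
      intro t ht
      rw [mem_box_iff] at ht
      exact Nat.not_lt_zero _ (ht ⟨0, hd⟩)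
    rw [hbox]
    simpa using hc
  have hKd : (0:ℝ) < (K:ℝ)^d := by
    have : (0:ℝ) < K := by exact_mod_cast h
    positivity
  rw [norm_smul, Real.norm_eq_abs, abs_of_nonneg (by positivity)]
  calc ((K:ℝ)^d)⁻¹ * ‖∑ k ∈ box d K, f k‖
      ≤ ((K:ℝ)^d)⁻¹ * ((K^d : ℕ) * c) := by
        refine mul_le_mul_of_nonneg_left ?_ (by positivity)
        refine le_trans (norm_sum_le _ _) ?_
        refine le_trans (Finset.sum_le_sum hf) ?_
        rw [Finset.sum_const, card_box, nsmul_eq_mul]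
    _ = c := by rw [cast_pow_box]; field_simp

lemma ulim_le_limsup {f : ℕ → ℝ} {a : ℝ} (hU : (U : Filter ℕ) ≤ atTop)
    (hf : Tendsto f (U : Filter ℕ) (𝓝 a)) (hbdd : IsBoundedUnder (· ≤ ·) atTop f) :
    a ≤ limsup f atTop := by
  by_contra hlt
  push_neg at hlt
  set b := (limsup f atTop + a) / 2 with hb
  have hb1 : limsup f atTop < b := by rw [hb]; linarith
  have hb2 : b < a := by rw [hb]; linarith
  have hev : ∀ᶠ j in atTop, f j < b := eventually_lt_of_limsup_lt hb1 hbdd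
  have h1 : a ≤ b := le_of_tendsto hf ((hev.mono fun j hj => le_of_lt hj).filter_mono hU)
  linarith

def gam (ξ : (Fin d → ℕ) → E) (h : Fin d → ℕ) : ℝ :=
  limsup (fun j => ‖aphi I j (shift h ξ) ξ‖) atTop

lemma gam_nonneg (ξ : (Fin d → ℕ) → E) {C : ℝ} (hbd : ∀ n, ‖ξ n‖ ≤ C) (h : Fin d → ℕ) :
    0 ≤ gam I ξ h :=
  le_limsup_of_frequently_le (Frequently.of_forall fun j => norm_nonneg _)
    (isBoundedUnder_of ⟨C*C, fun j => norm_aphi_le I j (fun n => hbd _) hbd⟩)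

lemma gam_le (ξ : (Fin d → ℕ) → E) {C : ℝ} (hbd : ∀ n, ‖ξ n‖ ≤ C) (h : Fin d → ℕ) :
    gam I ξ h ≤ C * C :=
  limsup_le_of_le
    ((isBoundedUnder_of (r := (· ≥ ·)) (f := atTop)
      (u := fun j => ‖aphi I j (shift h ξ) ξ‖)
      ⟨0, fun j => norm_nonneg _⟩).isCoboundedUnder_le)
    (Eventually.of_forall fun j => norm_aphi_le I j (fun n => hbd _) hbd)

def nu (U : Ultrafilter ℕ) (ξ : (Fin d → ℕ) → E) : ℝ := ⨅ M : ℕ, psi I U (Bop (M+1) ξ)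

lemma nu_nonneg {ξ : (Fin d → ℕ) → E} {C : ℝ} (hbd : ∀ n, ‖ξ n‖ ≤ C) :
    0 ≤ nu I U ξ :=
  le_ciInf fun M => psi_nonneg I U (norm_Bop_le _ (by omega) hbd)

lemma nu_le {ξ : (Fin d → ℕ) → E} {C : ℝ} (hbd : ∀ n, ‖ξ n‖ ≤ C) (M : ℕ) (hM : 1 ≤ M) :
    nu I U ξ ≤ psi I U (Bop M ξ) := by
  have hb : BddBelow (Set.range fun M : ℕ => psi I U (Bop (M+1) ξ)) := by
    refine ⟨0, ?_⟩
    rintro x ⟨M, rfl⟩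
    exact psi_nonneg I U (norm_Bop_le _ (by omega) hbd)
  have h1 := ciInf_le hb (M - 1)
  have h2 : M - 1 + 1 = M := Nat.sub_add_cancel hM
  rwa [h2] at h1

lemma L_le_psi_Bop (hF : ∀ k : Fin d → ℤ, Tendsto (fun j =>
      ((symmDiff ((I j).image fun n => fun i => (n i : ℤ) + k i)
          ((I j).image fun n => fun i => (n i : ℤ))).card : ℝ) / (I j).card) atTop (𝓝 0))
    (hU : (U : Filter ℕ) ≤ atTop)
    {ξ : (Fin d → ℕ) → E} {C : ℝ} (hbd : ∀ n, ‖ξ n‖ ≤ C) (H : ℕ) (hH : 1 ≤ H) {a : ℝ}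
    (hev : ∀ᶠ j in (U : Filter ℕ), a < ‖((I j).card : ℝ)⁻¹ • ∑ n ∈ I j, ξ n‖ ^ 2) :
    a ≤ psi I U (Bop H ξ) := by
  have hC : (0:ℝ) ≤ C := le_trans (norm_nonneg _) (hbd 0)
  have hHd : (0:ℝ) < (H:ℝ)^d := by
    have : (0:ℝ) < H := by exact_mod_cast hH
    positivity
  set err : ℕ → ℝ := fun j => ((H:ℝ)^d)⁻¹ * ∑ t ∈ box d H, (C * fol I t j) with herr
  have hperj : ∀ j, ‖((I j).card : ℝ)⁻¹ • ∑ n ∈ I j, ξ n‖ ^ 2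
      ≤ (Real.sqrt (apsi I j (Bop H ξ)) + err j)^2 := by
    intro j
    have h1 : ((I j).card : ℝ)⁻¹ • ∑ n ∈ I j, Bop H ξ n
        = ((H:ℝ)^d)⁻¹ • ∑ t ∈ box d H, (((I j).card : ℝ)⁻¹ • ∑ n ∈ I j, ξ (n + t)) := by
      show ((I j).card : ℝ)⁻¹ • ∑ n ∈ I j, ((H:ℝ)^d)⁻¹ • ∑ t ∈ box d H, ξ (n + t) = _
      rw [← Finset.smul_sum, smul_comm, Finset.sum_comm, Finset.smul_sum]
    have h2 : ‖(((I j).card : ℝ)⁻¹ • ∑ n ∈ I j, Bop H ξ n)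
        - ((I j).card : ℝ)⁻¹ • ∑ n ∈ I j, ξ n‖ ≤ err j := by
      have h3 : (((I j).card : ℝ)⁻¹ • ∑ n ∈ I j, Bop H ξ n)
          - ((I j).card : ℝ)⁻¹ • ∑ n ∈ I j, ξ n
          = ((H:ℝ)^d)⁻¹ • ∑ t ∈ box d H,
            ((((I j).card : ℝ)⁻¹ • ∑ n ∈ I j, ξ (n + t))
              - ((I j).card : ℝ)⁻¹ • ∑ n ∈ I j, ξ n) := by
        rw [h1, Finset.sum_sub_distrib, smul_sub]
        congr 1
        rw [Finset.sum_const, card_box, ← Nat.cast_smul_eq_nsmul ℝ, cast_pow_box, smul_smul,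
          inv_mul_cancel₀ (ne_of_gt hHd), one_smul]
      rw [h3, herr]
      rw [norm_smul, Real.norm_eq_abs, abs_of_nonneg (by positivity)]
      refine mul_le_mul_of_nonneg_left ?_ (by positivity)
      refine le_trans (norm_sum_le _ _) (Finset.sum_le_sum fun t _ => ?_)
      exact avg_shift_bound I j hbd t
    have h4 : ‖((I j).card : ℝ)⁻¹ • ∑ n ∈ I j, Bop H ξ n‖
        ≤ Real.sqrt (apsi I j (Bop H ξ)) := by
      have h5 := avg_norm_sq_le (I j) (Bop H ξ)
      have h6 := Real.sqrt_le_sqrt h5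
      rwa [Real.sqrt_sq (norm_nonneg _)] at h6
    have h6 : ‖((I j).card : ℝ)⁻¹ • ∑ n ∈ I j, ξ n‖
        ≤ Real.sqrt (apsi I j (Bop H ξ)) + err j := by
      have h7 : ((I j).card : ℝ)⁻¹ • ∑ n ∈ I j, ξ n
          = (((I j).card : ℝ)⁻¹ • ∑ n ∈ I j, Bop H ξ n)
            - ((((I j).card : ℝ)⁻¹ • ∑ n ∈ I j, Bop H ξ n)
              - ((I j).card : ℝ)⁻¹ • ∑ n ∈ I j, ξ n) := by abel
      rw [h7]
      exact le_trans (norm_sub_le _ _) (add_le_add h4 h2)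
    exact pow_le_pow_left₀ (norm_nonneg _) h6 2
  have herr0 : Tendsto err (U : Filter ℕ) (𝓝 0) := by
    have h7 : Tendsto (fun j => ∑ t ∈ box d H, (C * fol I t j)) atTop (𝓝 0) := by
      have h8 := tendsto_finset_sum (box d H)
        (fun t (_ : t ∈ box d H) => (tendsto_fol I hF t).const_mul C)
      simpa using h8
    have h9 := h7.const_mul ((H:ℝ)^d)⁻¹
    rw [mul_zero] at h9
    exact (h9.congr fun j => by rw [herr]).mono_left hU
  have htend : Tendsto (fun j => (Real.sqrt (apsi I j (Bop H ξ)) + err j)^2) (U : Filter ℕ)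
      (𝓝 ((Real.sqrt (psi I U (Bop H ξ)) + 0)^2)) := by
    refine Tendsto.pow (Tendsto.add ?_ herr0) 2
    exact (Real.continuous_sqrt.tendsto _).comp (tendsto_apsi I U (norm_Bop_le H hH hbd))
  have hfin := ge_of_tendsto htend
    ((hev.and (Eventually.of_forall hperj)).mono fun j hj => le_of_lt (lt_of_lt_of_le hj.1 (hj.2)))
  rwa [add_zero, Real.sq_sqrt (psi_nonneg I U (norm_Bop_le H hH hbd))] at hfin

set_option maxHeartbeats 2000000 in
lemma key_lower (hd : 0 < d)
    (hF : ∀ k : Fin d → ℤ, Tendsto (fun j =>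
      ((symmDiff ((I j).image fun n => fun i => (n i : ℤ) + k i)
          ((I j).image fun n => fun i => (n i : ℤ))).card : ℝ) / (I j).card) atTop (𝓝 0))
    (hU : (U : Filter ℕ) ≤ atTop)
    {ξ : (Fin d → ℕ) → E} {C : ℝ} (hbd : ∀ n, ‖ξ n‖ ≤ C) {δ : ℝ} (hδ : 0 < δ) (H₀ : ℕ) :
    ∃ H : ℕ, H₀ ≤ H ∧ 1 ≤ H ∧
      nu I U ξ - δ ≤ ((H:ℝ)^d)⁻¹ * ∑ h ∈ Fintype.piFinset (fun _ : Fin d => Finset.Icc 1 H),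
        gam I ξ h := by
  classical
  have hC : (0:ℝ) ≤ C := le_trans (norm_nonneg _) (hbd 0)
  have hν0 : 0 ≤ nu I U ξ := nu_nonneg I U hbd
  -- choose K
  obtain ⟨M₀, hM₀⟩ := exists_lt_of_ciInf_lt
    (show ⨅ M : ℕ, psi I U (Bop (M+1) ξ) < nu I U ξ + δ/3 by
      have : nu I U ξ < nu I U ξ + δ/3 := by linarith
      exact this)
  set K := M₀ + 1 with hK
  have hK1 : 1 ≤ K := by omega
  have hKψ : psi I U (Bop K ξ) < nu I U ξ + δ/3 := hM₀
  -- choose H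
  set a₁ : ℝ := 4*C*C*(d*K) with ha₁
  have ha₁0 : (0:ℝ) ≤ a₁ := by positivity
  set H := H₀ + 1 + Nat.ceil (3*a₁/δ) with hH
  have hH1 : 1 ≤ H := by omega
  have hH₀ : H₀ ≤ H := by omega
  have hHpos : (0:ℝ) < H := by exact_mod_cast hH1
  have hHb : 3*a₁/δ ≤ (H:ℝ) := by
    refine le_trans (Nat.le_ceil _) ?_
    rw [hH]
    push_cast
    linarith [Nat.cast_nonneg (α := ℝ) H₀]
  have hHa : a₁ / H ≤ δ/3 := by
    rw [div_le_iff₀ hHpos]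
    calc a₁ = (δ/3) * (3*a₁/δ) := by field_simp; try ring
      _ ≤ (δ/3) * H := mul_le_mul_of_nonneg_left hHb (by positivity)
  -- choose M'
  set a₂ : ℝ := 2*C*((d:ℝ)*(H+K)) with ha₂
  have ha₂0 : (0:ℝ) ≤ a₂ := by positivity
  set τ₂ : ℝ := min 1 (δ/(6*(2*C+1))) with hτ₂
  have hτ₂pos : (0:ℝ) < τ₂ := lt_min one_pos (by positivity)
  set M' := Nat.ceil (a₂/τ₂) + 1 with hM'
  have hM'1 : 1 ≤ M' := by omega
  have hM'pos : (0:ℝ) < M' := by exact_mod_cast hM'1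
  set ρ : ℝ := a₂ / M' with hρ
  have hρ0 : (0:ℝ) ≤ ρ := by positivity
  have hρle : ρ ≤ τ₂ := by
    rw [hρ, div_le_iff₀ hM'pos]
    calc a₂ = τ₂ * (a₂/τ₂) := by field_simp; try ring
      _ ≤ τ₂ * M' := by
          refine mul_le_mul_of_nonneg_left ?_ (le_of_lt hτ₂pos)
          refine le_trans (Nat.le_ceil _) ?_
          rw [hM']
          push_cast
          linarith
  have hρδ : 2*ρ*(2*C+ρ) ≤ δ/3 := by
    have h1 : ρ ≤ δ/(6*(2*C+1)) := le_trans hρle (min_le_right _ _)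
    have h1' : ρ ≤ 1 := le_trans hρle (min_le_left _ _)
    have h4 : ρ * (6*(2*C+1)) ≤ δ := (le_div_iff₀ (by positivity)).mp h1
    nlinarith
  -- bounds for the vectors
  have hbKb : ∀ n, ‖Bop K ξ n‖ ≤ C := norm_Bop_le K hK1 hbd
  have hyb : ∀ n, ‖Bop H ξ n‖ ≤ C := norm_Bop_le H hH1 hbd
  have huHb : ∀ n, ‖Bop H (Bop K ξ) n‖ ≤ C := norm_Bop_le H hH1 hbKb
  have hzb : ∀ n, ‖Bop M' ξ n‖ ≤ C := norm_Bop_le M' hM'1 hbd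
  have hsb : ∀ n, ‖Bop H (Bop K ξ) n + Bop K ξ n‖ ≤ 2*C := fun n =>
    le_trans (norm_add_le _ _) (by have := huHb n; have := hbKb n; linarith)
  -- commutation identities
  have hc1 : Bop M' (Bop H (Bop K ξ)) = Bop H (Bop K (Bop M' ξ)) := by
    rw [Bop_comm M' H, Bop_comm M' K]
  have hc2 : Bop M' (Bop K ξ) = Bop K (Bop M' ξ) := Bop_comm M' K ξ
  -- pointwise estimates
  have hest1 : ∀ n, ‖Bop H (Bop K (Bop M' ξ)) n - Bop M' ξ n‖ ≤ ρ := by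
    intro n
    refine Bop_close H hH1 ?_
    intro t ht
    refine Bop_close K hK1 ?_
    intro k hk
    have h10 : Bop M' ξ (n + t + k) = Bop M' ξ (n + (t + k)) := by rw [add_assoc]
    rw [h10]
    have h11 := Bop_shift_bound hd hM'1 hbd (t + k) n
    have h12 : (∑ i, ((t + k) i : ℝ)) ≤ (d:ℝ) * (H + K) := by
      rw [mem_box_iff] at ht hk
      calc ∑ i, ((t + k) i : ℝ) ≤ ∑ _i : Fin d, ((H:ℝ) + K) := by
            refine Finset.sum_le_sum fun i _ => ?_
            have h13 : ((t+k) i : ℝ) = (t i : ℝ) + (k i : ℝ) := by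
              simp [Pi.add_apply]
            rw [h13]
            have h14 : (t i : ℝ) ≤ H := le_of_lt (by exact_mod_cast ht i)
            have h15 : (k i : ℝ) ≤ K := le_of_lt (by exact_mod_cast hk i)
            linarith
        _ = (d:ℝ) * (H + K) := by
            rw [Finset.sum_const, Finset.card_univ, Fintype.card_fin, nsmul_eq_mul]
    calc ‖Bop M' ξ (n + (t+k)) - Bop M' ξ n‖ ≤ 2*C*(∑ i, ((t + k) i : ℝ))/M' := h11
      _ ≤ 2*C*((d:ℝ)*(H+K))/M' := by gcongr
      _ = ρ := by rw [hρ, ha₂]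
  have hest2 : ∀ n, ‖Bop K (Bop M' ξ) n - Bop M' ξ n‖ ≤ ρ := by
    intro n
    refine Bop_close K hK1 ?_
    intro k hk
    have h11 := Bop_shift_bound hd hM'1 hbd k n
    have h12 : (∑ i, (k i : ℝ)) ≤ (d:ℝ) * (H + K) := by
      rw [mem_box_iff] at hk
      calc ∑ i, (k i : ℝ) ≤ ∑ _i : Fin d, ((H:ℝ) + K) := by
            refine Finset.sum_le_sum fun i _ => ?_
            have h15 : (k i : ℝ) ≤ K := le_of_lt (by exact_mod_cast hk i)
            have : (0:ℝ) ≤ H := by positivity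
            linarith
        _ = (d:ℝ) * (H + K) := by
            rw [Finset.sum_const, Finset.card_univ, Fintype.card_fin, nsmul_eq_mul]
    calc ‖Bop M' ξ (n + k) - Bop M' ξ n‖ ≤ 2*C*(∑ i, (k i : ℝ))/M' := h11
      _ ≤ 2*C*((d:ℝ)*(H+K))/M' := by gcongr
      _ = ρ := by rw [hρ, ha₂]
  -- closeness of Bop M' (uH + bK) to 2 • z
  have hclose : ∀ n, ‖(2:ℝ) • Bop M' ξ n
      - Bop M' (fun m => Bop H (Bop K ξ) m + Bop K ξ m) n‖ ≤ ρ + ρ := by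
    intro n
    have e1 : Bop M' (fun m => Bop H (Bop K ξ) m + Bop K ξ m) n
        = Bop H (Bop K (Bop M' ξ)) n + Bop K (Bop M' ξ) n := by
      rw [Bop_add' M' (Bop H (Bop K ξ)) (Bop K ξ) n]
      rw [show Bop M' (Bop H (Bop K ξ)) n = Bop H (Bop K (Bop M' ξ)) n from congrFun hc1 n]
      rw [show Bop M' (Bop K ξ) n = Bop K (Bop M' ξ) n from congrFun hc2 n]
    rw [e1, two_smul]
    have e2 : Bop M' ξ n + Bop M' ξ n - (Bop H (Bop K (Bop M' ξ)) n + Bop K (Bop M' ξ) n)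
        = (Bop M' ξ n - Bop H (Bop K (Bop M' ξ)) n) + (Bop M' ξ n - Bop K (Bop M' ξ) n) := by
      abel
    rw [e2]
    refine le_trans (norm_add_le _ _) ?_
    rw [norm_sub_rev, norm_sub_rev (Bop M' ξ n)]
    exact add_le_add (hest1 n) (hest2 n)
  -- psi estimates
  have hBMs : ∀ n, ‖Bop M' (fun m => Bop H (Bop K ξ) m + Bop K ξ m) n‖ ≤ 2*C :=
    norm_Bop_le M' hM'1 hsb
  have hA1 : psi I U (fun n => (2:ℝ) • Bop M' ξ n)
      ≤ (Real.sqrt (psi I U (Bop M' (fun m => Bop H (Bop K ξ) m + Bop K ξ m))) + (ρ + ρ))^2 :=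
    psi_le_of_close I U hBMs hclose
  have hA2 : psi I U (fun n => (2:ℝ) • Bop M' ξ n) = 4 * psi I U (Bop M' ξ) :=
    psi_smul_two I U hzb
  have hA3 : nu I U ξ ≤ psi I U (Bop M' ξ) := nu_le I U hbd M' hM'1
  have hsqA : Real.sqrt (psi I U (Bop M' (fun m => Bop H (Bop K ξ) m + Bop K ξ m))) ≤ 2*C :=
    sqrt_psi_le I U hBMs
  have hA4 : 4 * nu I U ξ - 8*C*ρ - 4*ρ^2
      ≤ psi I U (Bop M' (fun m => Bop H (Bop K ξ) m + Bop K ξ m)) := by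
    have hsq := Real.sq_sqrt (psi_nonneg I U hBMs)
    nlinarith [Real.sqrt_nonneg (psi I U (Bop M' (fun m => Bop H (Bop K ξ) m + Bop K ξ m)))]
  have hA5 : psi I U (Bop M' (fun m => Bop H (Bop K ξ) m + Bop K ξ m))
      ≤ psi I U (fun m => Bop H (Bop K ξ) m + Bop K ξ m) :=
    psi_Bop_le I U hF hU M' hM'1 hsb
  have hexp : psi I U (fun m => Bop H (Bop K ξ) m + Bop K ξ m)
      = psi I U (Bop H (Bop K ξ)) + psi I U (Bop K ξ)
        + 2 * (phi I U (Bop H (Bop K ξ)) (Bop K ξ)).re :=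
    psi_add_expand I U () huHb hbKb
  have hψuH : psi I U (Bop H (Bop K ξ)) ≤ psi I U (Bop K ξ) :=
    psi_Bop_le I U hF hU H hH1 hbKb
  have hRe1 : nu I U ξ - δ/3 - 2*ρ*(2*C+ρ) ≤ (phi I U (Bop H (Bop K ξ)) (Bop K ξ)).re := by
    nlinarith
  -- (d) step : compare with phi (shift one y) ξ
  have hterm : ∀ k ∈ box d K, ∀ k' ∈ box d K,
      ‖phi I U (shift k (Bop H ξ)) (shift k' ξ)
        - phi I U (shift (vone d) (Bop H ξ)) ξ‖ ≤ (4*C*((d:ℝ)*K)/H)*C := by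
    intro k hk k' hk'
    have hbnd : ∀ n, ‖shift k (Bop H ξ) n - shift (k' + vone d) (Bop H ξ) n‖
        ≤ 4*C*((d:ℝ)*K)/H := by
      intro n
      have h11 := Bop_shift_bound hd hH1 hbd k n
      have h12 := Bop_shift_bound hd hH1 hbd (k' + vone d) n
      have h13 : (∑ i, (k i : ℝ)) ≤ (d:ℝ) * K := by
        rw [mem_box_iff] at hk
        calc ∑ i, (k i : ℝ) ≤ ∑ _i : Fin d, (K:ℝ) :=
              Finset.sum_le_sum fun i _ => le_of_lt (by exact_mod_cast hk i)
          _ = (d:ℝ) * K := by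
              rw [Finset.sum_const, Finset.card_univ, Fintype.card_fin, nsmul_eq_mul]
      have h14 : (∑ i, ((k' + vone d) i : ℝ)) ≤ (d:ℝ) * K := by
        rw [mem_box_iff] at hk'
        calc ∑ i, ((k' + vone d) i : ℝ) ≤ ∑ _i : Fin d, (K:ℝ) := by
              refine Finset.sum_le_sum fun i _ => ?_
              have h15 : (k' + vone d) i = k' i + 1 := rfl
              rw [h15]
              have := hk' i
              exact_mod_cast Nat.succ_le_of_lt this
          _ = (d:ℝ) * K := by
              rw [Finset.sum_const, Finset.card_univ, Fintype.card_fin, nsmul_eq_mul]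
      have htri : ‖Bop H ξ (n+k) - Bop H ξ (n + (k'+vone d))‖
          ≤ ‖Bop H ξ (n+k) - Bop H ξ n‖ + ‖Bop H ξ (n + (k'+vone d)) - Bop H ξ n‖ := by
        have h := dist_triangle (Bop H ξ (n+k)) (Bop H ξ n) (Bop H ξ (n + (k'+vone d)))
        rw [dist_eq_norm, dist_eq_norm, dist_eq_norm] at h
        calc ‖Bop H ξ (n+k) - Bop H ξ (n+(k'+vone d))‖
            ≤ ‖Bop H ξ (n+k) - Bop H ξ n‖ + ‖Bop H ξ n - Bop H ξ (n+(k'+vone d))‖ := h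
          _ = _ := by rw [norm_sub_rev (Bop H ξ n)]
      show ‖Bop H ξ (n+k) - Bop H ξ (n + (k'+vone d))‖ ≤ 4*C*((d:ℝ)*K)/H
      refine le_trans htri ?_
      calc ‖Bop H ξ (n+k) - Bop H ξ n‖ + ‖Bop H ξ (n + (k'+vone d)) - Bop H ξ n‖
          ≤ 2*C*(∑ i, (k i : ℝ))/H + 2*C*(∑ i, ((k' + vone d) i : ℝ))/H :=
            add_le_add h11 h12
        _ ≤ 2*C*((d:ℝ)*K)/H + 2*C*((d:ℝ)*K)/H := by gcongr
        _ = 4*C*((d:ℝ)*K)/H := by ring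
    have hphi_eq : phi I U (shift (k' + vone d) (Bop H ξ)) (shift k' ξ)
        = phi I U (shift (vone d) (Bop H ξ)) ξ := by
      rw [← shift_comp k' (vone d) (Bop H ξ)]
      exact phi_shift I U hF hU k' (Bv := C) (Bw := C) (fun n => hyb _) hbd
    have hsub := phi_sub_left I U () (v := shift k (Bop H ξ))
      (v' := shift (k'+vone d) (Bop H ξ)) (w := shift k' ξ)
      (Bv := C) (Bv' := C) (Bw := C) (fun n => hyb _) (fun n => hyb _) (fun n => hbd _)
    have heq2 : phi I U (shift k (Bop H ξ)) (shift k' ξ)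
        - phi I U (shift (vone d) (Bop H ξ)) ξ
        = phi I U (fun n => shift k (Bop H ξ) n - shift (k'+vone d) (Bop H ξ) n)
            (shift k' ξ) := by
      rw [hsub, hphi_eq]
    rw [heq2]
    have hnorm := norm_phi_le_sqrt I U (v := fun n => shift k (Bop H ξ) n
        - shift (k'+vone d) (Bop H ξ) n) (w := shift k' ξ)
      (Bv := 4*C*((d:ℝ)*K)/H) (Bw := C) hbnd (fun n => hbd _)
    have hsq1 : Real.sqrt (psi I U (fun n => shift k (Bop H ξ) n
        - shift (k'+vone d) (Bop H ξ) n)) ≤ 4*C*((d:ℝ)*K)/H := sqrt_psi_le I U hbnd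
    have hsq2 : Real.sqrt (psi I U (shift k' ξ)) ≤ C := sqrt_psi_le I U (fun n => hbd _)
    refine le_trans hnorm ?_
    exact mul_le_mul hsq1 hsq2 (Real.sqrt_nonneg _) (by positivity)
  have hexpand : phi I U (Bop H (Bop K ξ)) (Bop K ξ)
      = ((K:ℝ)^d)⁻¹ • ∑ k ∈ box d K, (((K:ℝ)^d)⁻¹ • ∑ k' ∈ box d K,
          phi I U (shift k (Bop H ξ)) (shift k' ξ)) := by
    rw [show Bop H (Bop K ξ) = Bop K (Bop H ξ) from Bop_comm H K ξ]
    rw [phi_Bop_left I U K hK1 (v := Bop H ξ) (w := Bop K ξ) (Bv := C) (Bw := C) hyb hbKb]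
    congr 1
    refine Finset.sum_congr rfl fun k hk => ?_
    rw [phi_Bop_right I U K hK1 (v := shift k (Bop H ξ)) (w := ξ) (Bv := C) (Bw := C)
      (fun n => hyb _) hbd]
  have havg : ‖phi I U (Bop H (Bop K ξ)) (Bop K ξ)
      - phi I U (shift (vone d) (Bop H ξ)) ξ‖ ≤ (4*C*((d:ℝ)*K)/H)*C := by
    rw [hexpand, avg_sub_const K hK1]
    refine norm_avg_le_of hd K _ (by positivity) fun k hk => ?_
    rw [avg_sub_const K hK1]
    refine norm_avg_le_of hd K _ (by positivity) fun k' hk' => ?_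
    exact hterm k hk k' hk'
  have hRe2 : (phi I U (Bop H (Bop K ξ)) (Bop K ξ)).re - (4*C*((d:ℝ)*K)/H)*C
      ≤ (phi I U (shift (vone d) (Bop H ξ)) ξ).re := by
    have h2 : |(phi I U (Bop H (Bop K ξ)) (Bop K ξ)
        - phi I U (shift (vone d) (Bop H ξ)) ξ).re| ≤ (4*C*((d:ℝ)*K)/H)*C :=
      le_trans (Complex.abs_re_le_norm _) (by exact havg)
    have h3 := (abs_le.mp h2).2
    rw [Complex.sub_re] at h3
    linarith
  have hHbound : (4*C*((d:ℝ)*K)/H)*C ≤ δ/3 := by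
    calc (4*C*((d:ℝ)*K)/H)*C = a₁/H := by rw [ha₁]; ring
      _ ≤ δ/3 := hHa
  -- (e) step
  have hone : phi I U (shift (vone d) (Bop H ξ)) ξ
      = ((H:ℝ)^d)⁻¹ • ∑ h ∈ Fintype.piFinset (fun _ : Fin d => Finset.Icc 1 H),
          phi I U (shift h ξ) ξ := by
    rw [show shift (vone d) (Bop H ξ) = Bop H (shift (vone d) ξ) from
      (Bop_shift H (vone d) ξ).symm]
    rw [phi_Bop_left I U H hH1 (v := shift (vone d) ξ) (w := ξ) (Bv := C) (Bw := C)
      (fun n => hbd _) hbd]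
    congr 1
    rw [← sum_box_shift_one H (fun h => phi I U (shift h ξ) ξ)]
    refine Finset.sum_congr rfl fun t ht => ?_
    rw [shift_comp]
  have hre_sum : (phi I U (shift (vone d) (Bop H ξ)) ξ).re
      = ((H:ℝ)^d)⁻¹ * ∑ h ∈ Fintype.piFinset (fun _ : Fin d => Finset.Icc 1 H),
          (phi I U (shift h ξ) ξ).re := by
    rw [hone, Complex.smul_re, smul_eq_mul, Complex.re_sum]
  have hgam_ge : ∀ h ∈ Fintype.piFinset (fun _ : Fin d => Finset.Icc 1 H),
      (phi I U (shift h ξ) ξ).re ≤ gam I ξ h := by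
    intro h _
    have t1 := (continuous_norm.tendsto _).comp
      (tendsto_aphi I U (v := shift h ξ) (w := ξ) (Bv := C) (Bw := C) (fun n => hbd _) hbd)
    have hb : IsBoundedUnder (· ≤ ·) atTop (fun j => ‖aphi I j (shift h ξ) ξ‖) :=
      isBoundedUnder_of ⟨C*C, fun j => norm_aphi_le I j (fun n => hbd _) hbd⟩
    have h5 : ‖phi I U (shift h ξ) ξ‖ ≤ gam I ξ h := ulim_le_limsup U hU t1 hb
    refine le_trans ?_ h5
    exact le_trans (Complex.re_le_norm _) le_rfl
  refine ⟨H, hH₀, hH1, ?_⟩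
  have hfinal : nu I U ξ - δ ≤ (phi I U (shift (vone d) (Bop H ξ)) ξ).re := by linarith
  calc nu I U ξ - δ ≤ (phi I U (shift (vone d) (Bop H ξ)) ξ).re := hfinal
    _ = ((H:ℝ)^d)⁻¹ * ∑ h ∈ Fintype.piFinset (fun _ : Fin d => Finset.Icc 1 H),
          (phi I U (shift h ξ) ξ).re := hre_sum
    _ ≤ ((H:ℝ)^d)⁻¹ * ∑ h ∈ Fintype.piFinset (fun _ : Fin d => Finset.Icc 1 H),
          gam I ξ h := by
        refine mul_le_mul_of_nonneg_left (Finset.sum_le_sum hgam_ge) (by positivity)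

end VDCaux

end VDCproof

open VDCaux in
/-- The van der Corput inequality for Følner averages: if `(ξ_n)` is a bounded sequence in an
inner product space and `(I j)` is a Følner sequence of (nonempty) finite subsets of `ℕ^d`,
then the `limsup` over `j` of the squared norm of the average `(1/|I j|) ∑_{n ∈ I j} ξ n` is at
most `4` times the `limsup` over `H` of `(1/H^d) ∑_{h ∈ [H]^d}` of the `limsup` over `j` of
`|(1/|I j|) ∑_{n ∈ I j} ⟪ξ (n+h), ξ n⟫|`. -/
theorem vdc_folner (d : ℕ) (hd : 0 < d) (E : Type*) [NormedAddCommGroup E]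
    [InnerProductSpace ℂ E] (ξ : (Fin d → ℕ) → E) (C : ℝ) (hbd : ∀ n, ‖ξ n‖ ≤ C)
    (I : ℕ → Finset (Fin d → ℕ)) (hne : ∀ j, (I j).Nonempty)
    (hFolner : ∀ k : Fin d → ℤ,
      Tendsto (fun j =>
          ((symmDiff ((I j).image fun n => fun i => (n i : ℤ) + k i)
              ((I j).image fun n => fun i => (n i : ℤ))).card : ℝ) / (I j).card)
        atTop (nhds 0)) :
    limsup (fun j => ‖(((I j).card : ℝ))⁻¹ • ∑ n ∈ I j, ξ n‖ ^ 2) atTop ≤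
      4 * limsup (fun H : ℕ =>
        ((H : ℝ) ^ d)⁻¹ * ∑ h ∈ Fintype.piFinset fun _ : Fin d => Finset.Icc 1 H,
          limsup (fun j =>
            (((I j).card : ℝ))⁻¹ * ‖∑ n ∈ I j, (inner ℂ (ξ (n + h)) (ξ n) : ℂ)‖) atTop) atTop := by
  classical
  have hC : (0:ℝ) ≤ C := le_trans (norm_nonneg _) (hbd 0)
  have hRHS : (fun H : ℕ => ((H : ℝ) ^ d)⁻¹ *
        ∑ h ∈ Fintype.piFinset fun _ : Fin d => Finset.Icc 1 H,
          limsup (fun j =>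
            (((I j).card : ℝ))⁻¹ * ‖∑ n ∈ I j, (inner ℂ (ξ (n + h)) (ξ n) : ℂ)‖) atTop)
      = fun H : ℕ => ((H : ℝ) ^ d)⁻¹ *
        ∑ h ∈ Fintype.piFinset fun _ : Fin d => Finset.Icc 1 H, gam I ξ h := by
    funext H
    congr 1
    refine Finset.sum_congr rfl fun h _ => ?_
    unfold gam
    congr 1
    funext j
    have he : ‖aphi I j (shift h ξ) ξ‖
        = (((I j).card : ℝ))⁻¹ * ‖∑ n ∈ I j, (inner ℂ (ξ (n + h)) (ξ n) : ℂ)‖ := by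
      rw [aphi, norm_smul, Real.norm_eq_abs, abs_of_nonneg (by positivity)]
      rfl
    exact he.symm
  rw [hRHS]
  set g := fun H : ℕ => ((H : ℝ) ^ d)⁻¹ *
    ∑ h ∈ Fintype.piFinset fun _ : Fin d => Finset.Icc 1 H, gam I ξ h with hg
  have hg_bddabove : IsBoundedUnder (· ≤ ·) atTop g := by
    refine isBoundedUnder_of ⟨C*C, fun H => ?_⟩
    rw [hg]
    have hcard : (Fintype.piFinset fun _ : Fin d => Finset.Icc 1 H).card = H ^ d := by
      simp [Fintype.card_piFinset, Nat.card_Icc]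
    have hsum : ∑ h ∈ Fintype.piFinset (fun _ : Fin d => Finset.Icc 1 H), gam I ξ h
        ≤ (H^d : ℕ) * (C*C) := by
      refine le_trans (Finset.sum_le_sum fun h _ => gam_le I ξ hbd h) ?_
      rw [Finset.sum_const, hcard, nsmul_eq_mul]
    calc ((H:ℝ)^d)⁻¹ * ∑ h ∈ Fintype.piFinset (fun _ : Fin d => Finset.Icc 1 H), gam I ξ h
        ≤ ((H:ℝ)^d)⁻¹ * ((H^d : ℕ) * (C*C)) := mul_le_mul_of_nonneg_left hsum (by positivity)
      _ ≤ C*C := by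
          rw [cast_pow_box]
          rcases eq_or_ne ((H:ℝ)^d) 0 with hz | hz
          · rw [hz, inv_zero, zero_mul]; positivity
          · rw [← mul_assoc, inv_mul_cancel₀ hz, one_mul]
  set Aj := fun j => ‖(((I j).card : ℝ))⁻¹ • ∑ n ∈ I j, ξ n‖ ^ 2 with hAj
  have hAle : ∀ j, Aj j ≤ C^2 := fun j => by
    rw [hAj]
    exact pow_le_pow_left₀ (norm_nonneg _) (norm_avgW_le I j hC hbd) 2
  have hA0 : ∀ j, 0 ≤ Aj j := fun j => by rw [hAj]; positivity
  have hLbdd : IsBoundedUnder (· ≤ ·) atTop Aj := isBoundedUnder_of ⟨C^2, hAle⟩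
  have hLcob : IsCoboundedUnder (· ≤ ·) atTop Aj :=
    (isBoundedUnder_of (r := (· ≥ ·)) (f := atTop) (u := Aj) ⟨0, hA0⟩).isCoboundedUnder_le
  have hL0 : 0 ≤ limsup Aj atTop :=
    le_limsup_of_frequently_le (Frequently.of_forall hA0) hLbdd
  have hmain : limsup Aj atTop ≤ limsup g atTop := by
    refine le_of_forall_pos_le_add fun ε hε => ?_
    have hfreq : ∃ᶠ j in atTop, limsup Aj atTop - ε < Aj j :=
      frequently_lt_of_lt_limsup hLcob (by linarith)
    have hne2 : (atTop ⊓ 𝓟 {j | limsup Aj atTop - ε < Aj j}).NeBot :=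
      frequently_iff_neBot.mp hfreq
    obtain ⟨U, hU2⟩ := @Filter.exists_ultrafilter_le _ _ hne2
    have hUat : (U : Filter ℕ) ≤ atTop := le_trans hU2 inf_le_left
    have hUs : ∀ᶠ j in (U : Filter ℕ), limsup Aj atTop - ε < Aj j :=
      le_principal_iff.mp (le_trans hU2 inf_le_right)
    have h4 : limsup Aj atTop - ε ≤ nu I U ξ := by
      refine le_ciInf fun M => ?_
      refine L_le_psi_Bop I U hFolner hUat hbd (M+1) (by omega) ?_
      refine hUs.mono fun j hj => ?_
      rw [hAj] at hj
      exact hj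
    have h5 : nu I U ξ ≤ limsup g atTop := by
      refine le_of_forall_pos_le_add fun δ hδ => ?_
      have hfr : ∃ᶠ H in atTop, nu I U ξ - δ ≤ g H := by
        rw [frequently_atTop]
        intro H₀
        obtain ⟨H, hH₀, hH1, hHg⟩ := key_lower I U hd hFolner hUat hbd hδ H₀
        refine ⟨H, hH₀, ?_⟩
        rw [hg]
        exact hHg
      have h6 := le_limsup_of_frequently_le hfr hg_bddabove
      linarith
    linarith
  have h7 : 0 ≤ limsup g atTop := le_trans hL0 hmain
  calc limsup Aj atTop ≤ limsup g atTop := hmain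
    _ ≤ 4 * limsup g atTop := by linarith
end

section
/- Let a : ℕ² → ℂ be a bounded sequence and let (L_N), (L'_N) be sequences of positive integers with L_N/N → 0 and L'_N/N → 0 as N → ∞. Suppose that (1/(L_N L'_{N'})) Σ_{n ∈ (N, N+L_N], n' ∈ (N', N'+L'_{N'}]} a(n,n') → 0 as N, N' → ∞. Then (1/(N N')) Σ_{n ∈ [N], n' ∈ [N']} a(n,n') → 0 as N, N' → ∞. -/
open Filter Finset

private def bseq (L : ℕ → ℕ) (K : ℕ) : ℕ → ℕ
  | 0 => K
  | k+1 => bseq L K k + L (bseq L K k)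

private lemma bseq_mono (L : ℕ → ℕ) (K : ℕ) : Monotone (bseq L K) :=
  monotone_nat_of_le_succ (fun k => Nat.le_add_right _ _)

private lemma le_bseq (L : ℕ → ℕ) (K : ℕ) (k : ℕ) : K ≤ bseq L K k :=
  bseq_mono L K (Nat.zero_le k)

private lemma add_le_bseq (L : ℕ → ℕ) (hL0 : ∀ N, 0 < L N) (K k : ℕ) :
    K + k ≤ bseq L K k := by
  induction k with
  | zero => simp [bseq]
  | succ k ih =>
    have := hL0 (bseq L K k)
    simp only [bseq]
    omega

private lemma bseq_telescope (L : ℕ → ℕ) (K m : ℕ) :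
    bseq L K m = K + ∑ k ∈ range m, L (bseq L K k) := by
  induction m with
  | zero => simp [bseq]
  | succ m ih => rw [Finset.sum_range_succ, bseq, ih]; ring

private lemma sum_Ioc_bseq (L : ℕ → ℕ) (K m : ℕ) (f : ℕ → ℂ) :
    ∑ n ∈ Ioc K (bseq L K m), f n
      = ∑ k ∈ range m, ∑ n ∈ Ioc (bseq L K k) (bseq L K (k+1)), f n := by
  induction m with
  | zero => simp [bseq]
  | succ m ih =>
    rw [Finset.sum_range_succ, ← ih,
      Finset.sum_Ioc_consecutive f (le_bseq L K m) (bseq_mono L K (Nat.le_succ m))]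

private lemma norm_dsum_le (a : ℕ → ℕ → ℂ) (C : ℝ) (hC : ∀ n n', ‖a n n'‖ ≤ C)
    (s t : Finset ℕ) : ‖∑ n ∈ s, ∑ n' ∈ t, a n n'‖ ≤ C * s.card * t.card := by
  calc ‖∑ n ∈ s, ∑ n' ∈ t, a n n'‖ ≤ ∑ n ∈ s, ‖∑ n' ∈ t, a n n'‖ := norm_sum_le _ _
    _ ≤ ∑ n ∈ s, ∑ n' ∈ t, C :=
        Finset.sum_le_sum fun n _ => (norm_sum_le _ _).trans
          (Finset.sum_le_sum fun n' _ => hC n n')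
    _ = C * s.card * t.card := by simp [Finset.sum_const, nsmul_eq_mul]; ring

private lemma exists_bseq_facts (L : ℕ → ℕ) (hL0 : ∀ N, 0 < L N) (K N : ℕ) (hKN : K < N)
    (δ : ℝ) (hδ0 : 0 ≤ δ) (hδ1 : δ ≤ 1) (hKL : ∀ M, K ≤ M → (L M : ℝ) ≤ δ * M) :
    ∃ m : ℕ, N ≤ bseq L K m ∧ ((bseq L K m : ℝ) ≤ N + δ * N) := by
  have hex : ∃ k, N ≤ bseq L K k := ⟨N, le_trans (Nat.le_add_left N K) (add_le_bseq L hL0 K N)⟩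
  set m := Nat.find hex with hm
  have hspec : N ≤ bseq L K m := Nat.find_spec hex
  have hm0 : m ≠ 0 := by
    intro h0
    rw [h0] at hspec
    simp [bseq] at hspec
    omega
  obtain ⟨j, hj⟩ : ∃ j, m = j + 1 := ⟨m - 1, by omega⟩
  have hjlt : bseq L K j < N := by
    have := Nat.find_min hex (m := j) (by omega)
    omega
  refine ⟨m, hspec, ?_⟩
  have h1 : (L (bseq L K j) : ℝ) ≤ δ * bseq L K j := hKL _ (le_bseq L K j)
  have h2 : (bseq L K j : ℝ) ≤ N := by exact_mod_cast hjlt.le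
  have h3 : (bseq L K m : ℝ) = bseq L K j + L (bseq L K j) := by
    rw [hj]; push_cast [bseq]; ring
  nlinarith

set_option maxHeartbeats 1000000 in
/-- If `a : ℕ² → ℂ` is bounded, `L_N/N → 0`, `L'_N/N → 0`, and the averages of `a` over the
boxes `(N, N+L_N] × (N', N'+L'_{N'}]` tend to `0` as `N, N' → ∞`, then the Cesàro averages
`(1/(N N')) ∑_{n ∈ [N], n' ∈ [N']} a(n,n')` tend to `0` as `N, N' → ∞`. -/
theorem cesaro_from_short_intervals (a : ℕ → ℕ → ℂ) (C : ℝ) (hC : ∀ n n', ‖a n n'‖ ≤ C)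
    (L L' : ℕ → ℕ) (hL0 : ∀ N, 0 < L N) (hL'0 : ∀ N, 0 < L' N)
    (hL : Tendsto (fun N => (L N : ℝ) / N) atTop (nhds 0))
    (hL' : Tendsto (fun N => (L' N : ℝ) / N) atTop (nhds 0))
    (h : Tendsto (fun p : ℕ × ℕ =>
        ((L p.1 : ℂ) * (L' p.2 : ℂ))⁻¹ *
          ∑ n ∈ Finset.Ioc p.1 (p.1 + L p.1), ∑ n' ∈ Finset.Ioc p.2 (p.2 + L' p.2), a n n')
      (atTop ×ˢ atTop) (nhds 0)) :
    Tendsto (fun p : ℕ × ℕ =>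
        ((p.1 : ℂ) * (p.2 : ℂ))⁻¹ *
          ∑ n ∈ Finset.Icc 1 p.1, ∑ n' ∈ Finset.Icc 1 p.2, a n n')
      (atTop ×ˢ atTop) (nhds 0) := by
  set C₀ : ℝ := max C 1 with hC₀def
  have hC₀1 : (1:ℝ) ≤ C₀ := le_max_right _ _
  have hC₀0 : (0:ℝ) < C₀ := lt_of_lt_of_le one_pos hC₀1
  have hC' : ∀ n n', ‖a n n'‖ ≤ C₀ := fun n n' => (hC n n').trans (le_max_left _ _)
  rw [Filter.prod_atTop_atTop_eq] at h ⊢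
  rw [NormedAddCommGroup.tendsto_nhds_zero] at h ⊢
  intro ε hε
  set δ : ℝ := min 1 (ε / (16 * C₀)) with hδdef
  have hδ0 : 0 < δ := lt_min one_pos (by positivity)
  have hδ1 : δ ≤ 1 := min_le_left _ _
  have hδC : C₀ * δ ≤ ε / 16 := by
    have h1 : δ ≤ ε / (16 * C₀) := min_le_right _ _
    have := mul_le_mul_of_nonneg_left h1 hC₀0.le
    calc C₀ * δ ≤ C₀ * (ε / (16 * C₀)) := this
      _ = ε / 16 := by field_simp
  obtain ⟨q, hq⟩ := eventually_atTop.mp (h (ε/16) (by positivity))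
  obtain ⟨K₂, hK₂⟩ := Metric.tendsto_atTop.mp hL δ hδ0
  obtain ⟨K₃, hK₃⟩ := Metric.tendsto_atTop.mp hL' δ hδ0
  set K : ℕ := max (max q.1 q.2) (max (max K₂ K₃) 1) + 1 with hKdef
  have hK1 : 1 ≤ K := by omega
  have hKL : ∀ M, K ≤ M → (L M : ℝ) ≤ δ * M := by
    intro M hM
    have hM1 : (1:ℝ) ≤ M := by exact_mod_cast le_trans hK1 hM
    have := hK₂ M (by omega)
    rw [Real.dist_0_eq_abs, abs_of_nonneg (by positivity)] at this
    rw [div_lt_iff₀ (by linarith)] at this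
    linarith
  have hKL' : ∀ M, K ≤ M → (L' M : ℝ) ≤ δ * M := by
    intro M hM
    have hM1 : (1:ℝ) ≤ M := by exact_mod_cast le_trans hK1 hM
    have := hK₃ M (by omega)
    rw [Real.dist_0_eq_abs, abs_of_nonneg (by positivity)] at this
    rw [div_lt_iff₀ (by linarith)] at this
    linarith
  have hKh : ∀ M M', K ≤ M → K ≤ M' →
      ‖((L M : ℂ) * (L' M' : ℂ))⁻¹ *
        ∑ n ∈ Ioc M (M + L M), ∑ n' ∈ Ioc M' (M' + L' M'), a n n'‖ < ε/16 := by
    intro M M' hM hM'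
    exact hq (M, M') ⟨by simp; omega, by simp; omega⟩
  obtain ⟨n₁, hn₁⟩ := exists_nat_gt (8 * C₀ * K / ε)
  refine eventually_atTop.mpr ⟨(max (K+1) n₁, max (K+1) n₁), ?_⟩
  rintro ⟨N, N'⟩ ⟨hN, hN'⟩
  simp only at hN hN' ⊢
  have hKN : K < N := by omega
  have hKN' : K < N' := by omega
  have hNr : (1:ℝ) ≤ N := by exact_mod_cast (by omega : 1 ≤ N)
  have hN'r : (1:ℝ) ≤ N' := by exact_mod_cast (by omega : 1 ≤ N')
  have hCKN : C₀ * K < ε / 8 * N := by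
    have h1 : (n₁ : ℝ) ≤ N := by exact_mod_cast (by omega : n₁ ≤ N)
    have := lt_of_lt_of_le hn₁ h1
    rw [div_lt_iff₀ hε] at this
    linarith
  have hCKN' : C₀ * K < ε / 8 * N' := by
    have h1 : (n₁ : ℝ) ≤ N' := by exact_mod_cast (by omega : n₁ ≤ N')
    have := lt_of_lt_of_le hn₁ h1
    rw [div_lt_iff₀ hε] at this
    linarith
  obtain ⟨m, hmN, hmb⟩ := exists_bseq_facts L hL0 K N hKN δ hδ0.le hδ1 hKL
  obtain ⟨m', hm'N, hm'b⟩ := exists_bseq_facts L' hL'0 K N' hKN' δ hδ0.le hδ1 hKL'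
  set B1 := bseq L K m with hB1def
  set B2 := bseq L' K m' with hB2def
  -- pieces
  set A := ∑ n ∈ Ioc 0 K, ∑ n' ∈ Ioc 0 N', a n n' with hA
  set B := ∑ n ∈ Ioc K N, ∑ n' ∈ Ioc 0 K, a n n' with hB
  set T := ∑ n ∈ Ioc K B1, ∑ n' ∈ Ioc K B2, a n n' with hT
  set E1 := ∑ n ∈ Ioc N B1, ∑ n' ∈ Ioc K B2, a n n' with hE1
  set E2 := ∑ n ∈ Ioc K N, ∑ n' ∈ Ioc N' B2, a n n' with hE2
  have hicc : ∀ M : ℕ, Finset.Icc 1 M = Finset.Ioc 0 M := fun M => rfl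
  have hsplit_inner : ∀ n, (∑ n' ∈ Ioc K N', a n n')
      = (∑ n' ∈ Ioc K B2, a n n') - (∑ n' ∈ Ioc N' B2, a n n') := by
    intro n
    exact (eq_sub_of_add_eq (Finset.sum_Ioc_consecutive _ hKN'.le hm'N))
  have hS : (∑ n ∈ Finset.Icc 1 N, ∑ n' ∈ Finset.Icc 1 N', a n n')
      = A + B + (T - E1 - E2) := by
    have e1 : (∑ n ∈ Finset.Icc 1 N, ∑ n' ∈ Finset.Icc 1 N', a n n')
        = A + ∑ n ∈ Ioc K N, ∑ n' ∈ Ioc 0 N', a n n' := by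
      simp only [hicc]
      exact (Finset.sum_Ioc_consecutive _ (Nat.zero_le K) hKN.le).symm
    have e2 : ∀ n, (∑ n' ∈ Ioc 0 N', a n n')
        = (∑ n' ∈ Ioc 0 K, a n n') + ∑ n' ∈ Ioc K N', a n n' :=
      fun n => (Finset.sum_Ioc_consecutive _ (Nat.zero_le K) hKN'.le).symm
    have e3 : (∑ n ∈ Ioc K N, ∑ n' ∈ Ioc K B2, a n n')
        = T - E1 := by
      refine eq_sub_of_add_eq ?_
      exact Finset.sum_Ioc_consecutive _ hKN.le hmN
    calc (∑ n ∈ Finset.Icc 1 N, ∑ n' ∈ Finset.Icc 1 N', a n n')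
        = A + ∑ n ∈ Ioc K N, ((∑ n' ∈ Ioc 0 K, a n n') + ∑ n' ∈ Ioc K N', a n n') := by
          rw [e1]; congr 1; exact Finset.sum_congr rfl fun n _ => e2 n
      _ = A + (B + ∑ n ∈ Ioc K N, ∑ n' ∈ Ioc K N', a n n') := by
          rw [Finset.sum_add_distrib]
      _ = A + (B + ((∑ n ∈ Ioc K N, ∑ n' ∈ Ioc K B2, a n n') - E2)) := by
          rw [show (∑ n ∈ Ioc K N, ∑ n' ∈ Ioc K N', a n n')
              = (∑ n ∈ Ioc K N, ∑ n' ∈ Ioc K B2, a n n') - E2 from ?_]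
          rw [Finset.sum_congr rfl fun n _ => hsplit_inner n, Finset.sum_sub_distrib]
      _ = A + B + (T - E1 - E2) := by rw [e3]; ring
  -- norm bounds
  have hB1N : (B1 : ℝ) ≤ 2 * N := by nlinarith
  have hB2N : (B2 : ℝ) ≤ 2 * N' := by nlinarith
  have hcard : ∀ x y : ℕ, x ≤ y → ((Ioc x y).card : ℝ) = (y:ℝ) - x := by
    intro x y hxy
    rw [Nat.card_Ioc]
    push_cast [hxy]
    ring
  have hnA : ‖A‖ ≤ C₀ * K * N' := by
    have := norm_dsum_le a C₀ hC' (Ioc 0 K) (Ioc 0 N')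
    simpa [hcard 0 K (Nat.zero_le K), hcard 0 N' (Nat.zero_le N')] using this
  have hnB : ‖B‖ ≤ C₀ * N * K := by
    have := norm_dsum_le a C₀ hC' (Ioc K N) (Ioc 0 K)
    rw [hcard K N hKN.le, hcard 0 K (Nat.zero_le K)] at this
    simp only [Nat.cast_zero] at this
    have h2 : C₀ * ((N:ℝ) - K) * ((K:ℝ) - 0) ≤ C₀ * N * K := by
      have hK0 : (0:ℝ) ≤ K := Nat.cast_nonneg K
      nlinarith [mul_nonneg (mul_nonneg hC₀0.le hK0) hK0]
    exact this.trans h2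
  have hnE1 : ‖E1‖ ≤ C₀ * (δ * N) * (2 * N') := by
    have := norm_dsum_le a C₀ hC' (Ioc N B1) (Ioc K B2)
    rw [hcard N B1 hmN, hcard K B2 (le_trans hKN'.le hm'N)] at this
    refine this.trans ?_
    have h1 : (B1:ℝ) - N ≤ δ * N := by linarith
    have h2 : (B2:ℝ) - K ≤ 2 * N' := by
      have : (0:ℝ) ≤ K := Nat.cast_nonneg K
      linarith
    have h1' : (0:ℝ) ≤ (B1:ℝ) - N := by
      have : (N:ℝ) ≤ B1 := by exact_mod_cast hmN
      linarith
    have h2' : (0:ℝ) ≤ (B2:ℝ) - K := by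
      have : (K:ℝ) ≤ B2 := by exact_mod_cast (le_trans hKN'.le hm'N)
      linarith
    have hmm := mul_le_mul h1 h2 h2' (by positivity : (0:ℝ) ≤ δ * N)
    calc C₀ * ((B1:ℝ) - N) * ((B2:ℝ) - K)
        = C₀ * (((B1:ℝ) - N) * ((B2:ℝ) - K)) := by ring
      _ ≤ C₀ * (δ * N * (2 * N')) := mul_le_mul_of_nonneg_left hmm hC₀0.le
      _ = C₀ * (δ * N) * (2 * N') := by ring
  have hnE2 : ‖E2‖ ≤ C₀ * N * (δ * N') := by
    have := norm_dsum_le a C₀ hC' (Ioc K N) (Ioc N' B2)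
    rw [hcard K N hKN.le, hcard N' B2 hm'N] at this
    refine this.trans ?_
    have h1 : (N:ℝ) - K ≤ N := by
      have : (0:ℝ) ≤ K := Nat.cast_nonneg K
      linarith
    have h1' : (0:ℝ) ≤ (N:ℝ) - K := by
      have : (K:ℝ) ≤ N := by exact_mod_cast hKN.le
      linarith
    have h2 : (B2:ℝ) - N' ≤ δ * N' := by linarith
    have h2' : (0:ℝ) ≤ (B2:ℝ) - N' := by
      have : (N':ℝ) ≤ B2 := by exact_mod_cast hm'N
      linarith
    have hmm := mul_le_mul h1 h2 h2' (Nat.cast_nonneg N)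
    calc C₀ * ((N:ℝ) - K) * ((B2:ℝ) - N')
        = C₀ * (((N:ℝ) - K) * ((B2:ℝ) - N')) := by ring
      _ ≤ C₀ * ((N:ℝ) * (δ * N')) := mul_le_mul_of_nonneg_left hmm hC₀0.le
      _ = C₀ * N * (δ * N') := by ring
  have hnT : ‖T‖ ≤ ε/16 * (2*N) * (2*N') := by
    have hrw : T = ∑ k ∈ range m, ∑ k' ∈ range m',
        ∑ n ∈ Ioc (bseq L K k) (bseq L K (k+1)),
          ∑ n' ∈ Ioc (bseq L' K k') (bseq L' K (k'+1)), a n n' := by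
      rw [hT, sum_Ioc_bseq]
      refine Finset.sum_congr rfl fun k _ => ?_
      rw [show (∑ n ∈ Ioc (bseq L K k) (bseq L K (k+1)), ∑ n' ∈ Ioc K B2, a n n')
          = ∑ n ∈ Ioc (bseq L K k) (bseq L K (k+1)), ∑ k' ∈ range m',
              ∑ n' ∈ Ioc (bseq L' K k') (bseq L' K (k'+1)), a n n'
        from Finset.sum_congr rfl fun n _ => sum_Ioc_bseq L' K m' (a n)]
      exact Finset.sum_comm
    have hblock : ∀ k k', ‖∑ n ∈ Ioc (bseq L K k) (bseq L K (k+1)),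
          ∑ n' ∈ Ioc (bseq L' K k') (bseq L' K (k'+1)), a n n'‖
        ≤ ε/16 * (L (bseq L K k)) * (L' (bseq L' K k')) := by
      intro k k'
      set M := bseq L K k
      set M' := bseq L' K k'
      have hMK : K ≤ M := le_bseq L K k
      have hM'K : K ≤ M' := le_bseq L' K k'
      have hb : bseq L K (k+1) = M + L M := rfl
      have hb' : bseq L' K (k'+1) = M' + L' M' := rfl
      have hsa := (hKh M M' hMK hM'K).le
      have hc : ((L M : ℂ) * (L' M' : ℂ)) ≠ 0 := by
        have := hL0 M; have := hL'0 M'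
        simp only [ne_eq, mul_eq_zero, Nat.cast_eq_zero]
        omega
      have heq : (∑ n ∈ Ioc M (M + L M), ∑ n' ∈ Ioc M' (M' + L' M'), a n n')
          = ((L M : ℂ) * (L' M' : ℂ)) * (((L M : ℂ) * (L' M' : ℂ))⁻¹ *
            ∑ n ∈ Ioc M (M + L M), ∑ n' ∈ Ioc M' (M' + L' M'), a n n') := by
        rw [← mul_assoc, mul_inv_cancel₀ hc, one_mul]
      rw [hb, hb', heq, norm_mul]
      have hnc : ‖(L M : ℂ) * (L' M' : ℂ)‖ = (L M : ℝ) * (L' M' : ℝ) := by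
        rw [norm_mul, Complex.norm_natCast, Complex.norm_natCast]
      rw [hnc]
      calc (L M : ℝ) * (L' M' : ℝ) * ‖_‖ ≤ (L M : ℝ) * (L' M' : ℝ) * (ε/16) := by
            apply mul_le_mul_of_nonneg_left hsa (by positivity)
        _ = ε/16 * (L M) * (L' M') := by ring
    calc ‖T‖ ≤ ∑ k ∈ range m, ∑ k' ∈ range m',
          ε/16 * (L (bseq L K k)) * (L' (bseq L' K k')) := by
          rw [hrw]
          refine (norm_sum_le _ _).trans (Finset.sum_le_sum fun k _ => ?_)
          exact (norm_sum_le _ _).trans (Finset.sum_le_sum fun k' _ => hblock k k')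
      _ = ε/16 * ((∑ k ∈ range m, (L (bseq L K k) : ℝ))
            * (∑ k' ∈ range m', (L' (bseq L' K k') : ℝ))) := by
          rw [Finset.sum_mul_sum, Finset.mul_sum]
          refine Finset.sum_congr rfl fun k _ => ?_
          rw [Finset.mul_sum]
          exact Finset.sum_congr rfl fun k' _ => by ring
      _ ≤ ε/16 * (2*N) * (2*N') := by
          have hs1 : (∑ k ∈ range m, (L (bseq L K k) : ℝ)) ≤ 2*N := by
            have := bseq_telescope L K m
            have h1 : (B1 : ℝ) = K + ∑ k ∈ range m, (L (bseq L K k) : ℝ) := by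
              rw [hB1def, this]; push_cast; ring
            have : (0:ℝ) ≤ K := Nat.cast_nonneg K
            linarith
          have hs2 : (∑ k' ∈ range m', (L' (bseq L' K k') : ℝ)) ≤ 2*N' := by
            have := bseq_telescope L' K m'
            have h1 : (B2 : ℝ) = K + ∑ k ∈ range m', (L' (bseq L' K k) : ℝ) := by
              rw [hB2def, this]; push_cast; ring
            have : (0:ℝ) ≤ K := Nat.cast_nonneg K
            linarith
          have hp1 : (0:ℝ) ≤ ∑ k ∈ range m, (L (bseq L K k) : ℝ) :=
            Finset.sum_nonneg fun _ _ => Nat.cast_nonneg _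
          have hp2 : (0:ℝ) ≤ ∑ k' ∈ range m', (L' (bseq L' K k') : ℝ) :=
            Finset.sum_nonneg fun _ _ => Nat.cast_nonneg _
          have hmm := mul_le_mul hs1 hs2 hp2 (by positivity : (0:ℝ) ≤ 2 * N)
          calc ε/16 * ((∑ k ∈ range m, (L (bseq L K k) : ℝ))
                * (∑ k' ∈ range m', (L' (bseq L' K k') : ℝ)))
              ≤ ε/16 * (2*N * (2*N')) := mul_le_mul_of_nonneg_left hmm (by positivity)
            _ = ε/16 * (2*N) * (2*N') := by ring
  -- assemble
  have hnS : ‖∑ n ∈ Finset.Icc 1 N, ∑ n' ∈ Finset.Icc 1 N', a n n'‖ < ε * (N * N') := by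
    rw [hS]
    have htri : ‖A + B + (T - E1 - E2)‖ ≤ ‖A‖ + ‖B‖ + ‖T‖ + ‖E1‖ + ‖E2‖ := by
      calc ‖A + B + (T - E1 - E2)‖ ≤ ‖A + B‖ + ‖T - E1 - E2‖ := norm_add_le _ _
        _ ≤ (‖A‖ + ‖B‖) + (‖T - E1‖ + ‖E2‖) := by
            gcongr
            exacts [norm_add_le _ _, norm_sub_le _ _]
        _ ≤ (‖A‖ + ‖B‖) + ((‖T‖ + ‖E1‖) + ‖E2‖) := by
            gcongr
            exact norm_sub_le _ _
        _ = ‖A‖ + ‖B‖ + ‖T‖ + ‖E1‖ + ‖E2‖ := by ring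
    have hKr : (0:ℝ) ≤ K := Nat.cast_nonneg K
    have hsum : ‖A‖ + ‖B‖ + ‖T‖ + ‖E1‖ + ‖E2‖
        ≤ C₀ * K * N' + C₀ * N * K + ε/16 * (2*N) * (2*N')
          + C₀ * (δ * N) * (2 * N') + C₀ * N * (δ * N') :=
      add_le_add (add_le_add (add_le_add (add_le_add hnA hnB) hnT) hnE1) hnE2
    refine lt_of_le_of_lt (htri.trans hsum) ?_
    have hNp : (0:ℝ) < N := lt_of_lt_of_le zero_lt_one hNr
    have hN'p : (0:ℝ) < N' := lt_of_lt_of_le zero_lt_one hN'r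
    have h1 := mul_lt_mul_of_pos_right hCKN' hNp
    have h2 := mul_lt_mul_of_pos_right hCKN hN'p
    have h3 := mul_le_mul_of_nonneg_right
      (mul_le_mul_of_nonneg_right hδC hNp.le) hN'p.le
    have h4 := mul_pos hNp hN'p
    nlinarith [h1, h2, h3, h4]
  -- final norm computation
  have hNc : ((N:ℂ) * (N':ℂ)) ≠ 0 := by
    simp only [ne_eq, mul_eq_zero, Nat.cast_eq_zero]
    omega
  rw [norm_mul, norm_inv]
  have hnn : ‖(N:ℂ) * (N':ℂ)‖ = (N:ℝ) * N' := by
    rw [norm_mul, Complex.norm_natCast, Complex.norm_natCast]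
  rw [hnn]
  rw [inv_mul_lt_iff₀ (by positivity)]
  calc ‖∑ n ∈ Finset.Icc 1 N, ∑ n' ∈ Finset.Icc 1 N', a n n'‖ < ε * (N * N') := hnS
    _ = (N:ℝ) * N' * ε := by ring
end

section
/- Let X, K be Polish spaces and F : X × K → ℝ≥0 a bounded Borel function. Suppose for every x ∈ X the set P_x = {y ∈ K : F(x,y) > 0} is countable and Σ(x) = Σ_{y ∈ P_x} F(x,y) < ∞. Define S(x) = sup_{y ∈ K} F(x,y). Then there exists a Borel map t : X → K such that F(x, t(x)) = S(x) for every x ∈ X. -/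
open MeasureTheory Set Function PiNat

namespace BorelSel

variable {α : Type*} [TopologicalSpace α] [T2Space α] [MeasurableSpace α] [OpensMeasurableSpace α]

/-- A countable family of sets is co-separated if it admits Borel envelopes with
empty intersection. -/
def CoSep (S : ℕ → Set α) : Prop :=
  ∃ B : ℕ → Set α, (∀ n, MeasurableSet (B n)) ∧ (∀ n, S n ⊆ B n) ∧ (⋂ n, B n) = ∅

/-- helper: turn a `Fin (k+1) → ℕ` into `ℕ → ℕ` -/
def pick (k : ℕ) (t : Fin (k + 1) → ℕ) (n : ℕ) : ℕ :=
  if h : n < k + 1 then t ⟨n, h⟩ else 0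

theorem step (f : ℕ → (ℕ → ℕ) → α) (u : ℕ → (ℕ → ℕ) × ℕ)
    (hu : ¬ CoSep (fun n => f n '' cylinder (u n).1 (u n).2)) (k : ℕ) :
    ∃ u' : ℕ → (ℕ → ℕ) × ℕ,
      (∀ n, n ≤ k → (u' n).1 ∈ cylinder (u n).1 (u n).2 ∧ (u' n).2 = (u n).2 + 1) ∧
      (∀ n, k < n → u' n = u n) ∧
      ¬ CoSep (fun n => f n '' cylinder (u' n).1 (u' n).2) := by
  by_contra h
  push_neg at h
  apply hu
  -- for every choice vector `t`, the corresponding extension is co-separated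
  have H : ∀ t : Fin (k + 1) → ℕ, CoSep (fun n =>
      f n '' cylinder (if n ≤ k then update (u n).1 (u n).2 (pick k t n) else (u n).1)
        (if n ≤ k then (u n).2 + 1 else (u n).2)) := by
    intro t
    set u' : ℕ → (ℕ → ℕ) × ℕ := fun n =>
      if n ≤ k then (update (u n).1 (u n).2 (pick k t n), (u n).2 + 1) else u n with hu'
    have h1 : ∀ n, n ≤ k → (u' n).1 ∈ cylinder (u n).1 (u n).2 ∧ (u' n).2 = (u n).2 + 1 := by
      intro n hn
      have hn' : u' n = (update (u n).1 (u n).2 (pick k t n), (u n).2 + 1) := by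
        simp only [hu', if_pos hn]
      rw [hn']
      exact ⟨update_mem_cylinder _ _ _, rfl⟩
    have h2 : ∀ n, k < n → u' n = u n := by
      intro n hn
      simp only [hu', if_neg (by omega : ¬ n ≤ k)]
    have := h u' h1 h2
    convert this using 2 with n
    by_cases hn : n ≤ k <;> simp [hu', hn]
  choose B hBmeas hBsub hBempty using H
  refine ⟨fun n => if n ≤ k then ⋃ i, ⋂ t, ⋂ (_ : pick k t n = i), B t n else ⋂ t, B t n,
    ?_, ?_, ?_⟩
  · intro n
    dsimp only
    by_cases hn : n ≤ k
    · rw [if_pos hn]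
      exact MeasurableSet.iUnion fun i => MeasurableSet.iInter fun t =>
        MeasurableSet.iInter fun _ => hBmeas t n
    · rw [if_neg hn]
      exact MeasurableSet.iInter fun t => hBmeas t n
  · intro n
    dsimp only
    by_cases hn : n ≤ k
    · rw [if_pos hn]
      have : f n '' cylinder (u n).1 (u n).2
          = ⋃ i, f n '' cylinder (update (u n).1 (u n).2 i) ((u n).2 + 1) := by
        rw [← image_iUnion]
        exact congrArg (f n '' ·) (iUnion_cylinder_update (u n).1 (u n).2).symm
      rw [this]
      refine iUnion_subset fun i => ?_
      refine subset_iUnion_of_subset i ?_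
      refine subset_iInter fun t => subset_iInter fun ht => ?_
      have := hBsub t n
      dsimp only at this
      rw [if_pos hn, if_pos hn, ht] at this
      exact this
    · rw [if_neg hn]
      refine subset_iInter fun t => ?_
      have := hBsub t n
      dsimp only at this
      rw [if_neg hn, if_neg hn] at this
      exact this
  · by_contra hne
    rw [← Ne, ← nonempty_iff_ne_empty] at hne
    obtain ⟨x, hx⟩ := hne
    simp only [mem_iInter] at hx
    have hxn : ∀ n : Fin (k + 1), ∃ i, x ∈ ⋂ t, ⋂ (_ : pick k t (n : ℕ) = i), B t (n : ℕ) := by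
      intro n
      have := hx (n : ℕ)
      try dsimp only at this
      rw [if_pos (by omega : (n : ℕ) ≤ k)] at this
      exact mem_iUnion.1 this
    choose tstar htstar using hxn
    have hfin : ∀ n : ℕ, x ∈ B tstar n := by
      intro n
      by_cases hn : n ≤ k
      · have := htstar ⟨n, by omega⟩
        simp only [mem_iInter] at this
        exact this tstar (by simp only [pick, dif_pos (show n < k + 1 by omega)])
      · have := hx n
        try dsimp only at this
        rw [if_neg hn] at this
        simp only [mem_iInter] at this
        exact this tstar
    have := hBempty tstar
    rw [eq_empty_iff_forall_notMem] at this
    exact this x (mem_iInter.2 hfin)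

theorem novikov_ranges (f : ℕ → (ℕ → ℕ) → α) (hf : ∀ n, Continuous (f n))
    (h : ¬ CoSep (fun n => range (f n))) : ∃ a, ∀ n, a ∈ range (f n) := by
  classical
  -- iterate the step lemma
  let T := {v : ℕ → (ℕ → ℕ) × ℕ // ¬ CoSep (fun n => f n '' cylinder (v n).1 (v n).2)}
  have h0 : ¬ CoSep (fun n => f n '' cylinder (fun _ => 0 : ℕ → ℕ) 0) := by
    have he : (fun n => f n '' cylinder (fun _ => 0 : ℕ → ℕ) 0) = fun n => range (f n) := by
      funext n
      rw [cylinder_zero, image_univ]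
    rw [he]
    exact h
  let p0 : T := ⟨fun _ => ((fun _ => 0 : ℕ → ℕ), 0), h0⟩
  let G : ∀ k : ℕ, T → T := fun k v =>
    ⟨(step f v.1 v.2 k).choose, (step f v.1 v.2 k).choose_spec.2.2⟩
  let p : ℕ → T := fun k => Nat.rec p0 (fun k pk => G k pk) k
  have prec : ∀ k, p (k + 1) = G k (p k) := fun k => rfl
  have hstep1 : ∀ k n, n ≤ k → ((p (k+1)).1 n).1 ∈ cylinder ((p k).1 n).1 ((p k).1 n).2 ∧
      ((p (k+1)).1 n).2 = ((p k).1 n).2 + 1 := by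
    intro k n hn
    exact (step f (p k).1 (p k).2 k).choose_spec.1 n hn
  have hstep2 : ∀ k n, k < n → (p (k+1)).1 n = (p k).1 n := by
    intro k n hn
    exact (step f (p k).1 (p k).2 k).choose_spec.2.1 n hn
  -- lengths
  have hlen : ∀ k n, ((p k).1 n).2 = k - n := by
    intro k
    induction k with
    | zero =>
      intro n
      have : ((p 0).1 n).2 = 0 := rfl
      omega
    | succ k IH =>
      intro n
      by_cases hn : n ≤ k
      · rw [(hstep1 k n hn).2, IH n]
        omega
      · rw [hstep2 k n (by omega), IH n]
        omega
  -- coordinates stabilize; define the limit points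
  let x : ℕ → ℕ → ℕ := fun n m => ((p (n + m + 1)).1 n).1 m
  have hstab : ∀ k n m, m < k - n → ((p k).1 n).1 m = x n m := by
    intro k
    induction k with
    | zero => intro n m hm; omega
    | succ k IH =>
      intro n m hm
      by_cases hn : n ≤ k
      · have hcyl := (hstep1 k n hn).1
        rw [mem_cylinder_iff] at hcyl
        by_cases hmk : m < k - n
        · rw [hcyl m (by rw [hlen]; omega), IH n m hmk]
        · -- m = k - n : the newly fixed coordinate
          have hm' : m = k - n := by omega
          have : n + m + 1 = k + 1 := by omega
          show ((p (k+1)).1 n).1 m = ((p (n + m + 1)).1 n).1 m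
          rw [this]
      · rw [hstep2 k n (by omega)]
        have : n + m + 1 = k + 1 := by omega
        have h2 : m < k - n := by omega
        exact absurd h2 (by omega)
  -- cylinders around the limit points are still not co-separated
  have hM : ∀ k, ¬ CoSep (fun n => f n '' cylinder (x n) (k - n)) := by
    intro k
    have := (p k).2
    convert this using 3 with n
    rw [hlen k n]
    have : cylinder ((p k).1 n).1 (k - n) = cylinder (x n) (k - n) := by
      rw [← mem_cylinder_iff_eq, mem_cylinder_iff]
      intro i hi
      exact (hstab k n i hi)
    rw [this]
  -- all the limit values agree
  have key : ∀ n m, f n (x n) = f m (x m) := by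
    intro n m
    by_contra hne
    obtain ⟨U, V, hU, hV, hxU, hxV, hUV⟩ := t2_separation hne
    letI : MetricSpace (ℕ → ℕ) := metricSpaceNatNat
    obtain ⟨εn, hεn, hballn⟩ : ∃ ε > 0, Metric.ball (x n) ε ⊆ f n ⁻¹' U :=
      Metric.mem_nhds_iff.1 ((hf n).continuousAt.preimage_mem_nhds (hU.mem_nhds hxU))
    obtain ⟨εm, hεm, hballm⟩ : ∃ ε > 0, Metric.ball (x m) ε ⊆ f m ⁻¹' V :=
      Metric.mem_nhds_iff.1 ((hf m).continuousAt.preimage_mem_nhds (hV.mem_nhds hxV))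
    obtain ⟨l, hl⟩ : ∃ l : ℕ, (1 / 2 : ℝ) ^ l < min εn εm :=
      exists_pow_lt_of_lt_one (lt_min hεn hεm) (by norm_num)
    set k := n + m + l + 1 with hk
    apply hM k
    refine ⟨fun j => if j = n then U else if j = m then V else univ, ?_, ?_, ?_⟩
    · intro j
      dsimp only
      by_cases h1 : j = n
      · rw [if_pos h1]; exact hU.measurableSet
      · rw [if_neg h1]
        by_cases h2 : j = m
        · rw [if_pos h2]; exact hV.measurableSet
        · rw [if_neg h2]; exact MeasurableSet.univ
    · intro j
      dsimp only
      by_cases h1 : j = n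
      · subst h1
        rw [if_pos rfl, image_subset_iff]
        refine Subset.trans ?_ hballn
        intro z hz
        rw [mem_cylinder_iff_dist_le] at hz
        have : dist z (x j) ≤ (1/2 : ℝ) ^ (k - j) := hz
        have h2 : (1/2 : ℝ) ^ (k - j) ≤ (1/2 : ℝ) ^ l := by
          apply pow_le_pow_of_le_one (by norm_num) (by norm_num)
          omega
        exact Metric.mem_ball.2 (lt_of_le_of_lt (le_trans this h2)
          (lt_of_lt_of_le hl (min_le_left _ _)))
      · rw [if_neg h1]
        by_cases h2 : j = m
        · subst h2
          rw [if_pos rfl, image_subset_iff]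
          refine Subset.trans ?_ hballm
          intro z hz
          rw [mem_cylinder_iff_dist_le] at hz
          have : dist z (x j) ≤ (1/2 : ℝ) ^ (k - j) := hz
          have h3 : (1/2 : ℝ) ^ (k - j) ≤ (1/2 : ℝ) ^ l := by
            apply pow_le_pow_of_le_one (by norm_num) (by norm_num)
            omega
          exact Metric.mem_ball.2 (lt_of_le_of_lt (le_trans this h3)
            (lt_of_lt_of_le hl (min_le_right _ _)))
        · rw [if_neg h2]; exact subset_univ _
    · apply eq_empty_iff_forall_notMem.2
      intro z hz
      rw [mem_iInter] at hz
      have hzn := hz n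
      have hzm := hz m
      try dsimp only at hzn hzm
      rw [if_pos rfl] at hzn
      have hnm : ¬ (m = n) := fun hh => hne (by rw [hh])
      rw [if_neg hnm, if_pos rfl] at hzm
      exact (disjoint_left.1 hUV) hzn hzm
  exact ⟨f 0 (x 0), fun n => by rw [key 0 n]; exact mem_range_self _⟩

/-- **Novikov separation theorem**: countably many analytic sets with empty intersection
can be enlarged to Borel sets with empty intersection. -/
theorem novikov [Nonempty α] {A : ℕ → Set α} (hA : ∀ n, AnalyticSet (A n))
    (hi : (⋂ n, A n) = ∅) :
    ∃ B : ℕ → Set α, (∀ n, MeasurableSet (B n)) ∧ (∀ n, A n ⊆ B n) ∧ (⋂ n, B n) = ∅ := by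
  classical
  by_cases hemp : ∃ n₀, A n₀ = ∅
  · obtain ⟨n₀, hn₀⟩ := hemp
    refine ⟨fun n => if n = n₀ then ∅ else univ, fun n => ?_, fun n => ?_, ?_⟩
    · by_cases h : n = n₀ <;> simp [h]
    · by_cases h : n = n₀ <;> simp [h, hn₀]
    · apply eq_empty_iff_forall_notMem.2
      intro z hz
      rw [mem_iInter] at hz
      have := hz n₀
      simp at this
  · push_neg at hemp
    have hrep : ∀ n, ∃ f : (ℕ → ℕ) → α, Continuous f ∧ range f = A n := by
      intro n
      have := hA n
      rw [AnalyticSet_def] at this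
      rcases this with h | h
      · exact absurd h (nonempty_iff_ne_empty.1 (hemp n))
      · exact h
    choose f hfc hfr using hrep
    by_contra hB
    have : ¬ CoSep (fun n => range (f n)) := by
      intro ⟨B, h1, h2, h3⟩
      exact hB ⟨B, h1, fun n => by rw [← hfr n]; exact h2 n, h3⟩
    obtain ⟨a, ha⟩ := novikov_ranges f hfc this
    have : a ∈ ⋂ n, A n := mem_iInter.2 fun n => by rw [← hfr n]; exact ha n
    rw [hi] at this
    exact this

section Proj

variable {X : Type*} [TopologicalSpace X] [PolishSpace X] [MeasurableSpace X] [BorelSpace X]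

theorem anal_union {β : Type*} [TopologicalSpace β] [T2Space β] {s t : Set β}
    (hs : AnalyticSet s) (ht : AnalyticSet t) : AnalyticSet (s ∪ t) := by
  rw [Set.union_eq_iUnion]
  exact AnalyticSet.iUnion (fun b => by cases b <;> simpa)

theorem anal_inter {β : Type*} [TopologicalSpace β] [T2Space β] {s t : Set β}
    (hs : AnalyticSet s) (ht : AnalyticSet t) : AnalyticSet (s ∩ t) := by
  rw [Set.inter_eq_iInter]
  exact AnalyticSet.iInter (fun b => by cases b <;> simpa)

/-- `A` has at most `m` points in every vertical section. -/
def SecLE (m : ℕ) (A : Set (X × ℝ)) : Prop :=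
  ∀ x (v : Fin (m + 1) → ℝ), (∀ i, (x, v i) ∈ A) → ¬ Function.Injective v

theorem SecLE.mono {k l : ℕ} (h : k ≤ l) {A : Set (X × ℝ)} (hA : SecLE k A) : SecLE l A := by
  intro x v hv hinj
  exact hA x (v ∘ Fin.castLE (by omega)) (fun i => hv _)
    (hinj.comp (Fin.castLE_injective _))

theorem SecLE.subset {m : ℕ} {A B : Set (X × ℝ)} (hAB : A ⊆ B) (hB : SecLE m B) : SecLE m A :=
  fun x v hv hinj => hB x v (fun i => hAB (hv i)) hinj

/-- Lusin–Souslin: projection of a Borel set with subsingleton sections is Borel. -/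
theorem proj_meas_of_secLE_one {A : Set (X × ℝ)} (hA : MeasurableSet A) (h1 : SecLE 1 A) :
    MeasurableSet (Prod.fst '' A) := by
  apply hA.image_of_continuousOn_injOn continuous_fst.continuousOn
  intro p hp q hq hpq
  have h2 : p.2 = q.2 := by
    by_contra hne
    apply h1 p.1 (fun i : Fin 2 => if i = 0 then p.2 else q.2)
    · intro i
      by_cases hi : i = 0
      · simp only [hi, if_pos]
        exact hp
      · simp only [if_neg hi]
        have : (p.1, q.2) = q := by
          rw [Prod.ext_iff]
          exact ⟨hpq, rfl⟩
        rw [this]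
        exact hq
    · intro a b hab
      dsimp only at hab
      by_cases ha : a = 0 <;> by_cases hb : b = 0
      · rw [ha, hb]
      · rw [if_pos ha, if_neg hb] at hab; exact absurd hab hne
      · rw [if_neg ha, if_pos hb] at hab; exact absurd hab.symm hne
      · have ha1 : a = 1 := by
          apply Fin.ext
          have h1 := a.isLt
          have h2 : (a : ℕ) ≠ 0 := fun h => ha (Fin.ext h)
          show (a : ℕ) = (1 : ℕ) % (1 + 1)
          omega
        have hb1 : b = 1 := by
          apply Fin.ext
          have h1 := b.isLt
          have h2 : (b : ℕ) ≠ 0 := fun h => hb (Fin.ext h)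
          show (b : ℕ) = (1 : ℕ) % (1 + 1)
          omega
        rw [ha1, hb1]
  exact Prod.ext hpq h2

/-- the set of `x` whose section contains `k` distinct points, as a set. -/
def BigSet (k : ℕ) (A : Set (X × ℝ)) : Set X :=
  {x : X | ∃ v : Fin k → ℝ, Function.Injective v ∧ ∀ i, (x, v i) ∈ A}

theorem analyticSet_bigSet {A : Set (X × ℝ)} (hA : MeasurableSet A) (k : ℕ) :
    AnalyticSet (BigSet k A) := by
  have hW : MeasurableSet {q : X × (Fin k → ℝ) |
      Function.Injective q.2 ∧ ∀ i, (q.1, q.2 i) ∈ A} := by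
    have e1 : {q : X × (Fin k → ℝ) | Function.Injective q.2 ∧ ∀ i, (q.1, q.2 i) ∈ A} =
        {q : X × (Fin k → ℝ) | Function.Injective q.2} ∩
        {q : X × (Fin k → ℝ) | ∀ i, (q.1, q.2 i) ∈ A} := rfl
    rw [e1]
    apply MeasurableSet.inter
    · have : {q : X × (Fin k → ℝ) | Function.Injective q.2}
          = ⋂ (i) (j) (_ : i ≠ j), {q : X × (Fin k → ℝ) | q.2 i ≠ q.2 j} := by
        ext q
        simp only [mem_setOf_eq, mem_iInter]
        constructor
        · intro hq i j hij
          exact fun he => hij (hq he)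
        · intro hq a b hab
          by_contra hne
          exact hq a b hne hab
      rw [this]
      refine MeasurableSet.iInter fun i => MeasurableSet.iInter fun j =>
        MeasurableSet.iInter fun hij => ?_
      exact (measurableSet_eq_fun ((measurable_pi_apply i).comp measurable_snd)
        ((measurable_pi_apply j).comp measurable_snd)).compl
    · have e2 : {q : X × (Fin k → ℝ) | ∀ i, (q.1, q.2 i) ∈ A} =
          ⋂ i, (fun q : X × (Fin k → ℝ) => (q.1, q.2 i)) ⁻¹' A := by
        ext q
        simp only [mem_setOf_eq, mem_iInter, mem_preimage]
      rw [e2]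
      refine MeasurableSet.iInter fun i => ?_
      exact (measurable_fst.prodMk ((measurable_pi_apply i).comp measurable_snd)) hA
  have : BigSet k A = Prod.fst '' {q : X × (Fin k → ℝ) |
      Function.Injective q.2 ∧ ∀ i, (q.1, q.2 i) ∈ A} := by
    ext x
    simp only [BigSet, mem_setOf_eq, mem_image, Prod.exists]
    constructor
    · rintro ⟨v, hv1, hv2⟩
      exact ⟨x, v, ⟨hv1, hv2⟩, rfl⟩
    · rintro ⟨x', v, ⟨hv1, hv2⟩, rfl⟩
      exact ⟨v, hv1, hv2⟩
  rw [this]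
  exact hW.analyticSet.image_of_continuous continuous_fst

theorem bigSet_in_secLE {m : ℕ} {A : Set (X × ℝ)} {x : X} (hx : x ∉ BigSet (m + 1) A) :
    ∀ v : Fin (m + 1) → ℝ, (∀ i, (x, v i) ∈ A) → ¬ Function.Injective v := by
  intro v hv hinj
  exact hx ⟨v, hinj, hv⟩

/-- Projection of a Borel subset of `X × ℝ` with uniformly bounded finite sections is Borel. -/
theorem proj_meas_of_bdd : ∀ (m : ℕ) {A : Set (X × ℝ)}, MeasurableSet A → SecLE m A →
    MeasurableSet (Prod.fst '' A) := by
  intro m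
  induction m with
  | zero =>
    intro A hA h0
    have : A = ∅ := by
      ext p
      simp only [mem_empty_iff_false, iff_false]
      intro hp
      refine h0 p.1 (fun _ => p.2) (fun _ => hp) (fun a b _ => ?_)
      apply Fin.ext
      have h1 := a.isLt
      have h2 := b.isLt
      omega
    rw [this, image_empty]
    exact MeasurableSet.empty
  | succ m IH =>
    intro A hA hsec
    rcases Nat.eq_zero_or_pos m with rfl | hm
    · exact proj_meas_of_secLE_one hA hsec
    -- the splitting machinery
    classical
    set J := (ℚ × ℚ × ℚ × ℚ) with hJ
    let cond : J → Prop := fun j => j.2.1 ≤ j.2.2.1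
    let II : J → Set ℝ := fun j => Ioo (j.1 : ℝ) (j.2.1 : ℝ)
    let JJ : J → Set ℝ := fun j => Ioo (j.2.2.1 : ℝ) (j.2.2.2 : ℝ)
    let AI : J → Set (X × ℝ) := fun j => A ∩ {p | p.2 ∈ II j}
    let AJ : J → Set (X × ℝ) := fun j => A ∩ {p | p.2 ∈ JJ j}
    let AIc : J → Set (X × ℝ) := fun j => A ∩ {p | p.2 ∉ II j}
    have hAI : ∀ j, MeasurableSet (AI j) := fun j =>
      hA.inter (measurable_snd measurableSet_Ioo)
    have hAJ : ∀ j, MeasurableSet (AJ j) := fun j =>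
      hA.inter (measurable_snd measurableSet_Ioo)
    have hAIc : ∀ j, MeasurableSet (AIc j) := fun j =>
      hA.inter (measurable_snd measurableSet_Ioo.compl)
    let P : J → Set X := fun j => (Prod.fst '' AI j) ∩ (Prod.fst '' AJ j)
    let Bad : J → Set X := fun j => BigSet (m + 1) (AI j) ∪ BigSet (m + 1) (AIc j)
    have hPanal : ∀ j, AnalyticSet (P j) := by
      intro j
      exact anal_inter ((hAI j).analyticSet.image_of_continuous continuous_fst)
        ((hAJ j).analyticSet.image_of_continuous continuous_fst)
    have hBadanal : ∀ j, AnalyticSet (Bad j) := fun j =>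
      anal_union (analyticSet_bigSet (hAI j) (m + 1)) (analyticSet_bigSet (hAIc j) (m + 1))
    -- disjointness of P j and Bad j, given cond j
    have hdisj : ∀ j, cond j → Disjoint (P j) (Bad j) := by
      intro j hcond
      rw [disjoint_left]
      rintro x ⟨⟨p1, hp1, hp1x⟩, ⟨p2, hp2, hp2x⟩⟩ hbad
      obtain ⟨hp1A, hp1I⟩ := hp1
      obtain ⟨hp2A, hp2J⟩ := hp2
      -- p1.2 ∈ II j, p2.2 ∈ JJ j and they are different
      have hlt : p1.2 < p2.2 := lt_of_lt_of_le hp1I.2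
        (le_trans (by exact_mod_cast hcond) (le_of_lt hp2J.1))
      have hp2nI : p2.2 ∉ II j := by
        intro hmem
        exact absurd hmem.2 (not_lt.2 (le_trans (by exact_mod_cast hcond) (le_of_lt hp2J.1)))
      rcases hbad with ⟨v, hvinj, hvmem⟩ | ⟨v, hvinj, hvmem⟩
      · -- v i ∈ II j all, and p2.2 ∉ II j : m+2 points
        apply hsec x (Fin.cons p2.2 v)
        · intro i
          refine Fin.cases ?_ ?_ i
          · rw [Fin.cons_zero]
            have : (x, p2.2) = p2 := by
              rw [Prod.ext_iff]; exact ⟨hp2x.symm, rfl⟩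
            rw [this]; exact hp2A
          · intro i'
            rw [Fin.cons_succ]
            have := (hvmem i').1
            have he : (x, v i') = (p1.1, v i') := by rw [hp1x]
            rw [← hp1x] at this ⊢
            exact this
        · rw [Fin.cons_injective_iff]
          constructor
          · rintro ⟨i', hi'⟩
            exact hp2nI (hi' ▸ (hvmem i').2)
          · exact hvinj
      · -- v i ∉ II j all, and p1.2 ∈ II j
        apply hsec x (Fin.cons p1.2 v)
        · intro i
          refine Fin.cases ?_ ?_ i
          · rw [Fin.cons_zero]
            have : (x, p1.2) = p1 := by
              rw [Prod.ext_iff]; exact ⟨hp1x.symm, rfl⟩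
            rw [this]; exact hp1A
          · intro i'
            rw [Fin.cons_succ]
            rw [← hp1x] at *
            exact (hvmem i').1
        · rw [Fin.cons_injective_iff]
          constructor
          · rintro ⟨i', hi'⟩
            exact (hvmem i').2 (hi' ▸ hp1I)
          · exact hvinj
    -- Lusin separation
    have hsepex : ∀ j : J, ∃ u : Set X,
        (cond j → (P j ⊆ u ∧ Disjoint (Bad j) u)) ∧ MeasurableSet u := by
      intro j
      by_cases hcond : cond j
      · obtain ⟨u, hu1, hu2, hu3⟩ :=
          (hPanal j).measurablySeparable (hBadanal j) (hdisj j hcond)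
        exact ⟨u, fun _ => ⟨hu1, hu2⟩, hu3⟩
      · exact ⟨∅, fun h => absurd h hcond, MeasurableSet.empty⟩
    choose B hB hBmeas using hsepex
    let Bu : Set X := ⋃ (j) (_ : cond j), B j
    have hBu : MeasurableSet Bu :=
      MeasurableSet.iUnion fun j => MeasurableSet.iUnion fun _ => hBmeas j
    -- decomposition of the projection
    have hdecomp : Prod.fst '' A =
        (Prod.fst '' (A ∩ {p | p.1 ∉ Bu})) ∪
        ⋃ (j) (_ : cond j),
          (Prod.fst '' (AI j ∩ {p | p.1 ∈ B j}) ∪ Prod.fst '' (AIc j ∩ {p | p.1 ∈ B j})) := by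
      apply Subset.antisymm
      · rintro x ⟨p, hpA, rfl⟩
        by_cases hxB : p.1 ∈ Bu
        · right
          obtain ⟨j, hcond, hxj⟩ : ∃ j, cond j ∧ p.1 ∈ B j := by
            simpa [Bu, mem_iUnion] using hxB
          refine mem_iUnion.2 ⟨j, mem_iUnion.2 ⟨hcond, ?_⟩⟩
          by_cases hyI : p.2 ∈ II j
          · exact Or.inl ⟨p, ⟨⟨hpA, hyI⟩, hxj⟩, rfl⟩
          · exact Or.inr ⟨p, ⟨⟨hpA, hyI⟩, hxj⟩, rfl⟩
        · exact Or.inl ⟨p, ⟨hpA, hxB⟩, rfl⟩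
      · rintro x (⟨p, ⟨hpA, _⟩, rfl⟩ | hx)
        · exact ⟨p, hpA, rfl⟩
        · simp only [mem_iUnion, mem_union] at hx
          obtain ⟨j, hcond, (⟨p, ⟨⟨hpA, _⟩, _⟩, rfl⟩ | ⟨p, ⟨⟨hpA, _⟩, _⟩, rfl⟩)⟩ := hx <;>
            exact ⟨p, hpA, rfl⟩
    rw [hdecomp]
    apply MeasurableSet.union
    · -- sections outside Bu are subsingletons
      apply proj_meas_of_secLE_one (hA.inter (hBu.compl.preimage measurable_fst))
      intro x v hv hinj
      have hxBu : x ∉ Bu := (hv 0).2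
      -- two distinct points
      have h01 : v 0 ≠ v 1 := by
        intro h
        have h2 := hinj h
        rw [Fin.ext_iff] at h2
        simp at h2
      -- wlog ordering
      rcases lt_or_gt_of_ne h01 with hlt | hlt
      case _ =>
        obtain ⟨b, hb1, hb2⟩ := exists_rat_btwn hlt
        obtain ⟨a, ha⟩ := exists_rat_lt (v 0)
        obtain ⟨d, hd⟩ := exists_rat_gt (v 1)
        have : x ∈ P (a, b, b, d) := by
          refine ⟨⟨(x, v 0), ⟨(hv 0).1, ha, hb1⟩, rfl⟩, ⟨(x, v 1), ⟨(hv 1).1, hb2, hd⟩, rfl⟩⟩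
        have hcond : cond (a, b, b, d) := le_refl _
        exact hxBu (mem_iUnion.2 ⟨(a, b, b, d), mem_iUnion.2 ⟨hcond, (hB _ hcond).1 this⟩⟩)
      case _ =>
        obtain ⟨b, hb1, hb2⟩ := exists_rat_btwn hlt
        obtain ⟨a, ha⟩ := exists_rat_lt (v 1)
        obtain ⟨d, hd⟩ := exists_rat_gt (v 0)
        have : x ∈ P (a, b, b, d) := by
          refine ⟨⟨(x, v 1), ⟨(hv 1).1, ha, hb1⟩, rfl⟩, ⟨(x, v 0), ⟨(hv 0).1, hb2, hd⟩, rfl⟩⟩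
        have hcond : cond (a, b, b, d) := le_refl _
        exact hxBu (mem_iUnion.2 ⟨(a, b, b, d), mem_iUnion.2 ⟨hcond, (hB _ hcond).1 this⟩⟩)
    · refine MeasurableSet.iUnion fun j => MeasurableSet.iUnion fun hcond => ?_
      have hBj : MeasurableSet (B j) := hBmeas j
      apply MeasurableSet.union
      · apply IH ((hAI j).inter (hBj.preimage measurable_fst))
        intro x v hv hinj
        have hxB : x ∈ B j := (hv 0).2
        have hxBig : x ∈ BigSet (m + 1) (AI j) := ⟨v, hinj, fun i => (hv i).1⟩
        exact (disjoint_left.1 (hB j hcond).2) (Or.inl hxBig) hxB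
      · apply IH ((hAIc j).inter (hBj.preimage measurable_fst))
        intro x v hv hinj
        have hxB : x ∈ B j := (hv 0).2
        have hxBig : x ∈ BigSet (m + 1) (AIc j) := ⟨v, hinj, fun i => (hv i).1⟩
        exact (disjoint_left.1 (hB j hcond).2) (Or.inr hxBig) hxB

end Proj

section Fin2

variable {X : Type*} [TopologicalSpace X] [PolishSpace X] [MeasurableSpace X] [BorelSpace X]

/-- Projection of a Borel subset of `X × ℝ` with finite sections is Borel. -/
theorem proj_meas_of_finite {A : Set (X × ℝ)} (hA : MeasurableSet A)
    (hfin : ∀ x, {y : ℝ | (x, y) ∈ A}.Finite) : MeasurableSet (Prod.fst '' A) := by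
  classical
  rcases isEmpty_or_nonempty X with hX | hX
  · have : Prod.fst '' A ⊆ ∅ := fun x _ => isEmptyElim x
    rw [subset_empty_iff.1 this]
    exact MeasurableSet.empty
  have hY : ∀ k, AnalyticSet (BigSet k A) := fun k => analyticSet_bigSet hA k
  have hYempty : (⋂ k, BigSet k A) = ∅ := by
    apply eq_empty_iff_forall_notMem.2
    intro x hx
    rw [mem_iInter] at hx
    obtain ⟨v, hvinj, hvmem⟩ := hx ((hfin x).toFinset.card + 1)
    have hsub : (Finset.univ.image v) ⊆ (hfin x).toFinset := by
      intro y hy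
      obtain ⟨i, _, rfl⟩ := Finset.mem_image.1 hy
      rw [Set.Finite.mem_toFinset]
      exact hvmem i
    have hcard := Finset.card_le_card hsub
    rw [Finset.card_image_of_injective _ hvinj, Finset.card_univ, Fintype.card_fin] at hcard
    omega
  obtain ⟨B, hBmeas, hBsub, hBempty⟩ := novikov hY hYempty
  have hdecomp : Prod.fst '' A = ⋃ k, Prod.fst '' (A ∩ {p | p.1 ∈ (B (k + 1))ᶜ}) := by
    apply Subset.antisymm
    · rintro x ⟨p, hpA, rfl⟩
      obtain ⟨k, hk⟩ : ∃ k, p.1 ∉ B k := by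
        by_contra hco
        push_neg at hco
        have : p.1 ∈ ⋂ k, B k := mem_iInter.2 hco
        rw [hBempty] at this
        exact this
      have hk0 : k ≠ 0 := by
        intro h0
        apply hk
        rw [h0]
        apply hBsub 0
        exact ⟨fun i => i.elim0, fun a b h => a.elim0, fun i => i.elim0⟩
      obtain ⟨k', rfl⟩ : ∃ k', k = k' + 1 := ⟨k - 1, by omega⟩
      exact mem_iUnion.2 ⟨k', ⟨p, ⟨hpA, hk⟩, rfl⟩⟩
    · refine iUnion_subset fun k => ?_
      rintro x ⟨p, ⟨hpA, _⟩, rfl⟩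
      exact ⟨p, hpA, rfl⟩
  rw [hdecomp]
  refine MeasurableSet.iUnion fun k => ?_
  apply proj_meas_of_bdd k (hA.inter ((hBmeas (k + 1)).compl.preimage measurable_fst))
  intro x v hv hinj
  have hx : x ∉ B (k + 1) := (hv 0).2
  exact hx (hBsub (k + 1) ⟨v, hinj, fun i => (hv i).1⟩)

theorem secLE_one_of_subsingleton {A : Set (X × ℝ)}
    (h1 : ∀ x, {y : ℝ | (x, y) ∈ A}.Subsingleton) : SecLE 1 A := by
  intro x v hv hinj
  have h2 := h1 x (hv 0) (hv 1)
  have := hinj h2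
  rw [Fin.ext_iff] at this
  simp at this

/-- Borel selection from a Borel graph. -/
theorem graph_selection {Γ : Set (X × ℝ)} (hΓ : MeasurableSet Γ)
    (h1 : ∀ x, {y : ℝ | (x, y) ∈ Γ}.Subsingleton) :
    ∃ τ : X → ℝ, Measurable τ ∧ ∀ x, (∃ y, (x, y) ∈ Γ) → (x, τ x) ∈ Γ := by
  classical
  refine ⟨fun x => if h : ∃ y, (x, y) ∈ Γ then h.choose else 0, ?_, ?_⟩
  · apply measurable_of_Ioi
    intro c
    have hkey : (fun x => if h : ∃ y, (x, y) ∈ Γ then h.choose else 0) ⁻¹' Ioi c =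
        Prod.fst '' (Γ ∩ {p | c < p.2}) ∪
          (if c < 0 then (Prod.fst '' Γ)ᶜ else ∅) := by
      ext x
      simp only [mem_preimage, mem_Ioi, mem_union]
      by_cases h : ∃ y, (x, y) ∈ Γ
      · rw [dif_pos h]
        constructor
        · intro hc
          exact Or.inl ⟨(x, h.choose), ⟨h.choose_spec, hc⟩, rfl⟩
        · rintro (⟨p, ⟨hpΓ, hpc⟩, rfl⟩ | hbad)
          · have hpe : p ∈ Γ := hpΓ
            have hsec : p.2 ∈ {y : ℝ | (p.1, y) ∈ Γ} := by
              show (p.1, p.2) ∈ Γ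
              rw [Prod.mk.eta]
              exact hpe
            have hce : h.choose ∈ {y : ℝ | (p.1, y) ∈ Γ} := h.choose_spec
            have := h1 p.1 hsec hce
            rw [← this]
            exact hpc
          · by_cases hc : c < 0
            · rw [if_pos hc] at hbad
              exact absurd ⟨(x, h.choose), h.choose_spec, rfl⟩ hbad
            · rw [if_neg hc] at hbad
              exact absurd hbad (notMem_empty x)
      · rw [dif_neg h]
        constructor
        · intro hc
          refine Or.inr ?_
          rw [if_pos hc]
          rintro ⟨p, hpΓ, rfl⟩
          apply h
          refine ⟨p.2, ?_⟩
          rw [Prod.mk.eta]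
          exact hpΓ
        · rintro (⟨p, ⟨hpΓ, _⟩, rfl⟩ | hbad)
          · exact absurd ⟨p.2, by rw [Prod.mk.eta]; exact hpΓ⟩ h
          · by_cases hc : c < 0
            · exact hc
            · rw [if_neg hc] at hbad
              exact absurd hbad (notMem_empty x)
    rw [hkey]
    apply MeasurableSet.union
    · apply proj_meas_of_secLE_one (hΓ.inter (measurable_snd measurableSet_Ioi))
      apply secLE_one_of_subsingleton
      intro x y1 hy1 y2 hy2
      exact h1 x hy1.1 hy2.1
    · by_cases hc : c < 0
      · rw [if_pos hc]
        exact (proj_meas_of_secLE_one hΓ (secLE_one_of_subsingleton h1)).compl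
      · rw [if_neg hc]
        exact MeasurableSet.empty
  · intro x h
    dsimp only
    rw [dif_pos h]
    exact h.choose_spec

/-- The main theorem in the case `K = ℝ`. -/
theorem real_case (G : X × ℝ → ℝ) (hGmeas : Measurable G) (hG0 : ∀ p, 0 ≤ G p)
    (C : ℝ) (hGbdd : ∀ p, G p ≤ C) (hsum : ∀ x, Summable fun y : ℝ => G (x, y)) :
    ∃ τ : X → ℝ, Measurable τ ∧ ∀ x, G (x, τ x) = ⨆ y : ℝ, G (x, y) := by
  classical
  have hbdd : ∀ x, BddAbove (range fun y : ℝ => G (x, y)) := by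
    intro x
    exact ⟨C, by rintro r ⟨y, rfl⟩; exact hGbdd (x, y)⟩
  set S : X → ℝ := fun x => ⨆ y : ℝ, G (x, y) with hS
  have hGleS : ∀ x y, G (x, y) ≤ S x := fun x y => le_ciSup (hbdd x) y
  have hS0 : ∀ x, 0 ≤ S x := fun x => le_trans (hG0 (x, 0)) (hGleS x 0)
  have hfin : ∀ (x : X) (q : ℝ), 0 < q → {y : ℝ | q ≤ G (x, y)}.Finite := by
    intro x q hq
    have h1 : ∀ᶠ y in Filter.cofinite, G (x, y) < q :=
      (hsum x).tendsto_cofinite_zero (Iio_mem_nhds hq)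
    have h2 : {y : ℝ | ¬ G (x, y) < q}.Finite := Filter.eventually_cofinite.1 h1
    exact h2.subset fun y hy => not_lt.2 hy
  have hattain : ∀ x, 0 < S x → ∃ y, G (x, y) = S x := by
    intro x hSx
    obtain ⟨y0, hy0⟩ : ∃ y0 : ℝ, S x / 2 < G (x, y0) := exists_lt_of_lt_ciSup (by linarith)
    have hT : {y : ℝ | S x / 2 ≤ G (x, y)}.Finite := hfin x _ (by linarith)
    obtain ⟨ym, hymT, hmax⟩ := Set.Finite.exists_maximalFor (fun y => G (x, y)) _ hT
      ⟨y0, le_of_lt hy0⟩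
    refine ⟨ym, ?_⟩
    rcases eq_or_lt_of_le (hGleS x ym) with he | hlt
    · exact he
    · obtain ⟨y', hy'⟩ : ∃ y', G (x, ym) < G (x, y') := exists_lt_of_lt_ciSup hlt
      have hy'T : y' ∈ {y : ℝ | S x / 2 ≤ G (x, y)} := le_trans hymT (le_of_lt hy')
      exact absurd (hmax hy'T (le_of_lt hy')) (not_le.2 hy')
  have hSmeas : Measurable S := by
    apply measurable_of_Ioi
    intro c
    by_cases hc : c < 0
    · have : S ⁻¹' Ioi c = univ := by
        ext x
        simp only [mem_preimage, mem_Ioi, mem_univ, iff_true]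
        linarith [hS0 x]
      rw [this]
      exact MeasurableSet.univ
    · have : S ⁻¹' Ioi c = ⋃ (q : ℚ) (_ : c < (q : ℝ)) (_ : (0:ℝ) < (q : ℝ)),
          Prod.fst '' {p : X × ℝ | (q : ℝ) ≤ G p} := by
        ext x
        simp only [mem_preimage, mem_Ioi, mem_iUnion]
        constructor
        · intro hcS
          obtain ⟨y, hy⟩ : ∃ y : ℝ, c < G (x, y) := exists_lt_of_lt_ciSup hcS
          obtain ⟨q, hq1, hq2⟩ := exists_rat_btwn hy
          refine ⟨q, hq1, lt_of_le_of_lt (not_lt.1 hc) hq1, ⟨(x, y), le_of_lt hq2, rfl⟩⟩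
        · rintro ⟨q, hq1, hq2, ⟨p, hp, rfl⟩⟩
          calc c < (q : ℝ) := hq1
          _ ≤ G (p.1, p.2) := by rw [Prod.mk.eta]; exact hp
          _ ≤ S p.1 := hGleS p.1 p.2
      rw [this]
      refine MeasurableSet.iUnion fun q => MeasurableSet.iUnion fun hq1 =>
        MeasurableSet.iUnion fun hq2 => ?_
      apply proj_meas_of_finite (hGmeas measurableSet_Ici)
      intro x
      exact hfin x q hq2
  -- the maximizer set
  set M : Set (X × ℝ) := {p : X × ℝ | 0 < G p ∧ G p = S p.1} with hM
  have hMmeas : MeasurableSet M := by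
    apply MeasurableSet.inter
    · exact measurableSet_lt measurable_const hGmeas
    · exact measurableSet_eq_fun hGmeas (hSmeas.comp measurable_fst)
  have hMsec : ∀ x, {y : ℝ | (x, y) ∈ M} ⊆ {y : ℝ | S x ≤ G (x, y)} := by
    intro x y hy
    exact le_of_eq hy.2.symm
  have hMfin : ∀ x, {y : ℝ | (x, y) ∈ M}.Finite := by
    intro x
    rcases lt_or_ge 0 (S x) with hSx | hSx
    · exact ((hfin x (S x) hSx).subset (hMsec x))
    · have : {y : ℝ | (x, y) ∈ M} = ∅ := by
        apply eq_empty_iff_forall_notMem.2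
        intro y hy
        have := hy.1
        rw [hy.2] at this
        linarith
      rw [this]
      exact finite_empty
  -- the set of top maximizers
  set Mtop : Set (X × ℝ) := M ∩ ⋂ (q : ℚ), ({p : X × ℝ | (q : ℝ) < p.2} ∪
      {p : X × ℝ | p.1 ∉ Prod.fst '' (M ∩ {r : X × ℝ | (q : ℝ) < r.2})}) with hMtop
  have hMtopmeas : MeasurableSet Mtop := by
    apply hMmeas.inter
    refine MeasurableSet.iInter fun q => ?_
    apply MeasurableSet.union
    · exact measurable_snd measurableSet_Ioi
    · have hE : MeasurableSet (Prod.fst '' (M ∩ {r : X × ℝ | (q : ℝ) < r.2})) := by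
        apply proj_meas_of_finite (hMmeas.inter (measurable_snd measurableSet_Ioi))
        intro x
        exact (hMfin x).subset fun y hy => hy.1
      exact (hE.preimage measurable_fst).compl
  have hMtopsub : ∀ x, {y : ℝ | (x, y) ∈ Mtop}.Subsingleton := by
    intro x y1 hy1 y2 hy2
    by_contra hne
    -- wlog y1 < y2
    have key : ∀ z1 z2 : ℝ, (x, z1) ∈ Mtop → (x, z2) ∈ Mtop → z1 < z2 → False := by
      intro z1 z2 hz1 hz2 hlt
      obtain ⟨q, hq1, hq2⟩ := exists_rat_btwn hlt
      have h3 := hz1.2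
      rw [mem_iInter] at h3
      rcases h3 q with h4 | h4
      · exact absurd h4 (not_lt.2 (le_of_lt hq1))
      · exact h4 ⟨(x, z2), ⟨hz2.1, hq2⟩, rfl⟩
    rcases lt_or_gt_of_ne hne with h | h
    · exact key y1 y2 hy1 hy2 h
    · exact key y2 y1 hy2 hy1 h
  have hMtopproj : ∀ x, 0 < S x → ∃ y, (x, y) ∈ Mtop := by
    intro x hSx
    obtain ⟨ys, hys⟩ := hattain x hSx
    have hysM : (x, ys) ∈ M := ⟨by rw [hys]; exact hSx, hys⟩
    obtain ⟨ym, hymT, hmax⟩ := Set.Finite.exists_maximalFor (fun y => y) _ (hMfin x) ⟨ys, hysM⟩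
    refine ⟨ym, hymT, ?_⟩
    rw [mem_iInter]
    intro q
    by_cases hq : (q : ℝ) < ym
    · exact Or.inl hq
    · refine Or.inr ?_
      rintro ⟨p, ⟨hpM, hpq⟩, hpx⟩
      have hpx' : p.1 = x := hpx
      have hp2 : p.2 ∈ {y : ℝ | (x, y) ∈ M} := by
        show (x, p.2) ∈ M
        rw [← hpx', Prod.mk.eta]
        exact hpM
      have hymp : ym < p.2 := lt_of_le_of_lt (not_lt.1 hq) hpq
      have := hmax hp2 (le_of_lt hymp)
      exact absurd this (not_le.2 hymp)
  obtain ⟨τ, hτmeas, hτsel⟩ := graph_selection hMtopmeas hMtopsub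
  refine ⟨τ, hτmeas, ?_⟩
  intro x
  rcases lt_or_ge 0 (S x) with hSx | hSx
  · exact (hτsel x (hMtopproj x hSx)).1.2
  · have hS0x : S x = 0 := le_antisymm hSx (hS0 x)
    have h1 : G (x, τ x) ≤ 0 := by
      rw [← hS0x]
      exact hGleS x (τ x)
    show G (x, τ x) = S x
    rw [hS0x]
    exact le_antisymm h1 (hG0 _)

end Fin2

end BorelSel

/-- Borel selection of the supremum: let `X, K` be Polish spaces and `F : X × K → ℝ` a bounded
nonnegative Borel function such that for every `x` the set `{y : F(x,y) > 0}` is countable and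
`∑_y F(x,y) < ∞` (summability). Then there is a Borel map `t : X → K` with
`F(x, t x) = sup_y F(x,y)` for every `x`. -/
theorem borel_selection_of_sup (X K : Type*)
    [TopologicalSpace X] [PolishSpace X] [MeasurableSpace X] [BorelSpace X]
    [TopologicalSpace K] [PolishSpace K] [MeasurableSpace K] [BorelSpace K] [Nonempty K]
    (F : X × K → ℝ) (hFmeas : Measurable F) (hF0 : ∀ p, 0 ≤ F p)
    (C : ℝ) (hFbdd : ∀ p, F p ≤ C)
    (hcount : ∀ x : X, {y : K | 0 < F (x, y)}.Countable)
    (hsum : ∀ x : X, Summable fun y : K => F (x, y)) :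
    ∃ t : X → K, Measurable t ∧ ∀ x : X, F (x, t x) = ⨆ y : K, F (x, y) := by
  classical
  rcases isEmpty_or_nonempty X with hX | hX
  · exact ⟨fun _ => Classical.arbitrary K, measurable_const, fun x => isEmptyElim x⟩
  obtain ⟨g, hg⟩ := exists_measurableEmbedding_real K
  set e := hg.equivRange with he
  have hge : ∀ a : K, (e a : ℝ) = g a := by
    intro a
    simp [he, MeasurableEmbedding.equivRange, MeasurableEquiv.cast,
      MeasurableEmbedding.equivImage, MeasurableEquiv.Set.univ, Equiv.Set.image,
      Equiv.Set.imageOfInjOn]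
    rfl
  have hsymm2 : ∀ (y : K) (h : g y ∈ range g), e.symm ⟨g y, h⟩ = y := by
    intro y h
    have h1 : (⟨g y, h⟩ : range g) = e y := Subtype.ext (hge y).symm
    rw [h1, e.symm_apply_apply]
  set G : X × ℝ → ℝ := fun p =>
    if h : p ∈ {q : X × ℝ | q.2 ∈ range g} then F (p.1, e.symm ⟨p.2, h⟩) else 0 with hGdef
  have hGrange : ∀ (x : X) (y : K), G (x, g y) = F (x, y) := by
    intro x y
    have hmem : (x, g y) ∈ {q : X × ℝ | q.2 ∈ range g} := ⟨y, rfl⟩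
    show (if h : (x, g y) ∈ {q : X × ℝ | q.2 ∈ range g}
      then F ((x, g y).1, e.symm ⟨(x, g y).2, h⟩) else 0) = F (x, y)
    rw [dif_pos hmem]
    show F (x, e.symm ⟨g y, hmem⟩) = F (x, y)
    rw [hsymm2 y hmem]
  have hGoff : ∀ (x : X) (r : ℝ), r ∉ range g → G (x, r) = 0 := by
    intro x r hr
    show (if h : (x, r) ∈ {q : X × ℝ | q.2 ∈ range g}
      then F ((x, r).1, e.symm ⟨(x, r).2, h⟩) else 0) = 0
    rw [dif_neg (show (x, r) ∉ {q : X × ℝ | q.2 ∈ range g} from fun hmem => hr hmem)]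
  have hGmeas : Measurable G := by
    rw [hGdef]
    have h1 : Measurable fun z : ↥{q : X × ℝ | q.2 ∈ range g} =>
        (z : X × ℝ).1 := measurable_fst.comp measurable_subtype_coe
    have h2 : Measurable fun z : ↥{q : X × ℝ | q.2 ∈ range g} =>
        (e.symm ⟨(z : X × ℝ).2, z.2⟩ : K) := by
      apply e.symm.measurable.comp
      exact (measurable_snd.comp measurable_subtype_coe).subtype_mk
    exact Measurable.dite (s := {q : X × ℝ | q.2 ∈ range g})
      (f := fun z => F ((z : X × ℝ).1, e.symm ⟨(z : X × ℝ).2, z.2⟩))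
      (hFmeas.comp (h1.prodMk h2))
      (g := fun _ => (0 : ℝ)) measurable_const
      (hg.measurableSet_range.preimage measurable_snd)
  have hC0 : 0 ≤ C := le_trans (hF0 (hX.some, Classical.arbitrary K))
    (hFbdd (hX.some, Classical.arbitrary K))
  have hG0 : ∀ p, 0 ≤ G p := by
    intro p
    by_cases h : p ∈ {q : X × ℝ | q.2 ∈ range g}
    · show (0:ℝ) ≤ (if h : p ∈ {q : X × ℝ | q.2 ∈ range g}
        then F (p.1, e.symm ⟨p.2, h⟩) else 0)
      rw [dif_pos h]
      exact hF0 _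
    · show (0:ℝ) ≤ (if h : p ∈ {q : X × ℝ | q.2 ∈ range g}
        then F (p.1, e.symm ⟨p.2, h⟩) else 0)
      rw [dif_neg h]
  have hGbdd : ∀ p, G p ≤ C := by
    intro p
    by_cases h : p ∈ {q : X × ℝ | q.2 ∈ range g}
    · show (if h : p ∈ {q : X × ℝ | q.2 ∈ range g}
        then F (p.1, e.symm ⟨p.2, h⟩) else 0) ≤ C
      rw [dif_pos h]
      exact hFbdd _
    · show (if h : p ∈ {q : X × ℝ | q.2 ∈ range g}
        then F (p.1, e.symm ⟨p.2, h⟩) else 0) ≤ C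
      rw [dif_neg h]
      exact hC0
  have hGsum : ∀ x, Summable fun r : ℝ => G (x, r) := by
    intro x
    have hvan : ∀ r ∉ range g, (fun r => G (x, r)) r = 0 := fun r hr => hGoff x r hr
    apply (hg.injective.summable_iff hvan).1
    have hco : ((fun r => G (x, r)) ∘ g) = fun y => F (x, y) := funext fun y => hGrange x y
    rw [hco]
    exact hsum x
  obtain ⟨τ, hτmeas, hτeq⟩ := BorelSel.real_case G hGmeas hG0 C hGbdd hGsum
  have hbddF : ∀ x, BddAbove (range fun y : K => F (x, y)) := fun x =>
    ⟨C, by rintro r ⟨y, rfl⟩; exact hFbdd _⟩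
  have hbddG : ∀ x, BddAbove (range fun r : ℝ => G (x, r)) := fun x =>
    ⟨C, by rintro r ⟨y, rfl⟩; exact hGbdd _⟩
  have hsup : ∀ x, (⨆ r : ℝ, G (x, r)) = ⨆ y : K, F (x, y) := by
    intro x
    apply le_antisymm
    · apply ciSup_le
      intro r
      by_cases h : r ∈ range g
      · rcases h with ⟨y, rfl⟩
        rw [hGrange x y]
        exact le_ciSup (hbddF x) y
      · rw [hGoff x r h]
        exact le_trans (hF0 (x, Classical.arbitrary K)) (le_ciSup (hbddF x) _)
    · apply ciSup_le
      intro y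
      rw [← hGrange x y]
      exact le_ciSup (hbddG x) (g y)
  set t : X → K := fun x =>
    if h : τ x ∈ range g then e.symm ⟨τ x, h⟩ else Classical.arbitrary K with ht
  have htmeas : Measurable t := by
    have hh : Measurable fun r : ℝ =>
        if h : r ∈ range g then (e.symm ⟨r, h⟩ : K) else Classical.arbitrary K := by
      exact Measurable.dite (s := range g) (f := fun z : ↥(range g) => (e.symm z : K))
        e.symm.measurable (g := fun _ => Classical.arbitrary K) measurable_const
        hg.measurableSet_range
    exact hh.comp hτmeas
  refine ⟨t, htmeas, ?_⟩
  intro x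
  rcases lt_or_ge 0 (⨆ y : K, F (x, y)) with hpos | hle
  · have hτx := hτeq x
    rw [hsup x] at hτx
    have hmem : τ x ∈ range g := by
      by_contra hmem
      rw [hGoff x _ hmem] at hτx
      rw [← hτx] at hpos
      exact lt_irrefl 0 hpos
    have htx : t x = e.symm ⟨τ x, hmem⟩ := by
      rw [ht]
      dsimp only
      rw [dif_pos hmem]
    have hFG : G (x, τ x) = F (x, t x) := by
      have h2 : (x, τ x) ∈ {q : X × ℝ | q.2 ∈ range g} := hmem
      show (if h : (x, τ x) ∈ {q : X × ℝ | q.2 ∈ range g}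
        then F ((x, τ x).1, e.symm ⟨(x, τ x).2, h⟩) else 0) = F (x, t x)
      rw [dif_pos h2, htx]
    rw [← hFG, hτx]
  · have h0 : (⨆ y : K, F (x, y)) = 0 :=
      le_antisymm hle (le_trans (hF0 (x, t x)) (le_ciSup (hbddF x) (t x)))
    rw [h0]
    exact le_antisymm (by rw [← h0]; exact le_ciSup (hbddF x) (t x)) (hF0 _)
end

section
/- Let (X, μ, T) be a measure-preserving system on a probability space, let I(T) be the σ-algebra of T-invariant sets, and let φ_j, φ_k ∈ L^∞(μ) be eigenfunctions with T-invariant eigenvalues λ_j, λ_k ∈ L^∞(μ), meaning: |φ| takes only values 0 or 1 a.e., λ = 0 a.e. on {φ = 0}, and φ∘T = λ·φ a.e. Suppose E_μ(φ_j · conj(φ_k) | I(T)) = 0 a.e. and E_μ(|φ_j|² | I(T)), E_μ(|φ_k|² | I(T)) take only values 0 or 1 a.e. Then for μ-a.e. x ∈ X, λ_j(x) · conj(λ_k(x)) ≠ 1. -/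
open MeasureTheory

/-- The σ-algebra of `T`-invariant measurable sets. -/
def invSigma {X : Type*} [MeasurableSpace X] (T : X → X) : MeasurableSpace X where
  MeasurableSet' s := MeasurableSet s ∧ T ⁻¹' s = s
  measurableSet_empty := ⟨MeasurableSet.empty, Set.preimage_empty⟩
  measurableSet_compl := fun s hs => ⟨hs.1.compl, by rw [Set.preimage_compl, hs.2]⟩
  measurableSet_iUnion := fun f hf =>
    ⟨MeasurableSet.iUnion fun i => (hf i).1, by
      rw [Set.preimage_iUnion]; exact Set.iUnion_congr fun i => (hf i).2⟩

/-- If `φ_j, φ_k` are eigenfunctions of an invertible measure-preserving system `(X, μ, T)` with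
`T`-invariant eigenvalues `lamj, lamk`, which are relatively orthonormal over the invariant
σ-algebra `I(T)` (i.e. `E(φ_j conj(φ_k) | I(T)) = 0` a.e. and `E(|φ_j|² | I(T))`,
`E(|φ_k|² | I(T))` take only the values `0` and `1` a.e.), then for μ-a.e. `x` we have
`lamj x · conj (lamk x) ≠ 1`. -/
theorem eigenvalues_ae_distinct {X : Type*} [MeasurableSpace X] (μ : Measure X)
    [IsProbabilityMeasure μ] (T S : X → X) (hT : MeasurePreserving T μ μ) (hS : Measurable S)
    (hTS : ∀ x, S (T x) = x) (hST : ∀ x, T (S x) = x)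
    (φj φk lamj lamk : X → ℂ)
    (hφjm : Measurable φj) (hφkm : Measurable φk)
    (hlamjm : Measurable lamj) (hlamkm : Measurable lamk)
    (hφjbdd : ∃ C, ∀ x, ‖φj x‖ ≤ C) (hφkbdd : ∃ C, ∀ x, ‖φk x‖ ≤ C)
    -- `φj` is an eigenfunction with `T`-invariant eigenvalue `lamj`:
    (h01j : ∀ᵐ x ∂μ, ‖φj x‖ = 0 ∨ ‖φj x‖ = 1)
    (hzeroj : ∀ᵐ x ∂μ, φj x = 0 → lamj x = 0)
    (hlamjinv : ∀ᵐ x ∂μ, lamj (T x) = lamj x)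
    (heigj : ∀ᵐ x ∂μ, φj (T x) = lamj x * φj x)
    -- `φk` is an eigenfunction with `T`-invariant eigenvalue `lamk`:
    (h01k : ∀ᵐ x ∂μ, ‖φk x‖ = 0 ∨ ‖φk x‖ = 1)
    (hzerok : ∀ᵐ x ∂μ, φk x = 0 → lamk x = 0)
    (hlamkinv : ∀ᵐ x ∂μ, lamk (T x) = lamk x)
    (heigk : ∀ᵐ x ∂μ, φk (T x) = lamk x * φk x)
    -- relative orthonormality over the invariant σ-algebra:
    (horth : MeasureTheory.condExp (invSigma T) μ (fun x => φj x * (starRingEnd ℂ) (φk x)) =ᵐ[μ] 0)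
    (hsqj : ∀ᵐ x ∂μ, MeasureTheory.condExp (invSigma T) μ (fun y => ‖φj y‖ ^ 2) x = 0 ∨
        MeasureTheory.condExp (invSigma T) μ (fun y => ‖φj y‖ ^ 2) x = 1)
    (hsqk : ∀ᵐ x ∂μ, MeasureTheory.condExp (invSigma T) μ (fun y => ‖φk y‖ ^ 2) x = 0 ∨
        MeasureTheory.condExp (invSigma T) μ (fun y => ‖φk y‖ ^ 2) x = 1) :
    ∀ᵐ x ∂μ, lamj x * (starRingEnd ℂ) (lamk x) ≠ 1 := by
  classical
  have hTm : Measurable T := hT.measurable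
  -- S is measure preserving
  have hSmp : MeasurePreserving S μ μ := by
    refine ⟨hS, ?_⟩
    ext s hs
    rw [Measure.map_apply hS hs]
    have h2 : T ⁻¹' (S ⁻¹' s) = s := by
      ext x; simp [Set.mem_preimage, hTS x]
    rw [← hT.measure_preimage (hS hs).nullMeasurableSet, h2]
  -- the "good pointwise property"
  set P : X → Prop := fun x =>
    lamj (T x) = lamj x ∧ lamk (T x) = lamk x ∧ φj (T x) = lamj x * φj x ∧
      φk (T x) = lamk x * φk x ∧ (φj x = 0 → lamj x = 0) ∧ (φk x = 0 → lamk x = 0) with hP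
  set N : Set X := {x | ¬ P x} with hNdef
  have hNmeas : MeasurableSet N := by
    have h1 : MeasurableSet {x | lamj (T x) = lamj x} :=
      measurableSet_eq_fun (hlamjm.comp hTm) hlamjm
    have h2 : MeasurableSet {x | lamk (T x) = lamk x} :=
      measurableSet_eq_fun (hlamkm.comp hTm) hlamkm
    have h3 : MeasurableSet {x | φj (T x) = lamj x * φj x} :=
      measurableSet_eq_fun (hφjm.comp hTm) (hlamjm.mul hφjm)
    have h4 : MeasurableSet {x | φk (T x) = lamk x * φk x} :=
      measurableSet_eq_fun (hφkm.comp hTm) (hlamkm.mul hφkm)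
    have h5 : MeasurableSet {x | φj x = 0 → lamj x = 0} := by
      have e : {x | φj x = 0 → lamj x = 0} = {x | φj x = 0}ᶜ ∪ {x | lamj x = 0} := by
        ext x; simp [imp_iff_not_or]
      rw [e]
      exact ((measurableSet_eq_fun hφjm measurable_const).compl).union
        (measurableSet_eq_fun hlamjm measurable_const)
    have h6 : MeasurableSet {x | φk x = 0 → lamk x = 0} := by
      have e : {x | φk x = 0 → lamk x = 0} = {x | φk x = 0}ᶜ ∪ {x | lamk x = 0} := by
        ext x; simp [imp_iff_not_or]
      rw [e]
      exact ((measurableSet_eq_fun hφkm measurable_const).compl).union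
        (measurableSet_eq_fun hlamkm measurable_const)
    have e : N = ({x | lamj (T x) = lamj x} ∩ {x | lamk (T x) = lamk x} ∩
        {x | φj (T x) = lamj x * φj x} ∩ {x | φk (T x) = lamk x * φk x} ∩
        {x | φj x = 0 → lamj x = 0} ∩ {x | φk x = 0 → lamk x = 0})ᶜ := by
      ext x
      simp only [hNdef, hP, Set.mem_setOf_eq, Set.mem_compl_iff, Set.mem_inter_iff]
      tauto
    rw [e]
    exact (((((h1.inter h2).inter h3).inter h4).inter h5).inter h6).compl
  have hNnull : μ N = 0 := by
    have hPa : ∀ᵐ x ∂μ, P x := by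
      filter_upwards [hzeroj, hlamjinv, heigj, hzerok, hlamkinv, heigk] with x a b c d e f
      exact ⟨b, e, c, f, a, d⟩
    simpa [hNdef, ae_iff] using hPa
  -- the invariant hull of N
  set Ns : Set X := ⋃ n : ℕ, (T^[n] ⁻¹' N ∪ S^[n] ⁻¹' N) with hNs
  have hNsmem : ∀ x, x ∈ Ns ↔ ∃ n : ℕ, T^[n] x ∈ N ∨ S^[n] x ∈ N := by
    intro x; simp [hNs, Set.mem_iUnion]
  have hNsT : ∀ x, T x ∈ Ns ↔ x ∈ Ns := by
    intro x
    rw [hNsmem, hNsmem]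
    constructor
    · rintro ⟨n, h | h⟩
      · exact ⟨n + 1, Or.inl (by rwa [Function.iterate_succ_apply])⟩
      · rcases n with _ | m
        · exact ⟨1, Or.inl (by simpa using h)⟩
        · refine ⟨m, Or.inr ?_⟩
          rwa [Function.iterate_succ_apply, hTS x] at h
    · rintro ⟨n, h | h⟩
      · rcases n with _ | m
        · exact ⟨1, Or.inr (by simpa [hTS x] using h)⟩
        · exact ⟨m, Or.inl (by rwa [Function.iterate_succ_apply] at h)⟩
      · exact ⟨n + 1, Or.inr (by rwa [Function.iterate_succ_apply, hTS x])⟩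
  have hNsmeas : MeasurableSet Ns :=
    MeasurableSet.iUnion fun n =>
      ((hTm.iterate n) hNmeas).union ((hS.iterate n) hNmeas)
  have hNsnull : μ Ns = 0 := by
    refine measure_iUnion_null fun n => measure_union_null ?_ ?_
    · rw [(hT.iterate n).measure_preimage hNmeas.nullMeasurableSet]; exact hNnull
    · rw [(hSmp.iterate n).measure_preimage hNmeas.nullMeasurableSet]; exact hNnull
  have hNP : ∀ x, x ∉ Ns → P x := by
    intro x hx
    by_contra h
    exact hx ((hNsmem x).2 ⟨0, Or.inl h⟩)
  -- the set D and the invariant function g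
  set f : X → ℂ := fun x => φj x * (starRingEnd ℂ) (φk x) with hf
  set h : X → ℂ := fun x => lamj x * (starRingEnd ℂ) (lamk x) with hh
  have hhT : ∀ x, x ∉ Ns → h (T x) = h x := by
    intro x hx
    obtain ⟨a, b, -, -, -, -⟩ := hNP x hx
    simp [hh, a, b]
  set D : Set X := Nsᶜ ∩ {x | h x = 1} with hD
  have hconjm : Measurable (starRingEnd ℂ) := Complex.continuous_conj.measurable
  have hDmeas : MeasurableSet D :=
    hNsmeas.compl.inter (measurableSet_eq_fun (hlamjm.mul (hconjm.comp hlamkm))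
      measurable_const)
  have hDinv : T ⁻¹' D = D := by
    ext x
    simp only [hD, Set.mem_preimage, Set.mem_inter_iff, Set.mem_compl_iff, Set.mem_setOf_eq]
    rw [hNsT x]
    constructor
    · rintro ⟨hx, hx1⟩; exact ⟨hx, by rwa [hhT x hx] at hx1⟩
    · rintro ⟨hx, hx1⟩; exact ⟨hx, by rwa [hhT x hx]⟩
  have hDI : MeasurableSet[invSigma T] D := ⟨hDmeas, hDinv⟩
  set g : X → ℂ := D.indicator f with hg
  have hfm : Measurable f := hφjm.mul (hconjm.comp hφkm)
  have hgm : Measurable g := hfm.indicator hDmeas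
  -- g is strictly T-invariant
  have hginv : ∀ x, g (T x) = g x := by
    intro x
    by_cases hx : x ∈ D
    · have hx' : T x ∈ D := by rw [← hDinv] at hx; exact hx
      rw [hg, Set.indicator_of_mem hx, Set.indicator_of_mem hx']
      obtain ⟨hxN, hx1⟩ := hx
      obtain ⟨-, -, c, d, -, -⟩ := hNP x hxN
      simp only [hf, c, d, map_mul]
      have hx1' : h x = 1 := hx1
      have e : lamj x * φj x * ((starRingEnd ℂ) (lamk x) * (starRingEnd ℂ) (φk x))
          = (h x) * (φj x * (starRingEnd ℂ) (φk x)) := by rw [hh]; ring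
      rw [e, hx1', one_mul]
    · have hx' : T x ∉ D := by rw [← hDinv] at hx; exact hx
      rw [hg, Set.indicator_of_notMem hx, Set.indicator_of_notMem hx']
  -- hence strongly measurable wrt invSigma T
  have hm : invSigma T ≤ ‹MeasurableSpace X› := fun s hs => hs.1
  have hgsm : StronglyMeasurable[invSigma T] g := by
    refine Measurable.stronglyMeasurable ?_
    intro t ht
    refine ⟨hgm ht, ?_⟩
    ext x
    simp only [Set.mem_preimage, hginv x]
  -- integrability
  obtain ⟨Cj, hCj⟩ := hφjbdd
  obtain ⟨Ck, hCk⟩ := hφkbdd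
  have hfbd : ∀ x, ‖f x‖ ≤ Cj * Ck := by
    intro x
    rw [hf]
    calc ‖φj x * (starRingEnd ℂ) (φk x)‖ = ‖φj x‖ * ‖φk x‖ := by
          rw [norm_mul, RingHomIsometric.norm_map]
      _ ≤ Cj * Ck :=
          mul_le_mul (hCj x) (hCk x) (norm_nonneg _) (le_trans (norm_nonneg _) (hCj x))
  have hfint : Integrable f μ :=
    Integrable.mono' (integrable_const (Cj * Ck)) hfm.aestronglyMeasurable
      (Filter.Eventually.of_forall hfbd)
  have hgint : Integrable g μ := hfint.indicator hDmeas
  -- compute the conditional expectation of g in two ways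
  have hc1 : μ[g | invSigma T] = g := condExp_of_stronglyMeasurable hm hgsm hgint
  have hc2 : μ[g | invSigma T] =ᵐ[μ] D.indicator (μ[f | invSigma T]) :=
    condExp_indicator hfint hDI
  have hc3 : D.indicator (μ[f | invSigma T]) =ᵐ[μ] 0 := by
    filter_upwards [horth] with x hx
    by_cases hxD : x ∈ D
    · simpa [Set.indicator_of_mem hxD] using hx
    · simp [Set.indicator_of_notMem hxD]
  have hg0 : g =ᵐ[μ] 0 := by
    rw [← hc1]
    exact hc2.trans hc3
  -- conclusion
  have hNsae : ∀ᵐ x ∂μ, x ∉ Ns := by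
    rw [ae_iff]
    have e : {x | ¬ x ∉ Ns} = Ns := Set.ext fun x => not_not
    rw [e]
    exact hNsnull
  filter_upwards [hg0, hNsae] with x hx0 hxNs
  intro heq
  have hxD : x ∈ D := ⟨hxNs, heq⟩
  have hfx : f x = 0 := by
    have : g x = f x := Set.indicator_of_mem hxD f
    rw [← this, hx0]; rfl
  obtain ⟨-, -, -, -, pj, pk⟩ := hNP x hxNs
  rcases mul_eq_zero.1 hfx with hj | hk
  · have : lamj x = 0 := pj hj
    rw [this, zero_mul] at heq
    exact zero_ne_one heq
  · have hk' : φk x = 0 := by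
      rw [starRingEnd_apply] at hk
      exact star_eq_zero.mp hk
    have : lamk x = 0 := pk hk'
    rw [this, map_zero, mul_zero] at heq
    exact zero_ne_one heq
end

section
/- Let (X, μ, T) be a probability measure-preserving system with ergodic decomposition μ = ∫ μ_x dμ(x), and let (φ_j)_{j∈ℕ} be a relative orthonormal system in L²(μ) with respect to I(T). Then for every f ∈ L²(μ) and μ-a.e. x, the series Pf := Σ_j f_j φ_j (with f_j := E_μ(f · conj(φ_j) | I(T))) converges in L²(μ_x), and ‖Pf‖²_{L²(μ_x)} = Σ_j |f_j(x)|² and ‖f‖²_{L²(μ_x)} = ‖Pf‖²_{L²(μ_x)} + ‖f − Pf‖²_{L²(μ_x)}. -/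
open MeasureTheory Filter
open scoped ComplexConjugate

/-- Choice of a witness family from an a.e. existence statement. -/
lemma aeChoice {α β : Type*} {mα : MeasurableSpace α} {μ : Measure α} [Nonempty β]
    {Q : α → β → Prop} (h : ∀ᵐ x ∂μ, ∃ g, Q x g) :
    ∃ P : α → β, ∀ᵐ x ∂μ, Q x (P x) := by
  classical
  refine ⟨fun x => if h' : ∃ g, Q x g then h'.choose else Classical.arbitrary β, ?_⟩
  filter_upwards [h] with x hx
  rw [dif_pos hx]
  exact hx.choose_spec

/-- The `L²` norm squared of an element of `Lp ℂ 2 ν` is the integral of the pointwise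
norm squared. -/
lemma integral_norm_sq_Lp {α : Type*} {mα : MeasurableSpace α} {ν : Measure α}
    (H : Lp ℂ 2 ν) : ∫ y, ‖H y‖ ^ 2 ∂ν = ‖H‖ ^ 2 := by
  have h1 : (inner ℂ H H : ℂ) = ∫ y, (inner ℂ (H y) (H y) : ℂ) ∂ν :=
    MeasureTheory.L2.inner_def H H
  have h2 : RCLike.re (inner ℂ H H : ℂ) = ‖H‖ ^ 2 := inner_self_eq_norm_sq H
  rw [← h2, h1, ← integral_re (MeasureTheory.L2.integrable_inner H H)]
  refine integral_congr_ae (Filter.Eventually.of_forall fun y => ?_)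
  exact (inner_self_eq_norm_sq (H y)).symm

/-- Conditional expectation commutes with the embedding `ℝ → ℂ`. -/
lemma condexp_ofReal_ae {α : Type*} {m m0 : MeasurableSpace α} {μ : Measure α}
    (hm : m ≤ m0) [SigmaFinite (μ.trim hm)] {g : α → ℝ} (hg : Integrable g μ) :
    μ[(fun y => ((g y : ℝ) : ℂ))|m] =ᵐ[μ] fun x => (((μ[g|m]) x : ℝ) : ℂ) := by
  refine (ae_eq_condExp_of_forall_setIntegral_eq hm hg.ofReal
    (fun s _ _ => integrable_condExp.ofReal.integrableOn)
    (fun s hs hμs => ?_) ?_).symm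
  · rw [integral_complex_ofReal, integral_complex_ofReal, setIntegral_condExp hm hg hs]
  · exact StronglyMeasurable.aestronglyMeasurable
      (Complex.continuous_ofReal.comp_stronglyMeasurable stronglyMeasurable_condExp)

/-- Relative Bessel/Pythagoras identities: if `(φ_j)` is a relative orthonormal system in
`L²(μ)` with respect to the invariant σ-algebra `I(T)` and `μ = ∫ μ_x dμ(x)` is the ergodic
decomposition (characterized by `E_μ(g | I(T))(x) = ∫ g dμ_x` a.e.), then for every
`f ∈ L²(μ)` and μ-a.e. `x`, the series `Pf = ∑_j f_j(x) φ_j` (with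
`f_j(x) = ∫ f conj(φ_j) dμ_x`) converges in `L²(μ_x)`, and
`‖Pf‖²_{L²(μ_x)} = ∑_j |f_j(x)|²` and
`‖f‖²_{L²(μ_x)} = ‖Pf‖²_{L²(μ_x)} + ‖f − Pf‖²_{L²(μ_x)}`. -/
theorem relative_orthonormal_bessel {X : Type*} [MeasurableSpace X] (μ : Measure X)
    [IsProbabilityMeasure μ] (T : X → X) (hT : MeasurePreserving T μ μ)
    (μx : X → Measure X) (hprob : ∀ x, IsProbabilityMeasure (μx x))
    (hdecomp : ∀ g : X → ℂ, Integrable g μ →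
      (MeasureTheory.condExp (invSigma T) μ g) =ᵐ[μ] fun x => ∫ y, g y ∂(μx x))
    (φ : ℕ → X → ℂ) (hφm : ∀ j, Measurable (φ j)) (hφ2 : ∀ j, MemLp (φ j) 2 μ)
    (hsq : ∀ j, ∀ᵐ x ∂μ,
      MeasureTheory.condExp (invSigma T) μ (fun y => ‖φ j y‖ ^ 2) x = 0 ∨
      MeasureTheory.condExp (invSigma T) μ (fun y => ‖φ j y‖ ^ 2) x = 1)
    (horth : ∀ j k, j ≠ k →
      (MeasureTheory.condExp (invSigma T) μ
        fun y => φ j y * (starRingEnd ℂ) (φ k y)) =ᵐ[μ] 0)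
    (f : X → ℂ) (hfm : Measurable f) (hf2 : MemLp f 2 μ) :
    ∃ P : X → X → ℂ, ∀ᵐ x ∂μ,
      Tendsto (fun J : ℕ => ∫ y,
          ‖(∑ j ∈ Finset.range J, (∫ z, f z * (starRingEnd ℂ) (φ j z) ∂(μx x)) * φ j y)
            - P x y‖ ^ 2 ∂(μx x)) atTop (nhds 0) ∧
      (∫ y, ‖P x y‖ ^ 2 ∂(μx x))
        = ∑' j : ℕ, ‖∫ z, f z * (starRingEnd ℂ) (φ j z) ∂(μx x)‖ ^ 2 ∧
      (∫ y, ‖f y‖ ^ 2 ∂(μx x))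
        = (∫ y, ‖P x y‖ ^ 2 ∂(μx x)) + ∫ y, ‖f y - P x y‖ ^ 2 ∂(μx x) := by
  classical
  have hm : invSigma T ≤ ‹MeasurableSpace X› := fun s hs => hs.1
  haveI : SigmaFinite (μ.trim hm) := inferInstance
  -- basic integrability over μ
  have hfsq : Integrable (fun y => ‖f y‖ ^ 2) μ :=
    (memLp_two_iff_integrable_sq_norm hf2.1).mp hf2
  have hφsq : ∀ j, Integrable (fun y => ‖φ j y‖ ^ 2) μ := fun j =>
    (memLp_two_iff_integrable_sq_norm (hφ2 j).1).mp (hφ2 j)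
  have hprod : ∀ j k, Integrable (fun y => φ j y * (starRingEnd ℂ) (φ k y)) μ := by
    intro j k
    have h := MeasureTheory.L2.integrable_inner (𝕜 := ℂ) ((hφ2 k).toLp _) ((hφ2 j).toLp _)
    refine h.congr ?_
    filter_upwards [(hφ2 k).coeFn_toLp, (hφ2 j).coeFn_toLp] with y h1 h2
    rw [RCLike.inner_apply', h1, h2, mul_comm]
  -- bridge: for real integrable g, a.e. x the μx-integral of g is the conditional expectation
  have key : ∀ g : X → ℝ, Integrable g μ →
      ∀ᵐ x ∂μ, ∫ y, g y ∂(μx x) = (μ[g|invSigma T]) x := by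
    intro g hg
    filter_upwards [hdecomp (fun y => ((g y : ℝ) : ℂ)) hg.ofReal,
      condexp_ofReal_ae hm hg] with x h1 h2
    have h3 : (((μ[g|invSigma T]) x : ℝ) : ℂ) = ((∫ y, g y ∂(μx x) : ℝ) : ℂ) := by
      rw [← h2, h1]
      exact integral_ofReal
    exact_mod_cast h3.symm
  -- a.e. integrability of squares w.r.t. μx
  have main_int : ∀ g : X → ℝ, Measurable g → (∀ y, 0 ≤ g y) → Integrable g μ →
      ∀ᵐ x ∂μ, Integrable g (μx x) := by
    intro g hgm hg0 hgi
    have hminm : ∀ n : ℕ, Measurable (fun y => min (g y) (n : ℝ)) := fun n =>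
      hgm.min measurable_const
    have hminb : ∀ (n : ℕ) (y : X), ‖min (g y) (n : ℝ)‖ ≤ (n : ℝ) := by
      intro n y
      rw [Real.norm_eq_abs, abs_of_nonneg (le_min (hg0 y) (Nat.cast_nonneg n))]
      exact min_le_right _ _
    have hminint : ∀ n : ℕ, Integrable (fun y => min (g y) (n : ℝ)) μ := fun n =>
      (integrable_const (n : ℝ)).mono' (hminm n).aestronglyMeasurable
        (Filter.Eventually.of_forall (hminb n))
    have h1 : ∀ᵐ x ∂μ, ∀ n : ℕ,
        ∫ y, min (g y) (n : ℝ) ∂(μx x) = (μ[fun y => min (g y) (n : ℝ)|invSigma T]) x :=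
      ae_all_iff.2 fun n => key _ (hminint n)
    have h2 : ∀ᵐ x ∂μ, ∀ n : ℕ,
        (μ[fun y => min (g y) (n : ℝ)|invSigma T]) x ≤ (μ[g|invSigma T]) x :=
      ae_all_iff.2 fun n => condExp_mono (hminint n) hgi
        (Filter.Eventually.of_forall fun y => min_le_left _ _)
    filter_upwards [h1, h2] with x h1x h2x
    haveI := hprob x
    have hminintx : ∀ n : ℕ, Integrable (fun y => min (g y) (n : ℝ)) (μx x) := fun n =>
      (integrable_const (n : ℝ)).mono' (hminm n).aestronglyMeasurable
        (Filter.Eventually.of_forall (hminb n))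
    have hbound : ∀ n : ℕ, ∫⁻ y, ENNReal.ofReal (min (g y) (n : ℝ)) ∂(μx x)
        ≤ ENNReal.ofReal ((μ[g|invSigma T]) x) := by
      intro n
      rw [← ofReal_integral_eq_lintegral_ofReal (hminintx n)
        (Filter.Eventually.of_forall fun y => le_min (hg0 y) (Nat.cast_nonneg n))]
      exact ENNReal.ofReal_le_ofReal (le_trans (le_of_eq (h1x n)) (h2x n))
    have hsup : ∀ y, ENNReal.ofReal (g y) = ⨆ n : ℕ, ENNReal.ofReal (min (g y) (n : ℝ)) := by
      intro y
      refine le_antisymm ?_ (iSup_le fun n => ENNReal.ofReal_le_ofReal (min_le_left _ _))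
      calc ENNReal.ofReal (g y) = ENNReal.ofReal (min (g y) ((⌈g y⌉₊ : ℕ) : ℝ)) := by
            rw [min_eq_left (Nat.le_ceil _)]
        _ ≤ ⨆ n : ℕ, ENNReal.ofReal (min (g y) (n : ℝ)) :=
              le_iSup (fun n : ℕ => ENNReal.ofReal (min (g y) (n : ℝ))) ⌈g y⌉₊
    have hlint : ∫⁻ y, ENNReal.ofReal (g y) ∂(μx x) < ⊤ := by
      have heq : ∫⁻ y, ENNReal.ofReal (g y) ∂(μx x)
          = ⨆ n : ℕ, ∫⁻ y, ENNReal.ofReal (min (g y) (n : ℝ)) ∂(μx x) := by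
        rw [← lintegral_iSup (fun n => (hminm n).ennreal_ofReal)
          (fun p q hpq y => ENNReal.ofReal_le_ofReal
            (min_le_min le_rfl (Nat.cast_le.2 hpq)))]
        exact lintegral_congr hsup
      rw [heq]
      exact lt_of_le_of_lt (iSup_le hbound) ENNReal.ofReal_lt_top
    refine ⟨hgm.aestronglyMeasurable, ?_⟩
    rw [hasFiniteIntegral_iff_norm]
    refine lt_of_le_of_lt (le_of_eq (lintegral_congr fun y => ?_)) hlint
    rw [Real.norm_eq_abs, abs_of_nonneg (hg0 y)]
  -- a.e. facts
  have hmem_f : ∀ᵐ x ∂μ, Integrable (fun y => ‖f y‖ ^ 2) (μx x) :=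
    main_int _ (hfm.norm.pow_const 2) (fun y => sq_nonneg _) hfsq
  have hmem_φ : ∀ᵐ x ∂μ, ∀ j, Integrable (fun y => ‖φ j y‖ ^ 2) (μx x) :=
    ae_all_iff.2 fun j => main_int _ ((hφm j).norm.pow_const 2) (fun y => sq_nonneg _) (hφsq j)
  have hval_φ : ∀ᵐ x ∂μ, ∀ j,
      (∫ y, ‖φ j y‖ ^ 2 ∂(μx x)) = 0 ∨ (∫ y, ‖φ j y‖ ^ 2 ∂(μx x)) = 1 := by
    refine ae_all_iff.2 fun j => ?_
    filter_upwards [key _ (hφsq j), hsq j] with x h1 h2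
    rw [h1]; exact h2
  have hval_o : ∀ᵐ x ∂μ, ∀ j k, j ≠ k →
      ∫ y, φ j y * (starRingEnd ℂ) (φ k y) ∂(μx x) = 0 := by
    refine ae_all_iff.2 fun j => ae_all_iff.2 fun k => ?_
    by_cases hjk : j = k
    · exact Filter.Eventually.of_forall fun x h => absurd hjk h
    · filter_upwards [hdecomp _ (hprod j k), horth j k hjk] with x h1 h2 _
      rw [← h1, h2]; rfl
  -- main a.e. existence
  have main : ∀ᵐ x ∂μ, ∃ g : X → ℂ,
      Tendsto (fun J : ℕ => ∫ y,
          ‖(∑ j ∈ Finset.range J, (∫ z, f z * (starRingEnd ℂ) (φ j z) ∂(μx x)) * φ j y)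
            - g y‖ ^ 2 ∂(μx x)) atTop (nhds 0) ∧
      (∫ y, ‖g y‖ ^ 2 ∂(μx x))
        = ∑' j : ℕ, ‖∫ z, f z * (starRingEnd ℂ) (φ j z) ∂(μx x)‖ ^ 2 ∧
      (∫ y, ‖f y‖ ^ 2 ∂(μx x))
        = (∫ y, ‖g y‖ ^ 2 ∂(μx x)) + ∫ y, ‖f y - g y‖ ^ 2 ∂(μx x) := by
    filter_upwards [hmem_f, hmem_φ, hval_φ, hval_o] with x hIf hIφ hNφ hOφ
    haveI := hprob x
    set ν := μx x with hν
    -- Memℒp facts w.r.t. ν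
    have hfx : MemLp f 2 ν := (memLp_two_iff_integrable_sq_norm hfm.aestronglyMeasurable).2 hIf
    have hφx : ∀ j, MemLp (φ j) 2 ν := fun j =>
      (memLp_two_iff_integrable_sq_norm (hφm j).aestronglyMeasurable).2 (hIφ j)
    -- Hilbert space setup
    set F : Lp ℂ 2 ν := hfx.toLp f with hF
    set e : ℕ → Lp ℂ 2 ν := fun j => (hφx j).toLp (φ j) with he
    set a : ℕ → ℂ := fun j => ∫ z, f z * (starRingEnd ℂ) (φ j z) ∂ν with ha
    set b : ℕ → ℝ := fun j => ‖a j‖ ^ 2 with hb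
    have hinner_eq : ∀ (g h : X → ℂ) (hg : MemLp g 2 ν) (hh : MemLp h 2 ν),
        (inner ℂ (hg.toLp g) (hh.toLp h) : ℂ) = ∫ y, conj (g y) * h y ∂ν := by
      intro g h hg hh
      rw [MeasureTheory.L2.inner_def]
      refine integral_congr_ae ?_
      filter_upwards [hg.coeFn_toLp, hh.coeFn_toLp] with y h1 h2
      rw [RCLike.inner_apply', h1, h2]
    have hnorm_eq : ∀ (g : X → ℂ) (hg : MemLp g 2 ν),
        ∫ y, ‖g y‖ ^ 2 ∂ν = ‖hg.toLp g‖ ^ 2 := by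
      intro g hg
      rw [← integral_norm_sq_Lp (hg.toLp g)]
      refine integral_congr_ae ?_
      filter_upwards [hg.coeFn_toLp] with y h1
      rw [h1]
    -- norms and orthogonality of the e j
    have hn2 : ∀ j, ‖e j‖ ^ 2 = 0 ∨ ‖e j‖ ^ 2 = 1 := by
      intro j
      rw [← hnorm_eq (φ j) (hφx j)]
      exact hNφ j
    have hEE : ∀ j k, j ≠ k → (inner ℂ (e j) (e k) : ℂ) = 0 := by
      intro j k hjk
      rw [he, hinner_eq]
      rw [show (∫ y, conj (φ j y) * φ k y ∂ν) = ∫ y, φ k y * conj (φ j y) ∂ν from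
        integral_congr_ae (Filter.Eventually.of_forall fun y => mul_comm _ _)]
      exact hOφ k j (Ne.symm hjk)
    have hEF : ∀ j, (inner ℂ (e j) F : ℂ) = a j := by
      intro j
      rw [he, hF, hinner_eq, ha]
      exact integral_congr_ae (Filter.Eventually.of_forall fun y => mul_comm _ _)
    have ha0 : ∀ j, ‖e j‖ ^ 2 = 0 → a j = 0 := by
      intro j hj
      have hje : e j = 0 := by
        rw [← norm_eq_zero]
        exact pow_eq_zero_iff (two_ne_zero) |>.mp hj
      rw [← hEF j, hje, inner_zero_left]
    -- diagonal terms
    have hdiag : ∀ j, conj (a j) * (a j * (inner ℂ (e j) (e j) : ℂ)) = ((b j : ℝ) : ℂ) := by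
      intro j
      rw [inner_self_eq_norm_sq_to_K]
      rcases hn2 j with h | h
      · simp [hb, ha0 j h]
      · have h1 : ‖e j‖ = 1 := by
          rcases mul_eq_zero.1 (show (‖e j‖ - 1) * (‖e j‖ + 1) = 0 by nlinarith) with h' | h'
          · linarith
          · linarith [norm_nonneg (e j)]
        simp only [h1, RCLike.ofReal_one, one_pow, mul_one, RCLike.conj_mul, hb]
        norm_cast
    -- inner products with finite partial sums
    have hSS : ∀ s : Finset ℕ,
        (inner ℂ (∑ j ∈ s, a j • e j) (∑ j ∈ s, a j • e j) : ℂ) = ((∑ j ∈ s, b j : ℝ) : ℂ) := by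
      intro s
      rw [sum_inner]
      have hterm : ∀ j ∈ s, (inner ℂ (a j • e j) (∑ k ∈ s, a k • e k) : ℂ) = ((b j : ℝ) : ℂ) := by
        intro j hj
        rw [inner_sum]
        rw [Finset.sum_eq_single j
          (fun k _ hkj => by
            rw [inner_smul_left, inner_smul_right, hEE j k (Ne.symm hkj)]
            ring)
          (fun hj' => absurd hj hj')]
        rw [inner_smul_left, inner_smul_right]
        exact hdiag j
      rw [Finset.sum_congr rfl hterm]
      push_cast
      rfl
    have hS : ∀ s : Finset ℕ, ‖∑ j ∈ s, a j • e j‖ ^ 2 = ∑ j ∈ s, b j := by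
      intro s
      rw [← inner_self_eq_norm_sq (𝕜 := ℂ), hSS s]
      exact RCLike.ofReal_re _
    have hSF : ∀ s : Finset ℕ,
        (inner ℂ (∑ j ∈ s, a j • e j) F : ℂ) = ((∑ j ∈ s, b j : ℝ) : ℂ) := by
      intro s
      rw [sum_inner]
      have hterm : ∀ j ∈ s, (inner ℂ (a j • e j) F : ℂ) = ((b j : ℝ) : ℂ) := by
        intro j _
        rw [inner_smul_left, hEF j, RCLike.conj_mul, hb]
        norm_cast
      rw [Finset.sum_congr rfl hterm]
      push_cast
      rfl
    -- Bessel inequality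
    have hbessel : ∀ n : ℕ, ∑ j ∈ Finset.range n, b j ≤ ‖F‖ ^ 2 := by
      intro n
      have h0 : (0 : ℝ) ≤ ‖F - ∑ j ∈ Finset.range n, a j • e j‖ ^ 2 := sq_nonneg _
      rw [norm_sub_sq (𝕜 := ℂ)] at h0
      have hre : RCLike.re (inner ℂ F (∑ j ∈ Finset.range n, a j • e j) : ℂ)
          = ∑ j ∈ Finset.range n, b j := by
        rw [← inner_conj_symm, hSF]
        simp
      rw [hre, hS] at h0
      linarith
    have hsummable : Summable b :=
      summable_of_sum_range_le (fun n => sq_nonneg _) hbessel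
    -- Cauchy sequence of partial sums
    set Sn : ℕ → Lp ℂ 2 ν := fun n => ∑ j ∈ Finset.range n, a j • e j with hSn
    have hGc : CauchySeq (fun n => ∑ j ∈ Finset.range n, b j) :=
      hsummable.hasSum.tendsto_sum_nat.cauchySeq
    have hcau : CauchySeq Sn := by
      rw [Metric.cauchySeq_iff] at hGc ⊢
      intro ε hε
      obtain ⟨N, hN⟩ := hGc (ε ^ 2) (by positivity)
      refine ⟨N, fun n hn m hm => ?_⟩
      have keyd : ∀ p q, N ≤ p → N ≤ q → q ≤ p → dist (Sn p) (Sn q) < ε := by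
        intro p q hp hq hqp
        have h1 : Sn p - Sn q = ∑ j ∈ Finset.Ico q p, a j • e j := by
          rw [hSn]
          rw [Finset.sum_Ico_eq_sub _ hqp]
        have h2 : ‖Sn p - Sn q‖ ^ 2 = ∑ j ∈ Finset.Ico q p, b j := by rw [h1, hS]
        have h3 : ∑ j ∈ Finset.Ico q p, b j
            = (∑ j ∈ Finset.range p, b j) - ∑ j ∈ Finset.range q, b j :=
          Finset.sum_Ico_eq_sub _ hqp
        have h4 := hN p hp q hq
        rw [Real.dist_eq] at h4
        have h5 : ‖Sn p - Sn q‖ ^ 2 < ε ^ 2 := by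
          rw [h2, h3]
          exact lt_of_le_of_lt (le_abs_self _) h4
        rw [dist_eq_norm]
        exact lt_of_pow_lt_pow_left₀ 2 hε.le h5
      rcases le_total m n with h | h
      · exact keyd n m hn hm h
      · rw [dist_comm]; exact keyd m n hm hn h
    obtain ⟨G, hG⟩ := cauchySeq_tendsto_of_complete hcau
    -- norm of G
    have hGnorm : ‖G‖ ^ 2 = ∑' j, b j := by
      have h1 : Tendsto (fun n => ‖Sn n‖ ^ 2) atTop (nhds (‖G‖ ^ 2)) :=
        (hG.norm).pow 2
      have h2 : Tendsto (fun n => ‖Sn n‖ ^ 2) atTop (nhds (∑' j, b j)) := by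
        have heq : (fun n => ‖Sn n‖ ^ 2) = fun n => ∑ j ∈ Finset.range n, b j :=
          funext fun n => hS _
        rw [heq]
        exact hsummable.hasSum.tendsto_sum_nat
      exact tendsto_nhds_unique h1 h2
    -- inner product of G with F
    have hGF : (inner ℂ G F : ℂ) = ((∑' j, b j : ℝ) : ℂ) := by
      have h1 : Tendsto (fun n => (inner ℂ (Sn n) F : ℂ)) atTop (nhds (inner ℂ G F)) :=
        hG.inner tendsto_const_nhds
      have h2 : Tendsto (fun n => (inner ℂ (Sn n) F : ℂ)) atTop
          (nhds (((∑' j, b j : ℝ) : ℂ))) := by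
        have heq : (fun n => (inner ℂ (Sn n) F : ℂ))
            = fun n => ((∑ j ∈ Finset.range n, b j : ℝ) : ℂ) := funext fun n => hSF _
        rw [heq]
        exact (Complex.continuous_ofReal.tendsto _).comp hsummable.hasSum.tendsto_sum_nat
      exact tendsto_nhds_unique h1 h2
    -- orthogonality of G and F - G
    have hGFG : RCLike.re (inner ℂ G (F - G) : ℂ) = 0 := by
      rw [inner_sub_right, map_sub, hGF]
      have hGG : RCLike.re (inner ℂ G G : ℂ) = ‖G‖ ^ 2 := inner_self_eq_norm_sq G
      rw [hGG, hGnorm]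
      simp
    -- Pythagoras
    have hpyth : ‖F‖ ^ 2 = ‖G‖ ^ 2 + ‖F - G‖ ^ 2 := by
      have h := norm_add_sq (𝕜 := ℂ) G (F - G)
      rw [show G + (F - G) = F by abel, hGFG] at h
      linarith
    -- coercion of partial sums
    have hSn_coe : ∀ J : ℕ, (⇑(Sn J) : X → ℂ)
        =ᵐ[ν] fun y => ∑ j ∈ Finset.range J, a j * φ j y := by
      intro J
      induction J with
      | zero =>
        simp only [hSn, Finset.range_zero, Finset.sum_empty]
        exact Lp.coeFn_zero ℂ 2 ν
      | succ n ih =>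
        have hstep : Sn (n + 1) = Sn n + a n • e n := by
          rw [hSn]
          exact Finset.sum_range_succ _ _
        rw [hstep]
        filter_upwards [Lp.coeFn_add (Sn n) (a n • e n), ih,
          Lp.coeFn_smul (a n) (e n), (hφx n).coeFn_toLp] with y h1 h2 h3 h4
        rw [h1]
        simp only [Pi.add_apply]
        rw [h2, h3]
        simp only [Pi.smul_apply, smul_eq_mul]
        rw [h4, Finset.sum_range_succ]
    -- translating integrals
    have hint_eq : ∀ J : ℕ,
        ∫ y, ‖(∑ j ∈ Finset.range J, a j * φ j y) - G y‖ ^ 2 ∂ν = ‖Sn J - G‖ ^ 2 := by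
      intro J
      rw [← integral_norm_sq_Lp (Sn J - G)]
      refine integral_congr_ae ?_
      filter_upwards [Lp.coeFn_sub (Sn J) G, hSn_coe J] with y h1 h2
      rw [h1]
      simp only [Pi.sub_apply]
      rw [h2]
    refine ⟨⇑G, ?_, ?_, ?_⟩
    · -- convergence
      have htend : Tendsto (fun J => ‖Sn J - G‖ ^ 2) atTop (nhds 0) := by
        have h0 : Tendsto (fun J => Sn J - G) atTop (nhds 0) := by
          simpa using hG.sub (tendsto_const_nhds (x := G))
        simpa using (h0.norm).pow 2
      convert htend using 2 with J
      exact hint_eq J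
    · -- Bessel identity
      have hts : (∑' j : ℕ, ‖∫ z, f z * (starRingEnd ℂ) (φ j z) ∂ν‖ ^ 2) = ∑' j, b j := by
        simp only [hb, ha]
      rw [hts, ← hGnorm]
      exact integral_norm_sq_Lp G
    · -- Pythagoras identity
      have h1 : ∫ y, ‖f y‖ ^ 2 ∂ν = ‖F‖ ^ 2 := hnorm_eq f hfx
      have h2 : ∫ y, ‖G y‖ ^ 2 ∂ν = ‖G‖ ^ 2 := integral_norm_sq_Lp G
      have h3 : ∫ y, ‖f y - G y‖ ^ 2 ∂ν = ‖F - G‖ ^ 2 := by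
        rw [← integral_norm_sq_Lp (F - G)]
        refine integral_congr_ae ?_
        filter_upwards [Lp.coeFn_sub F G, hfx.coeFn_toLp] with y hy1 hy2
        rw [hy1]
        simp only [Pi.sub_apply]
        rw [hy2]
      rw [h1, h2, h3, hpyth]
  obtain ⟨P, hP⟩ := aeChoice main
  exact ⟨P, hP⟩
end

section
/- Let (Y, T₁, ..., T_d) be a distal topological dynamical system on a compact metric space, i.e., for all y ≠ y' in Y, inf over n⃗ ∈ ℤ^d of dist(T_{n⃗} y, T_{n⃗} y') > 0. Then for every y₁ ∈ Y and every sequence (m⃗_i) in ℕ^d there exist y₀ ∈ Y and a subsequence (m⃗'_i) such that T_{m⃗'_i} y₀ converges to y₁. -/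
open Filter

/-- The product `T₁^{n₁} ⋯ T_d^{n_d}` of commuting permutations. -/
noncomputable def vecPow {Y : Type*} {d : ℕ} (T : Fin d → Equiv.Perm Y) (n : Fin d → ℤ) :
    Equiv.Perm Y :=
  (List.ofFn fun i => T i ^ n i).prod

section aux
variable {Y : Type*} {d : ℕ} {T : Fin d → Equiv.Perm Y}

lemma vecPow_eq_noncommProd (hcomm : ∀ i j, Commute (T i) (T j)) (n : Fin d → ℤ) :
    vecPow T n = Finset.univ.noncommProd (fun i => T i ^ n i)
      (fun i _ j _ _ => Commute.zpow_zpow (hcomm i j) _ _) := by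
  unfold vecPow Finset.noncommProd; rw [Fin.univ_def]
  simp only [Multiset.map_coe, Multiset.noncommProd_coe, List.ofFn_eq_map]

lemma vecPow_add (hcomm : ∀ i j, Commute (T i) (T j)) (n n' : Fin d → ℤ) :
    vecPow T (n + n') = vecPow T n * vecPow T n' := by
  rw [vecPow_eq_noncommProd hcomm, vecPow_eq_noncommProd hcomm,
    vecPow_eq_noncommProd hcomm]
  erw [← Finset.noncommProd_mul_distrib]
  · congr 1; ext i; simp [zpow_add]
  · exact fun i _ j _ _ => Commute.zpow_zpow (hcomm i j) _ _

lemma vecPow_continuous [TopologicalSpace Y] (hTcont : ∀ i, Continuous (T i))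
    (hTsymm : ∀ i, Continuous (T i).symm) (n : Fin d → ℤ) :
    Continuous (vecPow T n) := by
  have key : ∀ (l : List (Equiv.Perm Y)), (∀ f ∈ l, Continuous f) → Continuous l.prod := by
    intro l
    induction l with
    | nil => intro _; simpa using continuous_id
    | cons a l ih =>
      intro h
      have : ⇑(a * l.prod) = ⇑a ∘ ⇑l.prod := by ext x; simp
      rw [List.prod_cons, this]
      exact (h a (by simp)).comp (ih fun f hf => h f (by simp [hf]))
  apply key
  intro f hf
  simp only [List.mem_ofFn] at hf
  obtain ⟨i, rfl⟩ := hf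
  -- continuity of T i ^ (n i)
  rcases le_or_gt 0 (n i) with h | h
  · obtain ⟨k, hk⟩ : ∃ k : ℕ, n i = (k : ℤ) := ⟨(n i).toNat, by omega⟩
    rw [hk, zpow_natCast]
    have : ⇑(T i ^ k) = (⇑(T i))^[k] := Equiv.Perm.coe_pow _ _
    rw [this]
    exact (hTcont i).iterate k
  · obtain ⟨k, hk⟩ : ∃ k : ℕ, n i = -(k : ℤ) := ⟨(-n i).toNat, by omega⟩
    rw [hk, zpow_neg, zpow_natCast, ← inv_pow]
    have : ⇑((T i)⁻¹ ^ k) = (⇑(T i)⁻¹)^[k] := Equiv.Perm.coe_pow _ _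
    rw [this]
    have h2 : ⇑(T i)⁻¹ = ⇑(T i).symm := rfl
    rw [h2]
    exact (hTsymm i).iterate k
end aux

/-- For a distal topological dynamical system `(Y, T₁, …, T_d)` on a compact metric space
(commuting homeomorphisms, with `inf_{n⃗ ∈ ℤ^d} dist(T_{n⃗}y, T_{n⃗}y') > 0` whenever
`y ≠ y'`), every point `y₁` is a limit of `T_{m⃗'_i} y₀` for some `y₀` and some subsequence
`(m⃗'_i)` of any given sequence `(m⃗_i)` in `ℕ^d`. -/
theorem distal_reachability (Y : Type*) [MetricSpace Y] [CompactSpace Y] (d : ℕ)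
    (T : Fin d → Equiv.Perm Y)
    (hTcont : ∀ i, Continuous (T i)) (hTsymm : ∀ i, Continuous (T i).symm)
    (hcomm : ∀ i j, Commute (T i) (T j))
    (hdistal : ∀ y y' : Y, y ≠ y' → ∃ δ > 0, ∀ n : Fin d → ℤ,
      δ ≤ dist (vecPow T n y) (vecPow T n y'))
    (y₁ : Y) (m : ℕ → (Fin d → ℕ)) :
    ∃ y₀ : Y, ∃ s : ℕ → ℕ, StrictMono s ∧
      Tendsto (fun i => vecPow T (fun k => ((m (s i) k : ℤ))) y₀) atTop (nhds y₁) := by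
  classical
  set G : Set (Y → Y) := Set.range (fun n : Fin d → ℤ => ⇑(vecPow T n)) with hGdef
  set E : Set (Y → Y) := closure G with hEdef
  have hGcomp : ∀ f ∈ G, ∀ g ∈ G, f ∘ g ∈ G := by
    rintro _ ⟨n, rfl⟩ _ ⟨n', rfl⟩
    exact ⟨n + n', by simp only []; rw [vecPow_add hcomm, Equiv.Perm.coe_mul]⟩
  have hGcont : ∀ f ∈ G, Continuous f := by
    rintro _ ⟨n, rfl⟩; exact vecPow_continuous hTcont hTsymm n
  have step1 : ∀ f ∈ G, ∀ g ∈ E, f ∘ g ∈ E := by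
    intro f hf g hg
    have hc : Continuous (fun h : Y → Y => f ∘ h) :=
      continuous_pi fun y => (hGcont f hf).comp (continuous_apply y)
    exact map_mem_closure hc hg fun x hx => hGcomp f hf x hx
  have hEcomp : ∀ f ∈ E, ∀ g ∈ E, f ∘ g ∈ E := by
    intro f hf g hg
    have hc : Continuous (fun h : Y → Y => h ∘ g) :=
      continuous_pi fun y => continuous_apply (g y)
    have := map_mem_closure hc hf fun x hx => step1 x hx g hg
    rwa [IsClosed.closure_eq isClosed_closure] at this
  have hinj : ∀ p ∈ E, Function.Injective p := by
    intro p hp y y' hpy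
    by_contra hne
    obtain ⟨δ, hδ, hδd⟩ := hdistal y y' hne
    have hclosed : IsClosed {f : Y → Y | δ ≤ dist (f y) (f y')} :=
      isClosed_le continuous_const ((continuous_apply y).dist (continuous_apply y'))
    have hsub : E ⊆ {f | δ ≤ dist (f y) (f y')} :=
      closure_minimal (by rintro _ ⟨n, rfl⟩; exact hδd n) hclosed
    have h0 : δ ≤ dist (p y) (p y') := hsub hp
    rw [hpy, dist_self] at h0
    linarith
  -- a cluster point of the sequence of maps
  set a : ℕ → (Y → Y) := fun i => ⇑(vecPow T (fun k => ((m i k : ℤ)))) with hadef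
  obtain ⟨p, hp⟩ := exists_clusterPt_of_compactSpace (map a atTop)
  have hpcl : MapClusterPt p atTop a := hp
  have hpE : p ∈ E := by
    have h1 : map a atTop ≤ 𝓟 (Set.range a) := le_principal_iff.mpr (range_mem_map)
    have h2 : ClusterPt p (𝓟 (Set.range a)) := hp.mono h1
    have h3 : p ∈ closure (Set.range a) := mem_closure_iff_clusterPt.mpr h2
    refine closure_mono ?_ h3
    rintro _ ⟨i, rfl⟩; exact ⟨_, rfl⟩
  -- idempotent in the compact subsemigroup E ∘ p
  letI : Semigroup (Y → Y) := { mul := fun f g => f ∘ g, mul_assoc := fun _ _ _ => rfl }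
  have hmulleft : ∀ r : Y → Y, Continuous (· * r) :=
    fun r => continuous_pi fun y => continuous_apply (r y)
  set K : Set (Y → Y) := (fun q => q ∘ p) '' E with hKdef
  have hKcompact : IsCompact K :=
    (isClosed_closure.isCompact).image (hmulleft p)
  have hKne : K.Nonempty := ⟨p ∘ p, p, hpE, rfl⟩
  have hKmul : ∀ x ∈ K, ∀ y ∈ K, x * y ∈ K := by
    rintro _ ⟨q, hq, rfl⟩ _ ⟨q', hq', rfl⟩
    exact ⟨q ∘ (p ∘ q'), hEcomp q hq _ (hEcomp p hpE q' hq'), rfl⟩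
  obtain ⟨u, huK, huu⟩ :=
    exists_idempotent_in_compact_subsemigroup hmulleft K hKne hKcompact hKmul
  obtain ⟨q, hqE, rfl⟩ := huK
  have huE : (q ∘ p) ∈ E := hEcomp q hqE p hpE
  have hid : ∀ y, q (p y) = y := by
    intro y
    have h1 : (q ∘ p) ((q ∘ p) y) = (q ∘ p) y := congrFun huu y
    exact hinj _ huE h1
  have hsurj : p (q y₁) = y₁ := hinj q hqE (hid (q y₁))
  refine ⟨q y₁, ?_⟩
  have hcl : MapClusterPt (p (q y₁)) atTop ((fun f : Y → Y => f (q y₁)) ∘ a) :=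
    hpcl.continuousAt_comp (continuous_apply (q y₁)).continuousAt
  rw [hsurj] at hcl
  obtain ⟨ψ, hψ, hψt⟩ := TopologicalSpace.FirstCountableTopology.tendsto_subseq hcl
  exact ⟨ψ, hψ, hψt⟩
end
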